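/- arXiv:math/0610159 — 5 statements merged into one kernel-verified Lean document; each statement's English description precedes it below -/
import Mathlib

section
/- Every element of G = GL_n(F_q) has a unique expression as a product u_1 w h_b h_a u_2 where w ∈ W, u_1 ∈ U_{w^{-1}}^- = { u ∈ U : w u w^{-1} ∈ w_0 U w_0 } (w_0 the permutation matrix with 1's on the antidiagonal), h_b ∈ H_b, h_a ∈ H_a, and u_2 ∈ U. In particular, the subgroup WH_b of G is a complete set of representatives for the (B_a, B_a)-double cosets of G. -/
noncomputable section

open scoped Pointwise

/-- The general linear group `GL_n(K)`. -/
abbrev GLn (K : Type) [Field K] (n : ℕ) : Type := GL (Fin n) K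

/-- `g` is a permutation matrix. -/
def IsPermMat {K : Type} [Field K] {n : ℕ} (g : GLn K n) : Prop :=
  ∃ σ : Equiv.Perm (Fin n),
    ∀ i j : Fin n, (g : Matrix (Fin n) (Fin n) K) i j = if σ j = i then 1 else 0

/-- `W`, the group of permutation matrices in `GL_n(K)`. -/
def Wset (K : Type) [Field K] (n : ℕ) : Set (GLn K n) := {g | IsPermMat g}

/-- The set `S = {s_1, …, s_{n-1}}` of Coxeter generators of `W`: the matrices of the
adjacent transpositions `(i, i+1)`. -/
def Sset (K : Type) [Field K] (n : ℕ) : Set (GLn K n) :=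
  {g | ∃ i j : Fin n, (i : ℕ) + 1 = (j : ℕ) ∧
    ∀ k l : Fin n, (g : Matrix (Fin n) (Fin n) K) k l = if Equiv.swap i j l = k then 1 else 0}

/-- The set `𝒯 = { w s_i w⁻¹ : w ∈ W, s_i ∈ S }` of reflections of `W`. -/
def Tset (K : Type) [Field K] (n : ℕ) : Set (GLn K n) :=
  {t | ∃ w ∈ Wset K n, ∃ s ∈ Sset K n, t = w * s * w⁻¹}

/-- `H_b`: the group of diagonal matrices whose entries are `b`-th roots of unity
(i.e. entries in `F_b`). -/
def Hbset (K : Type) [Field K] (n b : ℕ) : Set (GLn K n) :=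
  {g | (∀ i j : Fin n, i ≠ j → (g : Matrix (Fin n) (Fin n) K) i j = 0) ∧
    ∀ i : Fin n, (g : Matrix (Fin n) (Fin n) K) i i ^ b = 1}

/-- The group `WH_b`: the set of products `w * d` with `w ∈ W` and `d ∈ H_b`. -/
def WHbset (K : Type) [Field K] (n b : ℕ) : Set (GLn K n) :=
  {x | ∃ w ∈ Wset K n, ∃ d ∈ Hbset K n b, x = w * d}

/-- The length function on monomial matrices: the number of inversions of the underlying
permutation.  For `x = w d ∈ WH_b` this is the Coxeter length `ℓ(w)`, i.e. `len` is the
length function of `W` lifted to `WH_b` via `ℓ(wd) = ℓ(dw) = ℓ(w)`. -/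
def len {K : Type} [Field K] {n : ℕ} (g : GLn K n) : ℕ :=
  Set.ncard {p : Fin n × Fin n | p.1 < p.2 ∧ ∃ i i' : Fin n, i' < i ∧
    (g : Matrix (Fin n) (Fin n) K) i p.1 ≠ 0 ∧ (g : Matrix (Fin n) (Fin n) K) i' p.2 ≠ 0}

/-- The diagonal matrix `h_{k,l}(α) = h_k(α) h_l((-1)^{b-1} α⁻¹)`. -/
def hmat (K : Type) [Field K] {n : ℕ} (b : ℕ) (k l : Fin n) (α : K) :
    Matrix (Fin n) (Fin n) K :=
  Matrix.diagonal fun p => if p = k then α else if p = l then (-1 : K) ^ (b - 1) * α⁻¹ else 1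

/-- For a reflection `t` interchanging the `k`-th and `l`-th standard basis vectors
(`t = w s_i w⁻¹`), the subset `X_t = { w h_{i,i+1}(α) w⁻¹ : α ∈ F_b } =
{ h_{k,l}(α) : α^b = 1 }` of `H_b`. -/
def Xset (K : Type) [Field K] (n b : ℕ) (t : GLn K n) : Set (GLn K n) :=
  {d | ∃ k l : Fin n, ∃ α : K, α ^ b = 1 ∧ k ≠ l ∧
    (∀ p q : Fin n, (t : Matrix (Fin n) (Fin n) K) p q = if Equiv.swap k l q = p then 1 else 0) ∧
    (d : Matrix (Fin n) (Fin n) K) = hmat K b k l α}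

/-- `X_s = { h_{k,l}(α) : α^b = 1 }` for the simple reflection `s` interchanging the
`k`-th and `l`-th standard basis vectors. -/
def XsPair (K : Type) [Field K] {n : ℕ} (b : ℕ) (k l : Fin n) : Set (GLn K n) :=
  {d | ∃ α : K, α ^ b = 1 ∧ (d : Matrix (Fin n) (Fin n) K) = hmat K b k l α}

/-- The product `X_1 ⋯ X_r` of a list of subsets of a monoid. -/
def SetProd {G : Type} [Monoid G] : List (Set G) → Set G
  | [] => {1}
  | X :: L => X * SetProd L

/-- `U`: the group of upper triangular unipotent matrices. -/
def Uset (K : Type) [Field K] (n : ℕ) : Set (GLn K n) :=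
  {g | (∀ i j : Fin n, j < i → (g : Matrix (Fin n) (Fin n) K) i j = 0) ∧
    ∀ i : Fin n, (g : Matrix (Fin n) (Fin n) K) i i = 1}

/-- `H_a`: the group of diagonal matrices with entries in `F_a` (the `a`-th roots of unity). -/
def Haset (K : Type) [Field K] (n a : ℕ) : Set (GLn K n) :=
  {g | (∀ i j : Fin n, i ≠ j → (g : Matrix (Fin n) (Fin n) K) i j = 0) ∧
    ∀ i : Fin n, (g : Matrix (Fin n) (Fin n) K) i i ^ a = 1}

/-- `B_a = H_a U`. -/
def Baset (K : Type) [Field K] (n a : ℕ) : Set (GLn K n) :=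
  {g | ∃ h ∈ Haset K n a, ∃ u ∈ Uset K n, g = h * u}

section BruhatAux

open Matrix

variable {F : Type} [Field F]

/-- upper triangular unipotent -/
def UU {n : ℕ} (A : Matrix (Fin n) (Fin n) F) : Prop :=
  (∀ i j : Fin n, j < i → A i j = 0) ∧ ∀ i, A i i = 1

/-- monomial matrix -/
def mono {n : ℕ} (σ : Equiv.Perm (Fin n)) (d : Fin n → F) : Matrix (Fin n) (Fin n) F :=
  Matrix.of fun i j => if σ j = i then d j else 0

lemma mono_apply {n : ℕ} (σ : Equiv.Perm (Fin n)) (d : Fin n → F) (i j : Fin n) :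
    mono σ d i j = if σ j = i then d j else 0 := rfl

lemma UU.one {n : ℕ} : UU (1 : Matrix (Fin n) (Fin n) F) :=
  ⟨fun _ _ h => one_apply_ne (ne_of_gt h), fun i => one_apply_eq i⟩

lemma UU.mul {n : ℕ} {A B : Matrix (Fin n) (Fin n) F} (hA : UU A) (hB : UU B) : UU (A * B) := by
  constructor
  · intro i j hij
    rw [Matrix.mul_apply]
    refine Finset.sum_eq_zero fun k _ => ?_
    rcases lt_or_ge k i with h | h
    · rw [hA.1 _ _ h, zero_mul]
    · rw [hB.1 _ _ (lt_of_lt_of_le hij h), mul_zero]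
  · intro i
    rw [Matrix.mul_apply]
    rw [Finset.sum_eq_single i (fun k _ hk => ?_) (by simp)]
    · rw [hA.2, hB.2, one_mul]
    · rcases lt_or_gt_of_ne hk with h | h
      · rw [hA.1 _ _ h, zero_mul]
      · rw [hB.1 _ _ h, mul_zero]

lemma UU.det {n : ℕ} {A : Matrix (Fin n) (Fin n) F} (hA : UU A) : A.det = 1 := by
  rw [Matrix.det_of_upperTriangular (fun i j h => hA.1 i j h)]
  simp [hA.2]

lemma UU.isUnitDet {n : ℕ} {A : Matrix (Fin n) (Fin n) F} (hA : UU A) : IsUnit A.det := by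
  rw [hA.det]; exact isUnit_one

lemma UU.inv_entries {n : ℕ} {A B : Matrix (Fin n) (Fin n) F} (hA : UU A) (hAB : A * B = 1) :
    ∀ i j : Fin n, j ≤ i → B i j = if i = j then 1 else 0 := by
  suffices H : ∀ m : ℕ, ∀ i : Fin n, (n : ℕ) - (i : ℕ) ≤ m → ∀ j, j ≤ i →
      B i j = if i = j then 1 else 0 by
    intro i j hj; exact H n i (by omega) j hj
  intro m
  induction m with
  | zero => intro i hi; exact absurd hi (by have := i.isLt; omega)
  | succ m ih =>
    intro i hi j hj
    have key := congrFun (congrFun hAB i) j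
    rw [Matrix.mul_apply] at key
    rw [Finset.sum_eq_single i (fun k _ hk => ?_) (by simp)] at key
    · rw [hA.2, one_mul] at key
      rw [key, Matrix.one_apply]
    · rcases lt_or_gt_of_ne hk with h | h
      · rw [hA.1 _ _ h, zero_mul]
      · have hk' : (i:ℕ) < (k:ℕ) := h
        rw [ih k (by omega) j (le_of_lt (lt_of_le_of_lt hj h))]
        rw [if_neg (by intro hkj; subst hkj; exact absurd hj (not_le_of_gt h)), mul_zero]

lemma UU.inv {n : ℕ} {A : Matrix (Fin n) (Fin n) F} (hA : UU A) : UU A⁻¹ := by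
  have h := Matrix.mul_nonsing_inv A hA.isUnitDet
  constructor
  · intro i j hij
    rw [hA.inv_entries h i j (le_of_lt hij), if_neg (ne_of_gt hij)]
  · intro i
    rw [hA.inv_entries h i i le_rfl, if_pos rfl]

lemma mono_mul {n : ℕ} (σ τ : Equiv.Perm (Fin n)) (d e : Fin n → F) :
    mono σ d * mono τ e = mono (τ.trans σ) fun j => d (τ j) * e j := by
  ext i j
  rw [Matrix.mul_apply, mono_apply]
  rw [Finset.sum_eq_single (τ j) (fun k _ hk => ?_) (by simp)]
  · simp [mono_apply]; rfl
  · rw [mono_apply τ e, if_neg (fun h => hk h.symm), mul_zero]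

lemma mono_one {n : ℕ} : mono (1 : Equiv.Perm (Fin n)) (fun _ => (1:F)) = 1 := by
  ext i j
  simp [mono_apply, Matrix.one_apply, eq_comm]

lemma mono_mul_inv {n : ℕ} (σ : Equiv.Perm (Fin n)) (d : Fin n → F) (hd : ∀ j, d j ≠ 0) :
    mono σ d * mono σ⁻¹ (fun j => (d (σ⁻¹ j))⁻¹) = 1 := by
  rw [mono_mul]
  rw [show σ⁻¹.trans σ = 1 from Equiv.ext fun x => σ.apply_symm_apply x]
  rw [show (fun j => d (σ⁻¹ j) * (d (σ⁻¹ j))⁻¹) = fun _ => (1:F) from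
    funext fun j => mul_inv_cancel₀ (hd _)]
  exact mono_one

lemma mono_isUnitDet {n : ℕ} (σ : Equiv.Perm (Fin n)) (d : Fin n → F) (hd : ∀ j, d j ≠ 0) :
    IsUnit (mono σ d).det := by
  have h := mono_mul_inv σ d hd
  have : (mono σ d).det * (mono σ⁻¹ (fun j => (d (σ⁻¹ j))⁻¹)).det = 1 := by
    rw [← Matrix.det_mul, h, Matrix.det_one]
  exact IsUnit.of_mul_eq_one _ this

lemma mono_mul_left {n : ℕ} (σ : Equiv.Perm (Fin n)) (A : Matrix (Fin n) (Fin n) F)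
    (i j : Fin n) : (mono σ (fun _ => (1:F)) * A) i j = A (σ⁻¹ i) j := by
  rw [Matrix.mul_apply]
  rw [Finset.sum_eq_single (σ⁻¹ i) (fun k _ hk => ?_) (by simp)]
  · simp [mono_apply]
  · rw [mono_apply, if_neg (fun h => hk (by rw [← h]; exact (Equiv.symm_apply_apply σ k).symm)), zero_mul]

lemma mono_mul_right {n : ℕ} (σ : Equiv.Perm (Fin n)) (A : Matrix (Fin n) (Fin n) F)
    (i j : Fin n) : (A * mono σ (fun _ => (1:F))) i j = A i (σ j) := by
  rw [Matrix.mul_apply]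
  rw [Finset.sum_eq_single (σ j) (fun k _ hk => ?_) (by simp)]
  · simp [mono_apply]
  · rw [mono_apply, if_neg (fun h => hk h.symm), mul_zero]


/-- glue an n×n matrix with a corner entry into an (n+1)×(n+1) matrix -/
def glue {n : ℕ} (i₀ j₀ : Fin (n+1)) (x : F) (A : Matrix (Fin n) (Fin n) F) :
    Matrix (Fin (n+1)) (Fin (n+1)) F :=
  Matrix.of fun i j =>
    (finSuccEquiv' i₀ i).elim ((finSuccEquiv' j₀ j).elim x fun _ => 0)
      fun p => (finSuccEquiv' j₀ j).elim 0 fun q => A p q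

lemma glue_corner {n : ℕ} (i₀ j₀ : Fin (n+1)) (x : F) (A : Matrix (Fin n) (Fin n) F) :
    glue i₀ j₀ x A i₀ j₀ = x := by simp [glue, finSuccEquiv'_at]

lemma glue_row {n : ℕ} (i₀ j₀ : Fin (n+1)) (x : F) (A : Matrix (Fin n) (Fin n) F) (q : Fin n) :
    glue i₀ j₀ x A i₀ (j₀.succAbove q) = 0 := by
  simp [glue, finSuccEquiv'_at, finSuccEquiv'_succAbove]

lemma glue_col {n : ℕ} (i₀ j₀ : Fin (n+1)) (x : F) (A : Matrix (Fin n) (Fin n) F) (p : Fin n) :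
    glue i₀ j₀ x A (i₀.succAbove p) j₀ = 0 := by
  simp [glue, finSuccEquiv'_at, finSuccEquiv'_succAbove]

lemma glue_inner {n : ℕ} (i₀ j₀ : Fin (n+1)) (x : F) (A : Matrix (Fin n) (Fin n) F)
    (p q : Fin n) : glue i₀ j₀ x A (i₀.succAbove p) (j₀.succAbove q) = A p q := by
  simp [glue, finSuccEquiv'_succAbove]

lemma glue_mul {n : ℕ} (i₀ j₀ k₀ : Fin (n+1)) (x y : F) (A B : Matrix (Fin n) (Fin n) F) :
    glue i₀ j₀ x A * glue j₀ k₀ y B = glue i₀ k₀ (x*y) (A*B) := by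
  ext i k
  rw [Matrix.mul_apply, Fin.sum_univ_succAbove _ j₀]
  rcases eq_or_ne i i₀ with hii | hi
  · subst hii
    rcases eq_or_ne k k₀ with hkk | hk
    · subst hkk
      simp [glue_corner, glue_row, glue_col]
    · obtain ⟨q, rfl⟩ := Fin.exists_succAbove_eq hk
      simp [glue_corner, glue_row, glue_col]
  · obtain ⟨p, rfl⟩ := Fin.exists_succAbove_eq hi
    rcases eq_or_ne k k₀ with hkk | hk
    · subst hkk
      simp [glue_corner, glue_col, glue_inner]
    · obtain ⟨q, rfl⟩ := Fin.exists_succAbove_eq hk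
      simp [glue_col, glue_row, glue_inner, Matrix.mul_apply]

/-- the extended permutation -/
def glueperm {n : ℕ} (i₀ : Fin (n+1)) (σ : Equiv.Perm (Fin n)) : Equiv.Perm (Fin (n+1)) :=
  (finSuccEquiv' 0).trans ((Equiv.optionCongr σ).trans (finSuccEquiv' i₀).symm)

lemma glueperm_zero {n : ℕ} (i₀ : Fin (n+1)) (σ : Equiv.Perm (Fin n)) :
    glueperm i₀ σ 0 = i₀ := by
  simp [glueperm, finSuccEquiv'_at, finSuccEquiv'_symm_none]

lemma glueperm_succAbove {n : ℕ} (i₀ : Fin (n+1)) (σ : Equiv.Perm (Fin n)) (q : Fin n) :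
    glueperm i₀ σ ((0 : Fin (n+1)).succAbove q) = i₀.succAbove (σ q) := by
  simp only [glueperm, Equiv.trans_apply, finSuccEquiv'_succAbove, Equiv.optionCongr_apply,
    Option.map_some, finSuccEquiv'_symm_some]

lemma glue_mono {n : ℕ} (i₀ : Fin (n+1)) (piv : F) (σ : Equiv.Perm (Fin n)) (d : Fin n → F) :
    glue i₀ 0 piv (mono σ d) =
      mono (glueperm i₀ σ) fun j => (finSuccEquiv' (0 : Fin (n+1)) j).elim piv d := by
  ext i j
  rcases eq_or_ne i i₀ with hii | hi
  · subst hii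
    rcases eq_or_ne j (0 : Fin (n+1)) with hjj | hj
    · subst hjj
      rw [glue_corner, mono_apply, if_pos (glueperm_zero i σ)]
      simp [finSuccEquiv'_at]
    · obtain ⟨q, rfl⟩ := Fin.exists_succAbove_eq hj
      rw [glue_row, mono_apply, if_neg]
      rw [glueperm_succAbove]
      exact Fin.succAbove_ne i (σ q)
  · obtain ⟨p, rfl⟩ := Fin.exists_succAbove_eq hi
    rcases eq_or_ne j (0 : Fin (n+1)) with hjj | hj
    · subst hjj
      rw [glue_col, mono_apply, if_neg]
      rw [glueperm_zero]
      exact (Fin.succAbove_ne i₀ p).symm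
    · obtain ⟨q, rfl⟩ := Fin.exists_succAbove_eq hj
      rw [glue_inner, mono_apply, mono_apply, glueperm_succAbove]
      rw [finSuccEquiv'_succAbove]
      by_cases h : σ q = p
      · rw [if_pos h, if_pos (by rw [h])]
        rfl
      · rw [if_neg h, if_neg (fun he => h (Fin.succAbove_right_injective he))]


/-- constraint on u₁: σ-conjugate is lower triangular -/
def Cs {n : ℕ} (σ : Equiv.Perm (Fin n)) (A : Matrix (Fin n) (Fin n) F) : Prop :=
  ∀ k l : Fin n, k < l → A (σ k) (σ l) = 0

lemma Cs.mul {n : ℕ} {σ : Equiv.Perm (Fin n)} {A B : Matrix (Fin n) (Fin n) F}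
    (hA : Cs σ A) (hB : Cs σ B) : Cs σ (A * B) := by
  intro k l hkl
  rw [Matrix.mul_apply, ← Equiv.sum_comp σ (fun m => A (σ k) m * B m (σ l))]
  refine Finset.sum_eq_zero fun m _ => ?_
  rcases lt_or_ge k m with h | h
  · rw [hA k m h, zero_mul]
  · rw [hB m l (lt_of_le_of_lt h hkl), mul_zero]

lemma glue_UU {n : ℕ} {i₀ : Fin (n+1)} {A : Matrix (Fin n) (Fin n) F} (hA : UU A) :
    UU (glue i₀ i₀ (1:F) A) := by
  constructor
  · intro i j hji
    rcases eq_or_ne i i₀ with hii | hi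
    · subst hii
      rcases eq_or_ne j i with hjj | hj
      · exact absurd hjj (ne_of_lt hji)
      · obtain ⟨q, rfl⟩ := Fin.exists_succAbove_eq hj
        exact glue_row _ _ _ _ _
    · obtain ⟨p, rfl⟩ := Fin.exists_succAbove_eq hi
      rcases eq_or_ne j i₀ with hjj | hj
      · subst hjj
        exact glue_col _ _ _ _ _
      · obtain ⟨q, rfl⟩ := Fin.exists_succAbove_eq hj
        rw [glue_inner]
        exact hA.1 p q (Fin.succAbove_lt_succAbove_iff.mp hji)
  · intro i
    rcases eq_or_ne i i₀ with hii | hi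
    · subst hii
      exact glue_corner _ _ _ _
    · obtain ⟨p, rfl⟩ := Fin.exists_succAbove_eq hi
      rw [glue_inner]
      exact hA.2 p

theorem exists_bruhat : ∀ (n : ℕ) (M : Matrix (Fin n) (Fin n) F), IsUnit M.det →
    ∃ (σ : Equiv.Perm (Fin n)) (d : Fin n → F) (u₁ u₂ : Matrix (Fin n) (Fin n) F),
      UU u₁ ∧ UU u₂ ∧ Cs σ u₁ ∧ (∀ j, d j ≠ 0) ∧ M = u₁ * mono σ d * u₂ := by
  intro n
  induction n with
  | zero =>
    intro M _
    exact ⟨Equiv.refl _, Fin.elim0, 1, 1, UU.one, UU.one, fun k => k.elim0,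
      fun j => j.elim0, by ext i; exact i.elim0⟩
  | succ n ih =>
    intro M hM
    classical
    -- the pivot
    have hcol : ¬ ∀ i, M i 0 = 0 := by
      intro h
      rw [Matrix.det_eq_zero_of_column_eq_zero 0 h] at hM
      exact hM.ne_zero rfl
    obtain ⟨i₀, hpiv, hmax⟩ : ∃ i₀, M i₀ 0 ≠ 0 ∧ ∀ i, i₀ < i → M i 0 = 0 := by
      obtain ⟨iw, hiw⟩ := not_forall.mp hcol
      set s := Finset.univ.filter (fun i : Fin (n+1) => M i 0 ≠ 0) with hsdef
      have hsne : s.Nonempty := ⟨iw, by simp [hsdef, hiw]⟩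
      refine ⟨s.max' hsne, ?_, ?_⟩
      · have h := s.max'_mem hsne
        simp only [hsdef, Finset.mem_filter] at h
        exact h.2
      · intro i hi
        by_contra hne
        exact absurd (s.le_max' i (by simp [hsdef, hne])) (not_le_of_gt hi)
    set piv := M i₀ 0 with hpivdef
    -- the clearing matrices
    set C : Matrix (Fin (n+1)) (Fin (n+1)) F :=
      Matrix.of (fun i k => if k = i₀ ∧ i < i₀ then -(M i 0 * piv⁻¹) else 0) with hC
    set R : Matrix (Fin (n+1)) (Fin (n+1)) F :=
      Matrix.of (fun k j => if k = (0 : Fin (n+1)) ∧ j ≠ 0 then -(piv⁻¹ * M i₀ j) else 0) with hR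
    have hCapp : ∀ i k, C i k = if k = i₀ ∧ i < i₀ then -(M i 0 * piv⁻¹) else 0 :=
      fun i k => rfl
    have hRapp : ∀ k j, R k j = if k = (0 : Fin (n+1)) ∧ j ≠ 0 then -(piv⁻¹ * M i₀ j) else 0 :=
      fun k j => rfl
    have hCC : C * C = 0 := by
      ext i j
      rw [Matrix.mul_apply]
      rw [Finset.sum_eq_zero fun k _ => ?_]
      · rfl
      · rcases eq_or_ne k i₀ with hk | hk
        · subst hk
          rw [hCapp k j, if_neg (fun h => absurd h.2 (lt_irrefl k)), mul_zero]
        · rw [hCapp i k, if_neg (fun h => hk h.1), zero_mul]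
    have hRR : R * R = 0 := by
      ext i j
      rw [Matrix.mul_apply]
      rw [Finset.sum_eq_zero fun k _ => ?_]
      · rfl
      · rcases eq_or_ne k (0 : Fin (n+1)) with hk | hk
        · subst hk
          rw [hRapp i 0, if_neg (fun h => h.2 rfl), zero_mul]
        · rw [hRapp k j, if_neg (fun h => hk h.1), mul_zero]
    have hCu : (1 - C) * (1 + C) = 1 := by
      rw [sub_mul, one_mul, mul_add, mul_one, hCC]
      abel
    have hCu' : (1 + C) * (1 - C) = 1 := by
      rw [add_mul, one_mul, mul_sub, mul_one, hCC]
      abel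
    have hRu : (1 + R) * (1 - R) = 1 := by
      rw [add_mul, one_mul, mul_sub, mul_one, hRR]
      abel
    have hRu' : (1 - R) * (1 + R) = 1 := by
      rw [sub_mul, one_mul, mul_add, mul_one, hRR]
      abel
    have hUC : ∀ ε : F, UU (1 + ε • C) := by
      intro ε
      constructor
      · intro i j hji
        rw [Matrix.add_apply, Matrix.smul_apply, hCapp i j,
          Matrix.one_apply_ne (ne_of_gt hji), if_neg, smul_zero, add_zero]
        rintro ⟨h1, h2⟩
        rw [h1] at hji
        exact absurd (hji.trans h2) (lt_irrefl _)
      · intro i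
        rw [Matrix.add_apply, Matrix.smul_apply, hCapp i i, Matrix.one_apply_eq,
          if_neg, smul_zero, add_zero]
        rintro ⟨h1, h2⟩
        rw [h1] at h2
        exact absurd h2 (lt_irrefl _)
    have hUR : ∀ ε : F, UU (1 + ε • R) := by
      intro ε
      constructor
      · intro i j hji
        rw [Matrix.add_apply, Matrix.smul_apply, hRapp i j,
          Matrix.one_apply_ne (ne_of_gt hji), if_neg, smul_zero, add_zero]
        rintro ⟨h1, h2⟩
        rw [h1] at hji
        exact absurd hji (Fin.not_lt_zero j)
      · intro i
        rw [Matrix.add_apply, Matrix.smul_apply, hRapp i i, Matrix.one_apply_eq,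
          if_neg, smul_zero, add_zero]
        rintro ⟨h1, h2⟩
        exact h2 h1
    -- row clearing
    have hCM : ∀ i j, (C * M) i j = if i < i₀ then -(M i 0 * piv⁻¹) * M i₀ j else 0 := by
      intro i j
      rw [Matrix.mul_apply, Finset.sum_eq_single i₀
        (fun k _ hk => by rw [hCapp i k, if_neg (fun h => hk h.1), zero_mul]) (by simp)]
      rw [hCapp i i₀]
      by_cases h : i < i₀
      · rw [if_pos ⟨rfl, h⟩, if_pos h]
      · rw [if_neg (fun hh => h hh.2), if_neg h, zero_mul]
    set N1 := (1 + C) * M with hN1def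
    have hN1 : ∀ i j, N1 i j = M i j + (if i < i₀ then -(M i 0 * piv⁻¹) * M i₀ j else 0) := by
      intro i j
      rw [hN1def, add_mul, one_mul, Matrix.add_apply, hCM]
    have hN1col : ∀ i, N1 i 0 = if i = i₀ then piv else 0 := by
      intro i
      rw [hN1 i 0]
      rcases lt_trichotomy i i₀ with h | h | h
      · rw [if_pos h, if_neg (ne_of_lt h), ← hpivdef, neg_mul, mul_assoc,
          inv_mul_cancel₀ hpiv, mul_one]
        abel
      · rw [if_neg (by rw [h]; exact lt_irrefl i₀), add_zero, if_pos h, h, hpivdef]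
      · rw [if_neg (lt_asymm h), add_zero, hmax i h, if_neg (ne_of_gt h)]
    have hN1row : ∀ j, N1 i₀ j = M i₀ j := fun j => by
      rw [hN1, if_neg (lt_irrefl i₀), add_zero]
    -- column clearing
    set N := N1 * (1 + R) with hNdef
    have hN1R : ∀ i j, (N1 * R) i j = if j ≠ 0 then N1 i 0 * -(piv⁻¹ * M i₀ j) else 0 := by
      intro i j
      rw [Matrix.mul_apply, Finset.sum_eq_single (0 : Fin (n+1))
        (fun k _ hk => by rw [hRapp k j, if_neg (fun h => hk h.1), mul_zero]) (by simp)]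
      rw [hRapp 0 j]
      by_cases h : j = 0
      · rw [if_neg (fun hh => hh.2 h), mul_zero, if_neg (fun hh : j ≠ 0 => hh h)]
      · rw [if_pos ⟨rfl, h⟩, if_pos h]
    have hNapp : ∀ i j, N i j = N1 i j + (if j ≠ 0 then N1 i 0 * -(piv⁻¹ * M i₀ j) else 0) := by
      intro i j
      rw [hNdef, mul_add, mul_one, Matrix.add_apply, hN1R]
    have hNcol : ∀ i, N i 0 = if i = i₀ then piv else 0 := by
      intro i
      rw [hNapp, if_neg (fun h => h rfl), add_zero, hN1col]
    have hNrow0 : ∀ j, j ≠ 0 → N i₀ j = 0 := by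
      intro j hj
      rw [hNapp, hN1row, if_pos hj, hN1col, if_pos rfl, mul_neg, ← mul_assoc,
        mul_inv_cancel₀ hpiv, one_mul]
      abel
    -- determinants
    have hdet1C : ((1 : Matrix (Fin (n+1)) (Fin (n+1)) F) + C).det = 1 := by
      have := (hUC 1).det
      rwa [one_smul] at this
    have hdet1R : ((1 : Matrix (Fin (n+1)) (Fin (n+1)) F) + R).det = 1 := by
      have := (hUR 1).det
      rwa [one_smul] at this
    have hNdet : IsUnit N.det := by
      rw [hNdef, hN1def, Matrix.det_mul, Matrix.det_mul, hdet1C, hdet1R, one_mul, mul_one]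
      exact hM
    set B := N.submatrix i₀.succAbove Fin.succ with hBdef
    have hdetN_eq : N.det = (-1)^(i₀:ℕ) * piv * B.det := by
      rw [Matrix.det_succ_column_zero, Finset.sum_eq_single i₀
        (fun k _ hk => by rw [hNcol k, if_neg hk, mul_zero, zero_mul]) (by simp)]
      rw [hNcol i₀, if_pos rfl]
    have hdetB : IsUnit B.det := by
      rw [isUnit_iff_ne_zero]
      intro h0
      exact hNdet.ne_zero (by rw [hdetN_eq, h0, mul_zero])
    obtain ⟨σ', d', u₁', u₂', hu1', hu2', hc', hd', hBfac⟩ := ih B hdetB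
    -- glue the decomposition
    have hglueN : N = glue i₀ 0 piv B := by
      ext i j
      rcases eq_or_ne j (0 : Fin (n+1)) with hjj | hj
      · rw [hjj, hNcol i]
        rcases eq_or_ne i i₀ with hii | hi
        · rw [if_pos hii, hii, glue_corner]
        · rw [if_neg hi]
          obtain ⟨p, rfl⟩ := Fin.exists_succAbove_eq hi
          rw [glue_col]
      · obtain ⟨q, rfl⟩ := Fin.exists_succAbove_eq hj
        rcases eq_or_ne i i₀ with hii | hi
        · rw [hii, glue_row, hNrow0 _ hj]
        · obtain ⟨p, rfl⟩ := Fin.exists_succAbove_eq hi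
          rw [glue_inner, hBdef, Matrix.submatrix_apply, Fin.zero_succAbove]
    have hNfac : N = glue i₀ i₀ 1 u₁' *
        mono (glueperm i₀ σ') (fun j => (finSuccEquiv' (0 : Fin (n+1)) j).elim piv d') *
        glue 0 0 1 u₂' := by
      rw [hglueN, hBfac, ← glue_mono, glue_mul, glue_mul, one_mul, mul_one]
    have hMN : M = (1 - C) * N * (1 - R) := by
      rw [hNdef, hN1def]
      calc M = ((1 - C) * (1 + C)) * M * ((1 + R) * (1 - R)) := by
              rw [hCu, hRu, one_mul, mul_one]
        _ = (1 - C) * ((1 + C) * M * (1 + R)) * (1 - R) := by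
              simp only [mul_assoc]
    have hU1C : UU ((1 : Matrix (Fin (n+1)) (Fin (n+1)) F) - C) := by
      have := hUC (-1)
      rwa [neg_one_smul, ← sub_eq_add_neg] at this
    have hU1R : UU ((1 : Matrix (Fin (n+1)) (Fin (n+1)) F) - R) := by
      have := hUR (-1)
      rwa [neg_one_smul, ← sub_eq_add_neg] at this
    refine ⟨glueperm i₀ σ', fun j => (finSuccEquiv' (0 : Fin (n+1)) j).elim piv d',
      (1 - C) * glue i₀ i₀ 1 u₁', glue 0 0 1 u₂' * (1 - R),
      hU1C.mul (glue_UU hu1'), (glue_UU hu2').mul hU1R, ?_, ?_, ?_⟩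
    · -- the constraint
      refine Cs.mul (fun k l hkl => ?_) (fun k l hkl => ?_)
      · have hne : glueperm i₀ σ' k ≠ glueperm i₀ σ' l :=
          (glueperm i₀ σ').injective.ne (ne_of_lt hkl)
        rw [Matrix.sub_apply, Matrix.one_apply_ne hne, hCapp, if_neg, sub_zero]
        rintro ⟨h1, h2⟩
        have hl : l = 0 := (glueperm i₀ σ').injective (by rw [h1, glueperm_zero])
        rw [hl] at hkl
        exact (Fin.not_lt_zero k) hkl
      · rcases eq_or_ne k (0 : Fin (n+1)) with hk | hk
        · have hl : l ≠ 0 := by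
            rw [hk] at hkl
            exact (ne_of_gt hkl)
          obtain ⟨q, rfl⟩ := Fin.exists_succAbove_eq hl
          rw [hk, glueperm_zero, glueperm_succAbove]
          exact glue_row _ _ _ _ _
        · obtain ⟨p, rfl⟩ := Fin.exists_succAbove_eq hk
          have hl : l ≠ 0 := by
            intro h
            rw [h] at hkl
            exact (Fin.not_lt_zero _) hkl
          obtain ⟨q, rfl⟩ := Fin.exists_succAbove_eq hl
          rw [glueperm_succAbove, glueperm_succAbove, glue_inner]
          exact hc' p q (Fin.succAbove_lt_succAbove_iff.mp hkl)
    · -- d nonzero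
      intro j
      rcases eq_or_ne j (0 : Fin (n+1)) with hj | hj
      · rw [hj]
        simpa [finSuccEquiv'_at] using hpiv
      · obtain ⟨q, rfl⟩ := Fin.exists_succAbove_eq hj
        simpa [finSuccEquiv'_succAbove, finSuccEquiv'_zero, finSuccEquiv_succ] using hd' q
    · -- the factorization
      rw [hMN, hNfac]
      simp only [mul_assoc]



lemma mul_mono_apply {n : ℕ} (X : Matrix (Fin n) (Fin n) F) (σ : Equiv.Perm (Fin n))
    (d : Fin n → F) (i j : Fin n) : (X * mono σ d) i j = X i (σ j) * d j := by
  rw [Matrix.mul_apply, Finset.sum_eq_single (σ j)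
    (fun k _ hk => by rw [mono_apply, if_neg (fun h => hk h.symm), mul_zero]) (by simp)]
  rw [mono_apply, if_pos rfl]

lemma mono_mul_apply {n : ℕ} (X : Matrix (Fin n) (Fin n) F) (σ : Equiv.Perm (Fin n))
    (d : Fin n → F) (i j : Fin n) :
    (mono σ d * X) i j = d (σ.symm i) * X (σ.symm i) j := by
  rw [Matrix.mul_apply, Finset.sum_eq_single (σ.symm i)
    (fun k _ hk => by
      rw [mono_apply, if_neg (fun h => hk (by rw [← h, Equiv.symm_apply_apply])), zero_mul])
    (by simp)]
  rw [mono_apply, if_pos (Equiv.apply_symm_apply σ i)]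

/-- uniqueness of the monomial part -/
theorem mono_unique {n : ℕ} {v₁ w₂ : Matrix (Fin n) (Fin n) F} {σ σ' : Equiv.Perm (Fin n)}
    {d d' : Fin n → F} (hv : UU v₁) (hw : UU w₂) (hd : ∀ j, d j ≠ 0)
    (hN : v₁ * mono σ d = mono σ' d' * w₂) : σ = σ' ∧ d = d' := by
  have hle : ∀ j, σ'.symm (σ j) ≤ j := by
    intro j
    by_contra hlt
    push_neg at hlt
    have h1 : (v₁ * mono σ d) (σ j) j = d j := by
      rw [mul_mono_apply, hv.2, one_mul]
    rw [hN, mono_mul_apply, hw.1 _ _ hlt, mul_zero] at h1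
    exact hd j h1.symm
  have hperm : ∀ j, σ'.symm (σ j) = j := by
    have hsum : ∑ j : Fin n, ((σ'.symm (σ j) : ℕ)) = ∑ j : Fin n, (j : ℕ) :=
      Equiv.sum_comp (σ.trans σ'.symm) (fun j : Fin n => (j : ℕ))
    intro j
    have := (Finset.sum_eq_sum_iff_of_le
      (fun (j : Fin n) _ => show ((σ'.symm (σ j) : ℕ)) ≤ (j : ℕ) from hle j)).mp hsum j
      (Finset.mem_univ j)
    exact Fin.ext this
  have hσ : σ = σ' := Equiv.ext fun j => by
    have h := hperm j
    calc σ j = σ' (σ'.symm (σ j)) := (Equiv.apply_symm_apply σ' (σ j)).symm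
      _ = σ' j := by rw [h]
  refine ⟨hσ, funext fun j => ?_⟩
  have h1 : (v₁ * mono σ d) (σ j) j = d j := by
    rw [mul_mono_apply, hv.2, one_mul]
  rw [hN, mono_mul_apply] at h1
  rw [hperm j, hw.2, mul_one] at h1
  exact h1.symm

lemma Cs.inv {n : ℕ} {σ : Equiv.Perm (Fin n)} {A : Matrix (Fin n) (Fin n) F}
    (hC : Cs σ A) (hA : UU A) : Cs σ A⁻¹ := by
  have hinv' : A⁻¹ * A = 1 := Matrix.nonsing_inv_mul A hA.isUnitDet
  have hsub : (A.submatrix σ σ)ᵀ * (A⁻¹.submatrix σ σ)ᵀ = 1 := by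
    rw [← Matrix.transpose_mul, Matrix.submatrix_mul_equiv, hinv',
      Matrix.submatrix_one_equiv, Matrix.transpose_one]
  have hT : UU ((A.submatrix σ σ)ᵀ) := by
    constructor
    · intro i j hji
      exact hC j i hji
    · intro i
      exact hA.2 (σ i)
  intro k l hkl
  have h := UU.inv_entries hT hsub l k (le_of_lt hkl)
  rw [Matrix.transpose_apply, Matrix.submatrix_apply, if_neg (ne_of_gt hkl)] at h
  exact h

/-- uniqueness of the unipotent parts -/
theorem unipotent_unique {n : ℕ} {σ : Equiv.Perm (Fin n)} {d : Fin n → F}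
    {u₁ u₂ u₁' u₂' : Matrix (Fin n) (Fin n) F}
    (hu1 : UU u₁) (hu2 : UU u₂) (hu1' : UU u₁') (hu2' : UU u₂')
    (hc : Cs σ u₁) (hc' : Cs σ u₁') (hd : ∀ j, d j ≠ 0)
    (h : u₁ * mono σ d * u₂ = u₁' * mono σ d * u₂') : u₁ = u₁' ∧ u₂ = u₂' := by
  have hv : (u₁'⁻¹ * u₁) * mono σ d = mono σ d * (u₂' * u₂⁻¹) := by
    have h2 : u₁'⁻¹ * (u₁ * mono σ d * u₂) * u₂⁻¹ =
        u₁'⁻¹ * (u₁' * mono σ d * u₂') * u₂⁻¹ := by rw [h]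
    calc (u₁'⁻¹ * u₁) * mono σ d
        = u₁'⁻¹ * u₁ * mono σ d * (u₂ * u₂⁻¹) := by
          rw [Matrix.mul_nonsing_inv _ hu2.isUnitDet, mul_one]
      _ = u₁'⁻¹ * (u₁ * mono σ d * u₂) * u₂⁻¹ := by simp only [mul_assoc]
      _ = u₁'⁻¹ * (u₁' * mono σ d * u₂') * u₂⁻¹ := h2
      _ = (u₁'⁻¹ * u₁') * (mono σ d * (u₂' * u₂⁻¹)) := by simp only [mul_assoc]
      _ = mono σ d * (u₂' * u₂⁻¹) := by
          rw [Matrix.nonsing_inv_mul _ hu1'.isUnitDet, one_mul]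
  have hv1 : UU (u₁'⁻¹ * u₁) := hu1'.inv.mul hu1
  have hv2 : UU (u₂' * u₂⁻¹) := hu2'.mul hu2.inv
  have hcv : Cs σ (u₁'⁻¹ * u₁) := (hc'.inv hu1').mul hc
  have hv2one : u₂' * u₂⁻¹ = 1 := by
    ext k l
    rcases lt_trichotomy k l with hkl | hkl | hkl
    · have he := congrFun (congrFun hv (σ k)) l
      rw [mul_mono_apply, mono_mul_apply, Equiv.symm_apply_apply, hcv k l hkl, zero_mul] at he
      rw [Matrix.one_apply_ne (ne_of_lt hkl)]
      rcases mul_eq_zero.mp he.symm with h0 | h0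
      · exact absurd h0 (hd k)
      · exact h0
    · rw [hkl, Matrix.one_apply_eq, hv2.2]
    · rw [Matrix.one_apply_ne (ne_of_gt hkl), hv2.1 k l hkl]
  have hv1one : u₁'⁻¹ * u₁ = 1 := by
    have h3 : (u₁'⁻¹ * u₁) * mono σ d = mono σ d := by rw [hv, hv2one, mul_one]
    have h4 := congrArg (fun X => X * mono σ⁻¹ (fun j => (d (σ⁻¹ j))⁻¹)) h3
    simpa only [mul_assoc, mono_mul_inv σ d hd, mul_one] using h4
  constructor
  · calc u₁ = (u₁' * u₁'⁻¹) * u₁ := by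
          rw [Matrix.mul_nonsing_inv _ hu1'.isUnitDet, one_mul]
      _ = u₁' * (u₁'⁻¹ * u₁) := by rw [mul_assoc]
      _ = u₁' := by rw [hv1one, mul_one]
  · calc u₂ = (u₂' * u₂⁻¹) * u₂ := by rw [hv2one, one_mul]
      _ = u₂' * (u₂⁻¹ * u₂) := by rw [mul_assoc]
      _ = u₂' := by rw [Matrix.nonsing_inv_mul _ hu2.isUnitDet, mul_one]


/-- existence of the splitting of a root of unity -/
lemma split_exists [Fintype F] {a b : ℕ} (hab : a * b = Fintype.card F - 1)
    (hcop : Nat.Coprime a b) {x : F} (hx : x ≠ 0) :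
    ∃ β α : F, β ^ b = 1 ∧ α ^ a = 1 ∧ x = β * α := by
  obtain ⟨u, v, huv⟩ : ∃ u v : ℤ, u * (a : ℤ) + v * (b : ℤ) = 1 := by
    have : IsCoprime (a : ℤ) (b : ℤ) := by
      rw [Int.isCoprime_iff_gcd_eq_one, Int.gcd_natCast_natCast]
      exact hcop
    obtain ⟨u, v, huv⟩ := this
    exact ⟨u, v, huv⟩
  have hx1 : x ^ ((a : ℤ) * b) = 1 := by
    have h1 : x ^ (a * b) = 1 := by
      rw [hab]
      exact FiniteField.pow_card_sub_one_eq_one x hx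
    have h2 : x ^ (((a * b : ℕ)) : ℤ) = 1 := by rw [zpow_natCast]; exact h1
    rwa [Nat.cast_mul] at h2
  refine ⟨x ^ (u * (a:ℤ)), x ^ (v * (b:ℤ)), ?_, ?_, ?_⟩
  · calc (x ^ (u * (a:ℤ))) ^ b = x ^ (u * (a:ℤ) * b) := by
          rw [← zpow_natCast (x ^ (u * (a:ℤ))) b, ← _root_.zpow_mul]
      _ = (x ^ ((a:ℤ) * b)) ^ u := by rw [← _root_.zpow_mul]; congr 1; ring
      _ = 1 := by rw [hx1, _root_.one_zpow]
  · calc (x ^ (v * (b:ℤ))) ^ a = x ^ (v * (b:ℤ) * a) := by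
          rw [← zpow_natCast (x ^ (v * (b:ℤ))) a, ← _root_.zpow_mul]
      _ = (x ^ ((a:ℤ) * b)) ^ v := by rw [← _root_.zpow_mul]; congr 1; ring
      _ = 1 := by rw [hx1, _root_.one_zpow]
  · rw [← zpow_add₀ hx, huv, zpow_one]

/-- uniqueness of the splitting -/
lemma split_unique {a b : ℕ} (ha : 0 < a) (hb : 0 < b) (hcop : Nat.Coprime a b)
    {β α β' α' : F} (hβ : β ^ b = 1) (hα : α ^ a = 1) (hβ' : β' ^ b = 1) (hα' : α' ^ a = 1)
    (h : β * α = β' * α') : β = β' ∧ α = α' := by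
  obtain ⟨u, v, huv⟩ : ∃ u v : ℤ, u * (a : ℤ) + v * (b : ℤ) = 1 := by
    have : IsCoprime (a : ℤ) (b : ℤ) := by
      rw [Int.isCoprime_iff_gcd_eq_one, Int.gcd_natCast_natCast]
      exact hcop
    obtain ⟨u, v, huv⟩ := this
    exact ⟨u, v, huv⟩
  have hβ0 : β ≠ 0 := fun h0 => by rw [h0, zero_pow hb.ne'] at hβ; exact zero_ne_one hβ
  have hβ'0 : β' ≠ 0 := fun h0 => by rw [h0, zero_pow hb.ne'] at hβ'; exact zero_ne_one hβ'
  have hα0 : α ≠ 0 := fun h0 => by rw [h0, zero_pow ha.ne'] at hα; exact zero_ne_one hα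
  have hα'0 : α' ≠ 0 := fun h0 => by rw [h0, zero_pow ha.ne'] at hα'; exact zero_ne_one hα'
  set z := β / β' with hz
  have hz0 : z ≠ 0 := div_ne_zero hβ0 hβ'0
  have hzb : z ^ b = 1 := by rw [hz, div_pow, hβ, hβ', div_one]
  have hzalt : z = α' / α := by
    rw [hz]
    field_simp
    linear_combination h
  have hza : z ^ a = 1 := by rw [hzalt, div_pow, hα, hα', div_one]
  have hz1 : z = 1 := by
    calc z = z ^ (1 : ℤ) := (zpow_one z).symm
      _ = z ^ (u * (a:ℤ) + v * (b:ℤ)) := by rw [huv]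
      _ = (z ^ (a:ℤ)) ^ u * (z ^ (b:ℤ)) ^ v := by
          rw [zpow_add₀ hz0, mul_comm u, mul_comm v, _root_.zpow_mul, _root_.zpow_mul]
      _ = 1 := by
          rw [zpow_natCast, zpow_natCast, hza, hzb, _root_.one_zpow, _root_.one_zpow, one_mul]
  have hββ' : β = β' := by
    have := hz1
    rw [hz, div_eq_one_iff_eq hβ'0] at this
    exact this
  refine ⟨hββ', ?_⟩
  have : β * α = β * α' := by rw [h, hββ']
  exact mul_left_cancel₀ hβ0 this

/-- mono times diagonal -/
lemma mono_mul_diagonal {n : ℕ} (σ : Equiv.Perm (Fin n)) (e f : Fin n → F) :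
    mono σ e * Matrix.diagonal f = mono σ (fun j => e j * f j) := by
  ext i j
  rw [Matrix.mul_diagonal, mono_apply, mono_apply, ite_mul, zero_mul]

/-- diagonal commutes past mono -/
lemma diagonal_mul_mono {n : ℕ} (σ : Equiv.Perm (Fin n)) (e : Fin n → F) :
    Matrix.diagonal e * mono σ (fun _ => (1:F)) =
      mono σ (fun _ => (1:F)) * Matrix.diagonal (fun j => e (σ j)) := by
  ext i j
  simp only [Matrix.diagonal_mul, Matrix.mul_diagonal, mono_apply]
  by_cases h : σ j = i
  · simp [h]
  · simp [h]

/-- conjugating an upper unipotent by a diagonal -/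
lemma diag_conj {n : ℕ} {v : Matrix (Fin n) (Fin n) F} {e : Fin n → F} (hv : UU v)
    (he : ∀ i, e i ≠ 0) :
    UU (Matrix.diagonal e * v * Matrix.diagonal (fun i => (e i)⁻¹)) ∧
    Matrix.diagonal e * v =
      (Matrix.diagonal e * v * Matrix.diagonal (fun i => (e i)⁻¹)) * Matrix.diagonal e := by
  constructor
  · constructor
    · intro i j hji
      rw [Matrix.mul_diagonal, Matrix.diagonal_mul, hv.1 i j hji, mul_zero, zero_mul]
    · intro i
      rw [Matrix.mul_diagonal, Matrix.diagonal_mul, hv.2, mul_one, mul_inv_cancel₀ (he i)]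
  · rw [mul_assoc, mul_assoc, Matrix.diagonal_mul_diagonal]
    have : (fun i => (e i)⁻¹ * e i) = fun _ => (1:F) := funext fun i => inv_mul_cancel₀ (he i)
    rw [this, Matrix.diagonal_one, mul_one]

/-- package a matrix with invertible determinant as an element of GL -/
def toGL {n : ℕ} (A : Matrix (Fin n) (Fin n) F) (h : IsUnit A.det) : GL (Fin n) F :=
  ((Matrix.isUnit_iff_isUnit_det A).mpr h).unit

@[simp] lemma toGL_coe {n : ℕ} (A : Matrix (Fin n) (Fin n) F) (h : IsUnit A.det) :
    ((toGL A h : GL (Fin n) F) : Matrix (Fin n) (Fin n) F) = A :=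
  IsUnit.unit_spec _


/-- full uniqueness of the monomial part from two factorizations -/
theorem bruhat_unique {n : ℕ} {σ σ' : Equiv.Perm (Fin n)} {d d' : Fin n → F}
    {u₁ u₂ u₁' u₂' : Matrix (Fin n) (Fin n) F}
    (hu1 : UU u₁) (hu2 : UU u₂) (hu1' : UU u₁') (hu2' : UU u₂') (hd : ∀ j, d j ≠ 0)
    (h : u₁ * mono σ d * u₂ = u₁' * mono σ' d' * u₂') : σ = σ' ∧ d = d' := by
  have hv : (u₁'⁻¹ * u₁) * mono σ d = mono σ' d' * (u₂' * u₂⁻¹) := by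
    have h2 : u₁'⁻¹ * (u₁ * mono σ d * u₂) * u₂⁻¹ =
        u₁'⁻¹ * (u₁' * mono σ' d' * u₂') * u₂⁻¹ := by rw [h]
    calc (u₁'⁻¹ * u₁) * mono σ d
        = u₁'⁻¹ * u₁ * mono σ d * (u₂ * u₂⁻¹) := by
          rw [Matrix.mul_nonsing_inv _ hu2.isUnitDet, mul_one]
      _ = u₁'⁻¹ * (u₁ * mono σ d * u₂) * u₂⁻¹ := by simp only [mul_assoc]
      _ = u₁'⁻¹ * (u₁' * mono σ' d' * u₂') * u₂⁻¹ := h2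
      _ = (u₁'⁻¹ * u₁') * (mono σ' d' * (u₂' * u₂⁻¹)) := by simp only [mul_assoc]
      _ = mono σ' d' * (u₂' * u₂⁻¹) := by
          rw [Matrix.nonsing_inv_mul _ hu1'.isUnitDet, one_mul]
  exact mono_unique (hu1'.inv.mul hu1) (hu2'.mul hu2.inv) hd hv

end BruhatAux

/-- Every element of `G = GL_n(F_q)` has a unique expression as a product
`u₁ w h_b h_a u₂` with `w ∈ W`, `u₁ ∈ U_{w⁻¹}⁻ = { u ∈ U : w⁻¹ u w ∈ w₀ U w₀ }`,
`h_b ∈ H_b`, `h_a ∈ H_a` and `u₂ ∈ U`.  In particular `WH_b` is a complete set of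
representatives for the `(B_a, B_a)`-double cosets of `G`. -/
theorem unique_factorization_and_double_coset_reps
    (F : Type) [Field F] [Fintype F] [DecidableEq F] (n a b : ℕ)
    (hn : 0 < n) (ha : 0 < a) (hb : 0 < b)
    (hab : a * b = Fintype.card F - 1) (hcop : Nat.Coprime a b)
    (w0 : GLn F n)
    (hw0 : ∀ i j : Fin n,
      (w0 : Matrix (Fin n) (Fin n) F) i j = if (i : ℕ) + (j : ℕ) + 1 = n then 1 else 0) :
    (∀ g : GLn F n,
      ∃! p : GLn F n × GLn F n × GLn F n × GLn F n × GLn F n,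
        p.2.1 ∈ Wset F n ∧
        p.1 ∈ Uset F n ∧ (∃ v ∈ Uset F n, p.2.1⁻¹ * p.1 * p.2.1 = w0 * v * w0) ∧
        p.2.2.1 ∈ Hbset F n b ∧ p.2.2.2.1 ∈ Haset F n a ∧ p.2.2.2.2 ∈ Uset F n ∧
        g = p.1 * p.2.1 * p.2.2.1 * p.2.2.2.1 * p.2.2.2.2) ∧
    (∀ g : GLn F n, ∃! x : GLn F n, x ∈ WHbset F n b ∧
      ∃ c1 ∈ Baset F n a, ∃ c2 ∈ Baset F n a, g = c1 * x * c2) := by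
  classical
  -- w₀ is the permutation matrix of `Fin.rev`
  have hw0mat : (w0 : Matrix (Fin n) (Fin n) F) = mono Fin.revPerm (fun _ => (1:F)) := by
    ext i j
    rw [hw0 i j, mono_apply]
    by_cases h : Fin.revPerm j = i
    · rw [if_pos h, if_pos]
      simp only [Fin.revPerm_apply] at h
      have hj := j.isLt
      have hv : (i : ℕ) = n - ((j:ℕ) + 1) := by rw [← h, Fin.val_rev]
      omega
    · rw [if_neg h, if_neg]
      intro hc
      apply h
      simp only [Fin.revPerm_apply]
      have hj := j.isLt
      exact (Fin.ext (a := Fin.rev j) (by rw [Fin.val_rev]; omega))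
  have hrevtrans : (Fin.revPerm : Equiv.Perm (Fin n)).trans Fin.revPerm = 1 :=
    Equiv.ext fun x => by simp [Fin.rev_rev]
  have hrevinv : (Fin.revPerm : Equiv.Perm (Fin n))⁻¹ = Fin.revPerm :=
    Equiv.ext fun x => Fin.rev_rev x ▸ rfl
  have hw0sq : w0 * w0 = (1 : GLn F n) := by
    apply Units.ext
    rw [Units.val_mul, hw0mat, mono_mul, hrevtrans, Units.val_one,
      show (fun j : Fin n => (1:F) * 1) = fun _ => (1:F) from funext fun _ => one_mul 1]
    exact mono_one
  -- canonical decomposition of every g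
  have master : ∀ g : GLn F n, ∃ (σ : Equiv.Perm (Fin n)) (β α : Fin n → F)
      (u₁ u₂ : Matrix (Fin n) (Fin n) F),
      UU u₁ ∧ UU u₂ ∧ Cs σ u₁ ∧ (∀ j, β j ^ b = 1) ∧ (∀ j, α j ^ a = 1) ∧
      (g : Matrix (Fin n) (Fin n) F) = u₁ * mono σ (fun j => β j * α j) * u₂ := by
    intro g
    have hdet : IsUnit ((g : Matrix (Fin n) (Fin n) F)).det :=
      (Matrix.isUnit_iff_isUnit_det _).mp ⟨g, rfl⟩
    obtain ⟨σ, d, u₁, u₂, hu1, hu2, hcs, hd, hfac⟩ := exists_bruhat n _ hdet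
    have hsplit : ∀ j, ∃ βα : F × F, βα.1 ^ b = 1 ∧ βα.2 ^ a = 1 ∧ d j = βα.1 * βα.2 := by
      intro j
      obtain ⟨β, α, h1, h2, h3⟩ := split_exists hab hcop (hd j)
      exact ⟨(β, α), h1, h2, h3⟩
    choose βα h1 h2 h3 using hsplit
    refine ⟨σ, fun j => (βα j).1, fun j => (βα j).2, u₁, u₂, hu1, hu2, hcs, h1, h2, ?_⟩
    rw [hfac, show d = (fun j => (βα j).1 * (βα j).2) from funext h3]
  -- helper : collapsing a monomial and two diagonals
  have hmono3 : ∀ (τ : Equiv.Perm (Fin n)) (β α : Fin n → F),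
      mono τ (fun _ => (1:F)) * Matrix.diagonal β * Matrix.diagonal α =
        mono τ (fun j => β j * α j) := by
    intro τ β α
    rw [mono_mul_diagonal, mono_mul_diagonal]
    exact congrArg (mono τ) (funext fun j => by ring)
  -- helper : coercion of the inverse of a permutation-matrix unit
  have winv_coe : ∀ (τ : Equiv.Perm (Fin n)) (w : GLn F n),
      (w : Matrix (Fin n) (Fin n) F) = mono τ (fun _ => (1:F)) →
      ((w⁻¹ : GLn F n) : Matrix (Fin n) (Fin n) F) = mono τ⁻¹ (fun _ => (1:F)) := by
    intro τ w hw
    apply Units.inv_eq_of_mul_eq_one_right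
    rw [hw]
    have h := mono_mul_inv τ (fun _ => (1:F)) (fun _ => one_ne_zero)
    simpa using h
  constructor
  · -- part 1
    intro g
    obtain ⟨σ, β, α, u₁, u₂, hu1, hu2, hcs, hβ, hα, hfac⟩ := master g
    have hβ0 : ∀ j, β j ≠ 0 := fun j h0 => by
      have h := hβ j
      rw [h0, zero_pow hb.ne'] at h
      exact zero_ne_one h
    have hα0 : ∀ j, α j ≠ 0 := fun j h0 => by
      have h := hα j
      rw [h0, zero_pow ha.ne'] at h
      exact zero_ne_one h
    have hd0 : ∀ j, β j * α j ≠ 0 := fun j => mul_ne_zero (hβ0 j) (hα0 j)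
    set u1g : GLn F n := toGL u₁ hu1.isUnitDet with hu1g
    set wg : GLn F n := toGL (mono σ (fun _ => (1:F)))
      (mono_isUnitDet σ _ (fun _ => one_ne_zero)) with hwg
    set hbg : GLn F n := toGL (Matrix.diagonal β)
      (by rw [Matrix.det_diagonal]
          exact isUnit_iff_ne_zero.mpr (Finset.prod_ne_zero_iff.mpr fun j _ => hβ0 j)) with hhbg
    set hag : GLn F n := toGL (Matrix.diagonal α)
      (by rw [Matrix.det_diagonal]
          exact isUnit_iff_ne_zero.mpr (Finset.prod_ne_zero_iff.mpr fun j _ => hα0 j)) with hhag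
    set u2g : GLn F n := toGL u₂ hu2.isUnitDet with hu2g
    have hwcoe : (wg : Matrix (Fin n) (Fin n) F) = mono σ (fun _ => (1:F)) := toGL_coe _ _
    have hwinv : ((wg⁻¹ : GLn F n) : Matrix (Fin n) (Fin n) F) = mono σ⁻¹ (fun _ => (1:F)) :=
      winv_coe σ wg hwcoe
    have hgprod : g = u1g * wg * hbg * hag * u2g := by
      apply Units.ext
      simp only [Units.val_mul, hu1g, hwg, hhbg, hhag, hu2g, toGL_coe]
      rw [hfac, ← hmono3 σ β α]
      simp only [mul_assoc]
    refine ⟨(u1g, wg, hbg, hag, u2g),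
      ⟨⟨σ, fun i j => by rw [hwcoe]; rfl⟩,
       ⟨fun i j hij => by rw [toGL_coe]; exact hu1.1 i j hij,
        fun i => by rw [toGL_coe]; exact hu1.2 i⟩,
       ?_,
       ⟨fun i j hij => by rw [toGL_coe]; exact Matrix.diagonal_apply_ne β hij,
        fun i => by rw [toGL_coe, Matrix.diagonal_apply_eq]; exact hβ i⟩,
       ⟨fun i j hij => by rw [toGL_coe]; exact Matrix.diagonal_apply_ne α hij,
        fun i => by rw [toGL_coe, Matrix.diagonal_apply_eq]; exact hα i⟩,
       ⟨fun i j hij => by rw [toGL_coe]; exact hu2.1 i j hij,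
        fun i => by rw [toGL_coe]; exact hu2.2 i⟩,
       hgprod⟩, ?_⟩
    · -- the constraint for the canonical choice
      refine ⟨w0 * (wg⁻¹ * u1g * wg) * w0, ?_, ?_⟩
      · have hent : ∀ i j, ((w0 * (wg⁻¹ * u1g * wg) * w0 : GLn F n) :
            Matrix (Fin n) (Fin n) F) i j = u₁ (σ (Fin.rev i)) (σ (Fin.rev j)) := by
          intro i j
          simp only [Units.val_mul, hw0mat, hwinv, hu1g, toGL_coe, hwcoe]
          rw [mono_mul_right, mono_mul_left]
          rw [hrevinv, mono_mul_right, mono_mul_left, inv_inv]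
          rfl
        refine ⟨fun i j hij => ?_, fun i => ?_⟩
        · rw [hent]
          exact hcs (Fin.rev i) (Fin.rev j) (Fin.rev_lt_rev.mpr hij)
        · rw [hent]
          exact hu1.2 _
      · have : w0 * (w0 * (wg⁻¹ * u1g * wg) * w0) * w0 = wg⁻¹ * u1g * wg := by
          simp only [← mul_assoc]
          rw [hw0sq, one_mul, mul_assoc, hw0sq, mul_one]
        rw [this]
    · -- uniqueness
      rintro ⟨q1, qw, qb, qa, q2⟩ ⟨⟨τ, hτ⟩, hq1U, ⟨v, hvU, hveq⟩, hqb, hqa, hq2U, hgeq⟩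
      have hqw : (qw : Matrix (Fin n) (Fin n) F) = mono τ (fun _ => (1:F)) := by
        ext i j
        rw [hτ i j]
        rfl
      set β' : Fin n → F := fun i => (qb : Matrix (Fin n) (Fin n) F) i i with hβ'
      set α' : Fin n → F := fun i => (qa : Matrix (Fin n) (Fin n) F) i i with hα'
      have hqbd : (qb : Matrix (Fin n) (Fin n) F) = Matrix.diagonal β' := by
        ext i j
        rcases eq_or_ne i j with rfl | hne
        · rw [Matrix.diagonal_apply_eq]
        · rw [Matrix.diagonal_apply_ne _ hne]
          exact hqb.1 i j hne
      have hqad : (qa : Matrix (Fin n) (Fin n) F) = Matrix.diagonal α' := by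
        ext i j
        rcases eq_or_ne i j with rfl | hne
        · rw [Matrix.diagonal_apply_eq]
        · rw [Matrix.diagonal_apply_ne _ hne]
          exact hqa.1 i j hne
      have hq1UU : UU ((q1 : Matrix (Fin n) (Fin n) F)) := ⟨hq1U.1, hq1U.2⟩
      have hq2UU : UU ((q2 : Matrix (Fin n) (Fin n) F)) := ⟨hq2U.1, hq2U.2⟩
      have hvUU : UU ((v : Matrix (Fin n) (Fin n) F)) := ⟨hvU.1, hvU.2⟩
      -- the constraint gives Cs τ q1
      have hcsq : Cs τ ((q1 : Matrix (Fin n) (Fin n) F)) := by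
        intro k l hkl
        have hmat := congrArg (fun x : GLn F n => (x : Matrix (Fin n) (Fin n) F)) hveq
        simp only [Units.val_mul] at hmat
        rw [winv_coe τ qw hqw, hqw, hw0mat] at hmat
        have he := congrFun (congrFun hmat k) l
        rw [mono_mul_right, mono_mul_left, inv_inv] at he
        rw [mono_mul_right, mono_mul_left, hrevinv] at he
        rw [he]
        exact hvUU.1 (Fin.revPerm k) (Fin.revPerm l)
          (by simpa [Fin.revPerm_apply] using Fin.rev_lt_rev.mpr hkl)
      -- the product equality at matrix level
      have hgmat : (g : Matrix (Fin n) (Fin n) F) =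
          (q1 : Matrix (Fin n) (Fin n) F) * mono τ (fun j => β' j * α' j) *
            (q2 : Matrix (Fin n) (Fin n) F) := by
        have h := congrArg (fun x : GLn F n => (x : Matrix (Fin n) (Fin n) F)) hgeq
        simp only [Units.val_mul] at h
        rw [h, hqw, hqbd, hqad, ← hmono3 τ β' α']
        simp only [mul_assoc]
      have hkey := bruhat_unique hu1 hu2 hq1UU hq2UU hd0 (hfac.symm.trans hgmat)
      obtain ⟨hστ, hdd⟩ := hkey
      have hβα : ∀ j, β j = β' j ∧ α j = α' j := by
        intro j
        exact split_unique ha hb hcop (hβ j) (hα j) (hqb.2 j) (hqa.2 j) (congrFun hdd j)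
      have hdeq : (fun j => β' j * α' j) = fun j => β j * α j := by
        funext j
        rw [(hβα j).1, (hβα j).2]
      have hgmat2 : u₁ * mono σ (fun j => β j * α j) * u₂ =
          (q1 : Matrix (Fin n) (Fin n) F) * mono σ (fun j => β j * α j) *
            (q2 : Matrix (Fin n) (Fin n) F) := by
        rw [← hfac, hgmat, hdeq, hστ]
      have hcsq' : Cs σ ((q1 : Matrix (Fin n) (Fin n) F)) := by rw [hστ]; exact hcsq
      obtain ⟨hq1eq, hq2eq⟩ := unipotent_unique hu1 hu2 hq1UU hq2UU hcs hcsq' hd0 hgmat2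
      have e1 : q1 = u1g := Units.ext (by rw [hu1g, toGL_coe, ← hq1eq])
      have e2 : qw = wg := Units.ext (by rw [hwg, toGL_coe, hqw, hστ])
      have e3 : qb = hbg := Units.ext (by
        rw [hhbg, toGL_coe, hqbd]
        exact congrArg Matrix.diagonal (funext fun j => ((hβα j).1).symm))
      have e4 : qa = hag := Units.ext (by
        rw [hhag, toGL_coe, hqad]
        exact congrArg Matrix.diagonal (funext fun j => ((hβα j).2).symm))
      have e5 : q2 = u2g := Units.ext (by rw [hu2g, toGL_coe, ← hq2eq])
      exact Prod.ext e1 (Prod.ext e2 (Prod.ext e3 (Prod.ext e4 e5)))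
  · -- part 2
    intro g
    obtain ⟨σ, β, α, u₁, u₂, hu1, hu2, hcs, hβ, hα, hfac⟩ := master g
    have hβ0 : ∀ j, β j ≠ 0 := fun j h0 => by
      have h := hβ j
      rw [h0, zero_pow hb.ne'] at h
      exact zero_ne_one h
    have hα0 : ∀ j, α j ≠ 0 := fun j h0 => by
      have h := hα j
      rw [h0, zero_pow ha.ne'] at h
      exact zero_ne_one h
    have hd0 : ∀ j, β j * α j ≠ 0 := fun j => mul_ne_zero (hβ0 j) (hα0 j)
    set u1g : GLn F n := toGL u₁ hu1.isUnitDet with hu1g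
    set wg : GLn F n := toGL (mono σ (fun _ => (1:F)))
      (mono_isUnitDet σ _ (fun _ => one_ne_zero)) with hwg
    set hbg : GLn F n := toGL (Matrix.diagonal β)
      (by rw [Matrix.det_diagonal]
          exact isUnit_iff_ne_zero.mpr (Finset.prod_ne_zero_iff.mpr fun j _ => hβ0 j)) with hhbg
    set hag : GLn F n := toGL (Matrix.diagonal α)
      (by rw [Matrix.det_diagonal]
          exact isUnit_iff_ne_zero.mpr (Finset.prod_ne_zero_iff.mpr fun j _ => hα0 j)) with hhag
    set u2g : GLn F n := toGL u₂ hu2.isUnitDet with hu2g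
    have hwcoe : (wg : Matrix (Fin n) (Fin n) F) = mono σ (fun _ => (1:F)) := toGL_coe _ _
    refine ⟨wg * hbg, ⟨⟨wg, ⟨σ, fun i j => by rw [hwcoe]; rfl⟩, hbg,
      ⟨fun i j hij => by rw [hhbg, toGL_coe]; exact Matrix.diagonal_apply_ne β hij,
       fun i => by rw [hhbg, toGL_coe, Matrix.diagonal_apply_eq]; exact hβ i⟩, rfl⟩,
      u1g, ⟨1, ⟨fun i j hij => by rw [Units.val_one]; exact Matrix.one_apply_ne hij,
        fun i => by rw [Units.val_one, Matrix.one_apply_eq, one_pow]⟩,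
        u1g, ⟨fun i j hij => by rw [hu1g, toGL_coe]; exact hu1.1 i j hij,
          fun i => by rw [hu1g, toGL_coe]; exact hu1.2 i⟩, (one_mul u1g).symm⟩,
      hag * u2g, ⟨hag,
        ⟨fun i j hij => by rw [hhag, toGL_coe]; exact Matrix.diagonal_apply_ne α hij,
         fun i => by rw [hhag, toGL_coe, Matrix.diagonal_apply_eq]; exact hα i⟩,
        u2g, ⟨fun i j hij => by rw [hu2g, toGL_coe]; exact hu2.1 i j hij,
          fun i => by rw [hu2g, toGL_coe]; exact hu2.2 i⟩, rfl⟩, ?_⟩, ?_⟩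
    · -- the equation g = u1g * (wg*hbg) * (hag*u2g)
      apply Units.ext
      simp only [Units.val_mul, hu1g, hwg, hhbg, hhag, hu2g, toGL_coe]
      rw [hfac, ← hmono3 σ β α]
      simp only [mul_assoc]
    · -- uniqueness of the double coset representative
      rintro x ⟨⟨w', ⟨τ, hτ⟩, db, hdb, hxeq⟩, c1, ⟨h1, hh1, v1, hv1, hc1⟩,
        c2, ⟨h2, hh2, v2, hv2, hc2⟩, hgeq⟩
      have hw' : (w' : Matrix (Fin n) (Fin n) F) = mono τ (fun _ => (1:F)) := by
        ext i j
        rw [hτ i j]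
        rfl
      set β'' : Fin n → F := fun i => (db : Matrix (Fin n) (Fin n) F) i i with hβ''
      have hdbd : (db : Matrix (Fin n) (Fin n) F) = Matrix.diagonal β'' := by
        ext i j
        rcases eq_or_ne i j with rfl | hne
        · rw [Matrix.diagonal_apply_eq]
        · rw [Matrix.diagonal_apply_ne _ hne]
          exact hdb.1 i j hne
      set e1 : Fin n → F := fun i => (h1 : Matrix (Fin n) (Fin n) F) i i with he1
      have h1d : (h1 : Matrix (Fin n) (Fin n) F) = Matrix.diagonal e1 := by
        ext i j
        rcases eq_or_ne i j with rfl | hne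
        · rw [Matrix.diagonal_apply_eq]
        · rw [Matrix.diagonal_apply_ne _ hne]
          exact hh1.1 i j hne
      set e2 : Fin n → F := fun i => (h2 : Matrix (Fin n) (Fin n) F) i i with he2
      have h2d : (h2 : Matrix (Fin n) (Fin n) F) = Matrix.diagonal e2 := by
        ext i j
        rcases eq_or_ne i j with rfl | hne
        · rw [Matrix.diagonal_apply_eq]
        · rw [Matrix.diagonal_apply_ne _ hne]
          exact hh2.1 i j hne
      have he10 : ∀ i, e1 i ≠ 0 := fun i h0 => by
        have h := hh1.2 i
        rw [show (h1 : Matrix (Fin n) (Fin n) F) i i = e1 i from rfl, h0,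
          zero_pow ha.ne'] at h
        exact zero_ne_one h
      have he20 : ∀ i, e2 i ≠ 0 := fun i h0 => by
        have h := hh2.2 i
        rw [show (h2 : Matrix (Fin n) (Fin n) F) i i = e2 i from rfl, h0,
          zero_pow ha.ne'] at h
        exact zero_ne_one h
      have hv1UU : UU ((v1 : Matrix (Fin n) (Fin n) F)) := ⟨hv1.1, hv1.2⟩
      have hv2UU : UU ((v2 : Matrix (Fin n) (Fin n) F)) := ⟨hv2.1, hv2.2⟩
      obtain ⟨hconjUU, hswap⟩ := diag_conj hv1UU he10
      have hgmat : (g : Matrix (Fin n) (Fin n) F) =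
          (Matrix.diagonal e1 * (v1 : Matrix (Fin n) (Fin n) F) *
            Matrix.diagonal (fun i => (e1 i)⁻¹)) *
          mono τ (fun j => e1 (τ j) * β'' j * e2 j) *
          (v2 : Matrix (Fin n) (Fin n) F) := by
        have h := congrArg (fun z : GLn F n => (z : Matrix (Fin n) (Fin n) F)) hgeq
        rw [hc1, hxeq, hc2] at h
        simp only [Units.val_mul] at h
        rw [h1d, h2d, hw', hdbd] at h
        calc (g : Matrix (Fin n) (Fin n) F)
            = Matrix.diagonal e1 * (v1 : Matrix (Fin n) (Fin n) F) *
              (mono τ (fun _ => (1:F)) * Matrix.diagonal β'') *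
              (Matrix.diagonal e2 * (v2 : Matrix (Fin n) (Fin n) F)) := by
              rw [h]
          _ = (Matrix.diagonal e1 * (v1 : Matrix (Fin n) (Fin n) F) *
              Matrix.diagonal (fun i => (e1 i)⁻¹)) * Matrix.diagonal e1 *
              (mono τ (fun _ => (1:F)) * Matrix.diagonal β'') *
              (Matrix.diagonal e2 * (v2 : Matrix (Fin n) (Fin n) F)) := by
              rw [← hswap]
          _ = (Matrix.diagonal e1 * (v1 : Matrix (Fin n) (Fin n) F) *
              Matrix.diagonal (fun i => (e1 i)⁻¹)) *
              ((Matrix.diagonal e1 * mono τ (fun _ => (1:F))) * Matrix.diagonal β'' *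
              Matrix.diagonal e2) * (v2 : Matrix (Fin n) (Fin n) F) := by
              simp only [mul_assoc]
          _ = (Matrix.diagonal e1 * (v1 : Matrix (Fin n) (Fin n) F) *
              Matrix.diagonal (fun i => (e1 i)⁻¹)) *
              mono τ (fun j => e1 (τ j) * β'' j * e2 j) *
              (v2 : Matrix (Fin n) (Fin n) F) := by
              have hcollapse : Matrix.diagonal e1 * mono τ (fun _ => (1:F)) *
                  Matrix.diagonal β'' * Matrix.diagonal e2 =
                  mono τ (fun j => e1 (τ j) * β'' j * e2 j) := by
                rw [diagonal_mul_mono, mono_mul_diagonal, mono_mul_diagonal, mono_mul_diagonal]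
                exact congrArg (mono τ) (funext fun j => by ring)
              rw [← hcollapse]
      have hkey := bruhat_unique hu1 hu2 hconjUU hv2UU hd0 (hfac.symm.trans hgmat)
      obtain ⟨hστ, hdd⟩ := hkey
      have hββ : ∀ j, β j = β'' j := by
        intro j
        have hj := congrFun hdd j
        have hgrp : β'' j * (e1 (τ j) * e2 j) = β j * α j := by
          have hj' : β j * α j = e1 (τ j) * β'' j * e2 j := hj
          rw [hj']; ring
        have hpow : (e1 (τ j) * e2 j) ^ a = 1 := by
          rw [mul_pow, hh1.2 (τ j), hh2.2 j, one_mul]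
        exact (split_unique ha hb hcop (hdb.2 j) hpow (hβ j) (hα j)
          (hgrp.trans rfl)).1.symm
      refine Units.ext ?_
      rw [hxeq]
      simp only [Units.val_mul, hwg, hhbg, toGL_coe]
      rw [hw', hdbd, hστ]
      exact congrArg (fun D => mono τ (fun _ => (1:F)) * Matrix.diagonal D)
        (funext fun j => (hββ j).symm)
end
end

section
/- Let s = s_i ∈ S and U_s^- = { u ∈ U : s u s ∈ w_0 U w_0 } (the root subgroup of s). (1) If u ∈ U_s^- has nonzero off-diagonal entry ζ^c where c = am + bn with 0 ≤ m ≤ b-1 and 0 ≤ n ≤ a-1, then sus = u_1 s h_b^u h_a^u u_2 with u_1, u_2 ∈ U, h_a^u ∈ H_a, and h_b^u = h_{i,i+1}(ζ^{am}) ∈ H_b. (2) The relation u ~ u' iff h_b^u = h_b^{u'} is an equivalence relation on the set of nonidentity elements of U_s^-, and each equivalence class contains exactly a elements. -/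
noncomputable section

open scoped Pointwise

namespace SL2Aux

open Matrix

variable {F : Type} [Field F] {n : ℕ}

def uE (i j : Fin n) (x : F) : Matrix (Fin n) (Fin n) F := 1 + single i j x

lemma uE_apply (i j : Fin n) (x : F) (p q : Fin n) :
    uE i j x p q = (if p = q then (1:F) else 0) + (if i = p ∧ j = q then x else 0) := by
  simp [uE, Matrix.one_apply, Matrix.single]

lemma uE_mul (i j : Fin n) (hij : j ≠ i) (x y : F) :
    uE i j x * uE i j y = uE i j (x + y) := by
  have h0 : single i j x * single i j y = 0 :=
    Matrix.single_mul_single_of_ne x i j i hij y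
  unfold uE
  rw [add_mul, mul_add, mul_add, h0, add_zero, single_add]
  simp only [one_mul, mul_one]
  abel

lemma uE_zero (i j : Fin n) : uE i j (0:F) = 1 := by simp [uE]

def uEu (i j : Fin n) (hij : i ≠ j) (x : F) : GLn F n :=
  ⟨uE i j x, uE i j (-x),
   by rw [uE_mul i j (Ne.symm hij), add_neg_cancel, uE_zero],
   by rw [uE_mul i j (Ne.symm hij), neg_add_cancel, uE_zero]⟩

@[simp] lemma uEu_val (i j : Fin n) (hij : i ≠ j) (x : F) :
    ((uEu i j hij x : GLn F n) : Matrix (Fin n) (Fin n) F) = uE i j x := rfl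

def dUu (d : Fin n → Fˣ) : GLn F n :=
  ⟨diagonal fun p => (d p : F), diagonal fun p => ((d p)⁻¹ : F),
   by rw [diagonal_mul_diagonal]
      have h : (fun p => ((d p : F)) * (((d p)⁻¹ : F))) = fun _ => (1:F) := by
        funext p; simp
      rw [h, diagonal_one],
   by rw [diagonal_mul_diagonal]
      have h : (fun p => (((d p)⁻¹ : F)) * ((d p : F))) = fun _ => (1:F) := by
        funext p; simp
      rw [h, diagonal_one]⟩

@[simp] lemma dUu_val (d : Fin n → Fˣ) :
    ((dUu d : GLn F n) : Matrix (Fin n) (Fin n) F) = diagonal fun p => (d p : F) := rfl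

def pUu (σ : Equiv.Perm (Fin n)) : GLn F n :=
  ⟨σ.toPEquiv.toMatrix, σ.symm.toPEquiv.toMatrix,
   by rw [← PEquiv.toMatrix_trans, ← Equiv.toPEquiv_trans, Equiv.self_trans_symm,
        Equiv.toPEquiv_refl, PEquiv.toMatrix_refl],
   by rw [← PEquiv.toMatrix_trans, ← Equiv.toPEquiv_trans, Equiv.symm_trans_self,
        Equiv.toPEquiv_refl, PEquiv.toMatrix_refl]⟩

@[simp] lemma pUu_val (σ : Equiv.Perm (Fin n)) :
    ((pUu σ : GLn F n) : Matrix (Fin n) (Fin n) F) = σ.toPEquiv.toMatrix := rfl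

lemma perm_conj (σ : Equiv.Perm (Fin n)) (hσ : σ.symm = σ) (M : Matrix (Fin n) (Fin n) F) :
    σ.toPEquiv.toMatrix * M * σ.toPEquiv.toMatrix = M.submatrix σ σ := by
  rw [PEquiv.toMatrix_toPEquiv_mul, PEquiv.mul_toMatrix_toPEquiv, hσ]
  ext p q
  simp

lemma uE_submatrix (i j k l : Fin n) (σ : Equiv.Perm (Fin n)) (hi : σ k = i) (hj : σ l = j)
    (x : F) : (uE i j x).submatrix σ σ = uE k l x := by
  subst hi; subst hj
  ext p q
  simp [uE, Matrix.submatrix_apply, Matrix.one_apply, Matrix.single,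
    σ.injective.eq_iff]

lemma main_matrix (i j : Fin n) (hij : i ≠ j) (x y : F) (hxy : x * y = 1) :
    uE i j y * (Equiv.swap i j).toPEquiv.toMatrix
      * diagonal (fun p => if p = i then x else if p = j then -y else (1:F))
      * uE i j y = uE j i x := by
  have hyx : y * x = 1 := by rw [mul_comm]; exact hxy
  have h1 : uE i j y * (Equiv.swap i j).toPEquiv.toMatrix
      = (uE i j y).submatrix id (Equiv.swap i j) := by
    rw [PEquiv.mul_toMatrix_toPEquiv, Equiv.symm_swap]
  rw [h1]
  set D := diagonal (fun p => if p = i then x else if p = j then -y else (1:F)) with hD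
  set A := (uE i j y).submatrix id (Equiv.swap i j) * D with hA
  have hAapp : ∀ p q, A p q
      = uE i j y p (Equiv.swap i j q) * (if q = i then x else if q = j then -y else 1) := by
    intro p q; rw [hA, mul_diagonal]; rfl
  show A * uE i j y = uE j i x
  have h2 : A * uE i j y = A + A * single i j y := by
    rw [uE, mul_add, mul_one]
  rw [h2]
  have h3 : y * x * y = y := by rw [hyx, one_mul]
  have h4 : x * y * y = y := by rw [hxy, one_mul]
  ext p q
  rw [Matrix.add_apply]
  by_cases hq : q = j
  · rw [hq, mul_single_apply_same, hAapp, hAapp]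
    rw [Equiv.swap_apply_right, Equiv.swap_apply_left]
    by_cases hp : p = i
    · simp [hp, uE_apply, hij, hij.symm, hyx, h3, h4]
    · by_cases hp2 : p = j
      · simp [hp2, uE_apply, hij, hij.symm, Ne.symm hij, hxy, hyx, h3, h4]
      · simp [uE_apply, hij, hij.symm, hp, hp2, Ne.symm hp, Ne.symm hp2]
  · rw [mul_single_apply_of_ne _ _ _ _ _ hq, add_zero, hAapp]
    by_cases hqi : q = i
    · rw [hqi, Equiv.swap_apply_left]
      by_cases hp : p = i
      · simp [hp, hqi, uE_apply, hij, hij.symm, hyx]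
      · by_cases hp2 : p = j
        · simp [hp2, hqi, uE_apply, hij, hij.symm, Ne.symm hij]
        · simp [hqi, uE_apply, hij, hij.symm, hp, hp2, Ne.symm hp, Ne.symm hp2]
    · rw [Equiv.swap_apply_of_ne_of_ne hqi hq]
      by_cases hp : p = q
      · simp [hp, uE_apply, hq, hqi, Ne.symm hqi, Ne.symm hq]
      · simp [uE_apply, hq, hqi, hp, Ne.symm hqi, Ne.symm hq]


lemma val_eq_perm (σ : Equiv.Perm (Fin n)) (hσ : σ.symm = σ) (g : GLn F n)
    (h : ∀ k l, (g : Matrix (Fin n) (Fin n) F) k l = if σ l = k then 1 else 0) :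
    (g : Matrix (Fin n) (Fin n) F) = σ.toPEquiv.toMatrix := by
  ext k l
  rw [h k l, PEquiv.toMatrix_apply, Equiv.toPEquiv_apply]
  have hiff : σ l = k ↔ l ∈ (some (σ k) : Option (Fin n)) := by
    rw [Option.mem_def, Option.some_inj]
    constructor
    · intro hh; rw [← hh]
      have h2 := σ.symm_apply_apply l
      rw [hσ] at h2
      exact h2
    · intro hh; rw [← hh]
      have h2 := σ.symm_apply_apply k
      rw [hσ] at h2
      exact h2
  exact if_congr hiff rfl rfl

lemma uE_lower (k l : Fin n) (hkl : k < l) (x : F) :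
    (∀ p q : Fin n, q < p → uE k l x p q = 0) ∧ (∀ p, uE k l x p p = 1) := by
  constructor
  · intro p q hqp
    rw [uE_apply, if_neg (ne_of_gt hqp), if_neg, add_zero]
    rintro ⟨rfl, rfl⟩
    exact absurd hkl (not_lt.mpr hqp.le)
  · intro p
    rw [uE_apply, if_pos rfl, if_neg, add_zero]
    rintro ⟨rfl, rfl⟩
    exact absurd hkl (lt_irrefl _)

end SL2Aux

/-- The `SL_2`-computation: for `s = s_i ∈ S` and a nonidentity
`u ∈ U_s⁻ = { u ∈ U : s u s ∈ w₀ U w₀ }` with nonzero off-diagonal entry `ζ^c`,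
`c = am + bn` (`0 ≤ m ≤ b-1`, `0 ≤ n ≤ a-1`), one has `sus = u₁ s h_b^u h_a^u u₂` with
`u₁, u₂ ∈ U`, `h_a^u ∈ H_a` and `h_b^u = h_{i,i+1}(ζ^{am}) ∈ H_b`; moreover
`u ∼ u' ↔ h_b^u = h_b^{u'}` is an equivalence relation on the nonidentity elements
of `U_s⁻` each of whose classes has exactly `a` elements. -/
theorem sl2_decomposition
    (F : Type) [Field F] [Fintype F] [DecidableEq F] (n a b : ℕ)
    (hn : 0 < n) (ha : 0 < a) (hb : 0 < b)
    (hab : a * b = Fintype.card F - 1) (hcop : Nat.Coprime a b)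
    (ζ : Fˣ) (hζ : ∀ x : Fˣ, x ∈ Subgroup.zpowers ζ)
    (i j : Fin n) (hij : (i : ℕ) + 1 = (j : ℕ))
    (s : GLn F n)
    (hs : ∀ k l : Fin n,
      (s : Matrix (Fin n) (Fin n) F) k l = if Equiv.swap i j l = k then 1 else 0)
    (w0 : GLn F n)
    (hw0 : ∀ k l : Fin n,
      (w0 : Matrix (Fin n) (Fin n) F) k l = if (k : ℕ) + (l : ℕ) + 1 = n then 1 else 0) :
    (∀ u : GLn F n, u ∈ Uset F n → (∃ v ∈ Uset F n, s * u * s = w0 * v * w0) →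
      ∀ c m nn : ℕ, (u : Matrix (Fin n) (Fin n) F) i j = (ζ : F) ^ c →
        c = a * m + b * nn → m < b → nn < a →
        ∃ u1 ∈ Uset F n, ∃ u2 ∈ Uset F n, ∃ hA ∈ Haset F n a, ∃ hB : GLn F n,
          (hB : Matrix (Fin n) (Fin n) F) = hmat F b i j ((ζ : F) ^ (a * m)) ∧
          s * u * s = u1 * s * hB * hA * u2) ∧
    (∃ hbOf : GLn F n → GLn F n,
      (∀ u : GLn F n, u ∈ Uset F n → (∃ v ∈ Uset F n, s * u * s = w0 * v * w0) → u ≠ 1 →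
        (∃ m nn : ℕ, m < b ∧ nn < a ∧
          (u : Matrix (Fin n) (Fin n) F) i j = (ζ : F) ^ (a * m + b * nn) ∧
          (hbOf u : Matrix (Fin n) (Fin n) F) = hmat F b i j ((ζ : F) ^ (a * m))) ∧
        (∃ u1 ∈ Uset F n, ∃ u2 ∈ Uset F n, ∃ hA ∈ Haset F n a,
          s * u * s = u1 * s * hbOf u * hA * u2)) ∧
      Equivalence (fun u u' :
          {u : GLn F n // (u ∈ Uset F n ∧ ∃ v ∈ Uset F n, s * u * s = w0 * v * w0) ∧ u ≠ 1} =>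
          hbOf ↑u = hbOf ↑u') ∧
      (∀ u : GLn F n, (u ∈ Uset F n ∧ ∃ v ∈ Uset F n, s * u * s = w0 * v * w0) → u ≠ 1 →
        Set.ncard {u' : GLn F n |
          (u' ∈ Uset F n ∧ ∃ v ∈ Uset F n, s * u' * s = w0 * v * w0) ∧ u' ≠ 1 ∧
          hbOf u' = hbOf u} = a)) := by
  classical
  have hij' : i ≠ j := by
    intro h; rw [h] at hij; omega
  have hiltj : i < j := by
    rw [Fin.lt_def]; omega
  set σ := Equiv.swap i j with hσdef
  have hσsymm : σ.symm = σ := Equiv.symm_swap i j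
  have hsval : (s : Matrix (Fin n) (Fin n) F) = σ.toPEquiv.toMatrix :=
    SL2Aux.val_eq_perm σ hσsymm s hs
  have hw0val : (w0 : Matrix (Fin n) (Fin n) F) = (Fin.revPerm).toPEquiv.toMatrix := by
    apply SL2Aux.val_eq_perm _ Fin.revPerm_symm
    intro k l
    rw [hw0 k l]
    refine if_congr ?_ rfl rfl
    rw [Fin.revPerm_apply, Fin.ext_iff, Fin.val_rev]
    omega
  have hsus : ∀ u : GLn F n, ((s * u * s : GLn F n) : Matrix (Fin n) (Fin n) F)
      = ((u : Matrix (Fin n) (Fin n) F)).submatrix σ σ := by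
    intro u
    rw [Units.val_mul, Units.val_mul, hsval]
    exact SL2Aux.perm_conj σ hσsymm _
  have hw0w0 : w0 * w0 = 1 := by
    apply Units.ext
    rw [Units.val_mul, hw0val, ← PEquiv.toMatrix_trans, ← Equiv.toPEquiv_trans]
    have : (Fin.revPerm : Equiv.Perm (Fin n)).trans Fin.revPerm = Equiv.refl _ := by
      ext x
      simp [Fin.rev_rev]
    rw [this, Equiv.toPEquiv_refl, PEquiv.toMatrix_refl, Units.val_one]
  have swap_lt : ∀ p q : Fin n, p < q → ¬(p = i ∧ q = j) → σ p < σ q := by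
    intro p q hpq hne
    have hv : ∀ r : Fin n, ((σ r : Fin n) : ℕ)
        = if r = i then (j : ℕ) else if r = j then (i : ℕ) else (r : ℕ) := by
      intro r
      rw [hσdef, Equiv.swap_apply_def, apply_ite Fin.val, apply_ite Fin.val]
    have hpq' : (p : ℕ) < (q : ℕ) := hpq
    rw [Fin.lt_def, hv p, hv q]
    simp only [Fin.ext_iff] at hne ⊢
    split_ifs <;> omega
  have hnormal : ∀ u : GLn F n, u ∈ Uset F n →
      (∃ v ∈ Uset F n, s * u * s = w0 * v * w0) →
      (u : Matrix (Fin n) (Fin n) F)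
        = SL2Aux.uE i j ((u : Matrix (Fin n) (Fin n) F) i j) := by
    rintro u hu ⟨v, hv, heq⟩
    have hM : ((u : Matrix (Fin n) (Fin n) F)).submatrix σ σ
        = ((v : Matrix (Fin n) (Fin n) F)).submatrix Fin.revPerm Fin.revPerm := by
      have h1 := congrArg Units.val heq
      rw [Units.val_mul, Units.val_mul, Units.val_mul, Units.val_mul, hsval, hw0val] at h1
      rw [SL2Aux.perm_conj σ hσsymm, SL2Aux.perm_conj _ Fin.revPerm_symm] at h1
      exact h1
    have hlow : ∀ p q : Fin n, p < q → ¬(p = i ∧ q = j) →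
        (u : Matrix (Fin n) (Fin n) F) p q = 0 := by
      intro p q hpq hne
      have h1 := congrFun (congrFun hM (σ p)) (σ q)
      rw [Matrix.submatrix_apply, Matrix.submatrix_apply,
        Equiv.swap_apply_self, Equiv.swap_apply_self] at h1
      rw [h1]
      apply hv.1
      simp only [Fin.revPerm_apply]
      exact Fin.rev_lt_rev.mpr (swap_lt p q hpq hne)
    ext p q
    rcases lt_trichotomy p q with h | h | h
    · by_cases hc : p = i ∧ q = j
      · rw [SL2Aux.uE_apply, if_neg (ne_of_lt h), if_pos ⟨hc.1.symm, hc.2.symm⟩, zero_add,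
          hc.1, hc.2]
      · rw [hlow p q h hc, SL2Aux.uE_apply, if_neg (ne_of_lt h), if_neg, add_zero]
        rintro ⟨h1, h2⟩
        exact hc ⟨h1.symm, h2.symm⟩
    · rw [h, hu.2 q, SL2Aux.uE_apply, if_pos rfl, if_neg, add_zero]
      rintro ⟨rfl, rfl⟩
      exact hij' rfl
    · rw [hu.1 p q h, SL2Aux.uE_apply, if_neg (ne_of_gt h), if_neg, add_zero]
      rintro ⟨rfl, rfl⟩
      exact absurd hiltj (not_lt.mpr h.le)
  have hmemU : ∀ x : F, (SL2Aux.uEu i j hij' x) ∈ Uset F n := by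
    intro x
    have hU := SL2Aux.uE_lower i j hiltj x
    exact ⟨fun p q h => hU.1 p q h, hU.2⟩
  have hmemD : ∀ x : F,
      ∃ v ∈ Uset F n, s * (SL2Aux.uEu i j hij' x) * s = w0 * v * w0 := by
    intro x
    refine ⟨w0 * (s * SL2Aux.uEu i j hij' x * s) * w0, ?_, ?_⟩
    · have hval : ((w0 * (s * SL2Aux.uEu i j hij' x * s) * w0 : GLn F n) :
          Matrix (Fin n) (Fin n) F) = SL2Aux.uE (Fin.rev j) (Fin.rev i) x := by
        rw [Units.val_mul, Units.val_mul, hw0val, SL2Aux.perm_conj _ Fin.revPerm_symm,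
          hsus, SL2Aux.uEu_val]
        rw [SL2Aux.uE_submatrix i j j i σ (Equiv.swap_apply_right i j)
          (Equiv.swap_apply_left i j)]
        rw [SL2Aux.uE_submatrix j i (Fin.rev j) (Fin.rev i) Fin.revPerm
          (by simp [Fin.rev_rev]) (by simp [Fin.rev_rev])]
      have hrevlt : Fin.rev j < Fin.rev i := Fin.rev_lt_rev.mpr hiltj
      have hU := SL2Aux.uE_lower (Fin.rev j) (Fin.rev i) hrevlt x
      constructor
      · intro p q h
        rw [hval]
        exact hU.1 p q h
      · intro p
        rw [hval]
        exact hU.2 p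
    · have : w0 * (w0 * (s * SL2Aux.uEu i j hij' x * s) * w0) * w0
          = (w0 * w0) * (s * SL2Aux.uEu i j hij' x * s) * (w0 * w0) := by
        group
      rw [this, hw0w0, one_mul, mul_one]
  -- arithmetic facts about ζ
  have hcard : Fintype.card Fˣ = a * b := by rw [Fintype.card_units, ← hab]
  have horder : orderOf ζ = a * b := by
    rw [orderOf_eq_card_of_forall_mem_zpowers hζ, Nat.card_eq_fintype_card, hcard]
  have hζeq : ∀ s1 t1 : ℕ, s1 ≡ t1 [MOD a * b] → (ζ : Fˣ) ^ s1 = ζ ^ t1 := by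
    intro s1 t1 h
    rw [pow_eq_pow_iff_modEq, horder]
    exact h
  have hζinj : ∀ s1 t1 : ℕ, (ζ : Fˣ) ^ s1 = ζ ^ t1 → s1 ≡ t1 [MOD a * b] := by
    intro s1 t1 h
    rw [← horder]
    exact pow_eq_pow_iff_modEq.mp h
  have hneg : ((-1 : Fˣ)) ^ (a * b) = 1 := by rw [← hcard]; exact pow_card_eq_one
  have hexists : ∀ a' b' : ℕ, 0 < a' → 0 < b' → Nat.Coprime a' b' →
      ∃ e t : ℕ, a' * e = 1 + b' * t := by
    intro a' b' ha' hb' hcop'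
    by_cases hb1 : b' = 1
    · subst hb1; exact ⟨1, a' - 1, by omega⟩
    · obtain ⟨e, he⟩ := Nat.exists_mul_mod_eq_one_of_coprime hcop' (by omega)
      refine ⟨e, a' * e / b', ?_⟩
      have hdm := Nat.div_add_mod (a' * e) b'
      omega
  obtain ⟨e, t, hae⟩ := hexists a b ha hb hcop
  obtain ⟨e2, t2, hbe⟩ := hexists b a hb ha hcop.symm
  have hCRT : ∀ c : ℕ, ∃ m nn : ℕ, m < b ∧ nn < a ∧ c ≡ a * m + b * nn [MOD a * b] := by
    intro c
    refine ⟨(c * e) % b, (c * e2) % a, Nat.mod_lt _ hb, Nat.mod_lt _ ha, ?_⟩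
    have h1 : a * ((c * e) % b) + b * ((c * e2) % a) ≡ c [MOD a] := by
      calc a * ((c * e) % b) + b * ((c * e2) % a)
          ≡ 0 + b * (c * e2) [MOD a] :=
            Nat.ModEq.add ((Nat.modEq_zero_iff_dvd).mpr ⟨(c * e) % b, rfl⟩)
              (Nat.ModEq.mul_left b (Nat.mod_modEq _ a))
        _ = c + a * (c * t2) := by
            rw [zero_add, show b * (c * e2) = c * (b * e2) by ring, hbe]; ring
        _ ≡ c + 0 [MOD a] :=
            Nat.ModEq.add (Nat.ModEq.refl c) ((Nat.modEq_zero_iff_dvd).mpr ⟨c * t2, rfl⟩)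
        _ = c := add_zero c
    have h2 : a * ((c * e) % b) + b * ((c * e2) % a) ≡ c [MOD b] := by
      calc a * ((c * e) % b) + b * ((c * e2) % a)
          ≡ a * (c * e) + 0 [MOD b] :=
            Nat.ModEq.add (Nat.ModEq.mul_left a (Nat.mod_modEq _ b))
              ((Nat.modEq_zero_iff_dvd).mpr ⟨(c * e2) % a, rfl⟩)
        _ = c + b * (c * t) := by
            rw [add_zero, show a * (c * e) = c * (a * e) by ring, hae]; ring
        _ ≡ c + 0 [MOD b] :=
            Nat.ModEq.add (Nat.ModEq.refl c) ((Nat.modEq_zero_iff_dvd).mpr ⟨c * t, rfl⟩)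
        _ = c := add_zero c
    exact (Nat.modEq_and_modEq_iff_modEq_mul hcop).mp ⟨h1.symm, h2.symm⟩
  have hfkey : ∀ m nn : ℕ, ((ζ : Fˣ) ^ (a * m + b * nn)) ^ (a * e) = ζ ^ (a * m) := by
    intro m nn
    rw [← pow_mul]
    apply hζeq
    have heq : (a * m + b * nn) * (a * e) = a * m + (a * b) * (m * t + nn * e) := by
      calc (a * m + b * nn) * (a * e)
          = a * m * (a * e) + (a * b) * (nn * e) := by ring
        _ = a * m * (1 + b * t) + (a * b) * (nn * e) := by rw [hae]
        _ = a * m + (a * b) * (m * t + nn * e) := by ring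
    rw [heq]
    calc a * m + (a * b) * (m * t + nn * e)
        ≡ a * m + 0 [MOD a * b] :=
          Nat.ModEq.add (Nat.ModEq.refl _) ((Nat.modEq_zero_iff_dvd).mpr ⟨_, rfl⟩)
      _ = a * m := add_zero _
  -- the `F_b`-component extractor
  set fα : GLn F n → Fˣ := fun u =>
    (if h : (u : Matrix (Fin n) (Fin n) F) i j = 0 then 1
      else Units.mk0 _ h) ^ (a * e) with hfα
  set hbD : Fˣ → GLn F n := fun z =>
    SL2Aux.dUu (fun p => if p = i then z else if p = j then (-1) ^ (b - 1) * z⁻¹ else 1)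
    with hhbD
  have hbDval : ∀ z : Fˣ, ((hbD z : GLn F n) : Matrix (Fin n) (Fin n) F)
      = hmat F b i j (z : F) := by
    intro z
    simp only [hhbD]
    rw [SL2Aux.dUu_val]
    unfold hmat
    refine congrArg Matrix.diagonal (funext fun p => ?_)
    by_cases hp : p = i
    · rw [if_pos hp, if_pos hp]
    · rw [if_neg hp, if_neg hp]
      by_cases hp2 : p = j
      · rw [if_pos hp2, if_pos hp2, Units.val_mul, Units.val_pow_eq_pow_val,
          Units.val_neg, Units.val_one, Units.val_inv_eq_inv_val]
      · rw [if_neg hp2, if_neg hp2, Units.val_one]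
  have hfval : ∀ (u : GLn F n) (m nn : ℕ),
      (u : Matrix (Fin n) (Fin n) F) i j = (ζ : F) ^ (a * m + b * nn) →
      fα u = ζ ^ (a * m) := by
    intro u m nn hx
    have hx' : (u : Matrix (Fin n) (Fin n) F) i j = ((ζ ^ (a * m + b * nn) : Fˣ) : F) := by
      rw [hx, Units.val_pow_eq_pow_val]
    have h0 : (u : Matrix (Fin n) (Fin n) F) i j ≠ 0 := by
      rw [hx']; exact Units.ne_zero _
    rw [hfα]
    dsimp only
    rw [dif_neg h0]
    have hmk : Units.mk0 ((u : Matrix (Fin n) (Fin n) F) i j) h0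
        = ζ ^ (a * m + b * nn) := Units.ext hx'
    rw [hmk]
    exact hfkey m nn
  -- Part 1
  have part1 : ∀ u : GLn F n, u ∈ Uset F n → (∃ v ∈ Uset F n, s * u * s = w0 * v * w0) →
      ∀ c m nn : ℕ, (u : Matrix (Fin n) (Fin n) F) i j = (ζ : F) ^ c →
        c = a * m + b * nn → m < b → nn < a →
        ∃ u1 ∈ Uset F n, ∃ u2 ∈ Uset F n, ∃ hA ∈ Haset F n a, ∃ hB : GLn F n,
          (hB : Matrix (Fin n) (Fin n) F) = hmat F b i j ((ζ : F) ^ (a * m)) ∧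
          s * u * s = u1 * s * hB * hA * u2 := by
    intro u hu hD c m nn hx hc hm hnn
    set xu : Fˣ := ζ ^ c with hxu
    set αu : Fˣ := ζ ^ (a * m) with hαu
    set βu : Fˣ := ζ ^ (b * nn) with hβu
    have hxαβ : xu = αu * βu := by rw [hxu, hαu, hβu, ← pow_add, hc]
    set y : F := ((xu⁻¹ : Fˣ) : F) with hy
    have hxy : ((xu : Fˣ) : F) * y = 1 := by
      rw [hy, ← Units.val_mul, mul_inv_cancel, Units.val_one]
    set u1 : GLn F n := SL2Aux.uEu i j hij' y with hu1
    set dA : Fin n → Fˣ := fun p =>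
      if p = i then βu else if p = j then (-1) ^ b * βu⁻¹ else 1 with hdA
    have hβa : βu ^ a = 1 := by
      rw [hβu, ← pow_mul]
      have : (ζ : Fˣ) ^ (b * nn * a) = ζ ^ 0 := by
        apply hζeq
        exact (Nat.modEq_zero_iff_dvd).mpr ⟨nn, by ring⟩
      rw [this, pow_zero]
    have hdAa : ∀ p, dA p ^ a = 1 := by
      intro p
      simp only [hdA]
      by_cases hp : p = i
      · rw [if_pos hp]
        exact hβa
      · rw [if_neg hp]
        by_cases hp2 : p = j
        · rw [if_pos hp2, mul_pow, ← pow_mul, inv_pow, hβa, inv_one, mul_one,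
            show b * a = a * b by ring, hneg]
        · rw [if_neg hp2, one_pow]
    have hAmem : SL2Aux.dUu dA ∈ Haset F n a := by
      constructor
      · intro p q hpq
        rw [SL2Aux.dUu_val]
        exact Matrix.diagonal_apply_ne _ hpq
      · intro p
        rw [SL2Aux.dUu_val, Matrix.diagonal_apply_eq, ← Units.val_pow_eq_pow_val,
          hdAa p, Units.val_one]
    refine ⟨u1, hmemU y, u1, hmemU y, SL2Aux.dUu dA, hAmem, hbD αu, ?_, ?_⟩
    · rw [hbDval, hαu, Units.val_pow_eq_pow_val]
    · apply Units.ext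
      have hLHS : ((s * u * s : GLn F n) : Matrix (Fin n) (Fin n) F)
          = SL2Aux.uE j i ((xu : Fˣ) : F) := by
        rw [hsus u, hnormal u hu hD]
        have hxx : (u : Matrix (Fin n) (Fin n) F) i j = ((xu : Fˣ) : F) := by
          rw [hx, hxu, Units.val_pow_eq_pow_val]
        rw [hxx]
        exact SL2Aux.uE_submatrix i j j i σ (Equiv.swap_apply_right i j)
          (Equiv.swap_apply_left i j) ((xu : Fˣ) : F)
      rw [hLHS]
      have hdiag : ((hbD αu : GLn F n) : Matrix (Fin n) (Fin n) F) *
          ((SL2Aux.dUu dA : GLn F n) : Matrix (Fin n) (Fin n) F)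
          = Matrix.diagonal (fun p => if p = i then ((xu : Fˣ) : F)
              else if p = j then -y else (1 : F)) := by
        simp only [hhbD, hdA]
        rw [SL2Aux.dUu_val, SL2Aux.dUu_val, Matrix.diagonal_mul_diagonal]
        refine congrArg Matrix.diagonal (funext fun p => ?_)
        by_cases hp : p = i
        · rw [if_pos hp, if_pos hp, if_pos hp, ← Units.val_mul, ← hxαβ]
        · rw [if_neg hp, if_neg hp, if_neg hp]
          by_cases hp2 : p = j
          · rw [if_pos hp2, if_pos hp2, if_pos hp2]
            rw [← Units.val_mul]
            have : ((-1 : Fˣ)) ^ (b - 1) * αu⁻¹ * ((-1) ^ b * βu⁻¹) = -xu⁻¹ := by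
              have hodd : Odd (b - 1 + b) := ⟨b - 1, by omega⟩
              calc ((-1 : Fˣ)) ^ (b - 1) * αu⁻¹ * ((-1) ^ b * βu⁻¹)
                  = ((-1 : Fˣ)) ^ (b - 1 + b) * (αu * βu)⁻¹ := by
                    rw [pow_add, mul_inv]
                    exact mul_mul_mul_comm _ _ _ _
                _ = -xu⁻¹ := by
                    rw [hodd.neg_one_pow, hxαβ]
                    exact neg_one_mul _
            rw [this, hy, Units.val_neg]
          · rw [if_neg hp2, if_neg hp2, if_neg hp2, Units.val_one, one_mul]
      show SL2Aux.uE j i ((xu : Fˣ) : F)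
          = ((u1 * s * hbD αu * SL2Aux.dUu dA * u1 : GLn F n) : Matrix (Fin n) (Fin n) F)
      rw [Units.val_mul, Units.val_mul, Units.val_mul, Units.val_mul]
      rw [mul_assoc (((u1 : GLn F n) : Matrix (Fin n) (Fin n) F)
        * ((s : GLn F n) : Matrix (Fin n) (Fin n) F))]
      rw [hdiag, hu1, SL2Aux.uEu_val, hsval]
      exact (SL2Aux.main_matrix i j hij' ((xu : Fˣ) : F) y hxy).symm
  -- powers of ζ as a function giving the class decomposition
  have hdlog : ∀ x : Fˣ, ∃ c : ℕ, ζ ^ c = x := by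
    intro x
    exact (Submonoid.mem_powers_iff x ζ).mp (mem_powers_iff_mem_zpowers.mpr (hζ x))
  have hdecomp : ∀ u : GLn F n, u ∈ Uset F n →
      (∃ v ∈ Uset F n, s * u * s = w0 * v * w0) → u ≠ 1 →
      ∃ m nn : ℕ, m < b ∧ nn < a ∧
        (u : Matrix (Fin n) (Fin n) F) i j = (ζ : F) ^ (a * m + b * nn) ∧
        fα u = ζ ^ (a * m) := by
    intro u hu hD hne
    have hx0 : (u : Matrix (Fin n) (Fin n) F) i j ≠ 0 := by
      intro h0
      apply hne
      apply Units.ext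
      rw [hnormal u hu hD, h0, SL2Aux.uE_zero, Units.val_one]
    obtain ⟨c, hcval⟩ := hdlog (Units.mk0 _ hx0)
    obtain ⟨m, nn, hm, hnn, hmod⟩ := hCRT c
    have hζc : (ζ : Fˣ) ^ c = ζ ^ (a * m + b * nn) := hζeq _ _ hmod
    have hxval : (u : Matrix (Fin n) (Fin n) F) i j = (ζ : F) ^ (a * m + b * nn) := by
      have h1 : (Units.mk0 ((u : Matrix (Fin n) (Fin n) F) i j) hx0 : Fˣ)
          = ζ ^ (a * m + b * nn) := by rw [← hcval, hζc]
      have h2 := congrArg Units.val h1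
      rw [Units.val_pow_eq_pow_val] at h2
      exact h2
    exact ⟨m, nn, hm, hnn, hxval, hfval u m nn hxval⟩
  have hbinj : ∀ z z' : Fˣ, hbD z = hbD z' → z = z' := by
    intro z z' h
    have h1 := congrArg (fun g : GLn F n => (g : Matrix (Fin n) (Fin n) F) i i) h
    simp only [hbDval] at h1
    apply Units.ext
    simpa [hmat, Matrix.diagonal_apply_eq] using h1
  set hbOf' : GLn F n → GLn F n := fun u => hbD (fα u) with hhbOf'
  have hbOf'_eq : ∀ u, hbOf' u = hbD (fα u) := fun _ => rfl
  refine ⟨part1, hbOf', ?_, ?_, ?_⟩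
  · -- bullet 1
    intro u hu hD hne
    obtain ⟨m, nn, hm, hnn, hxval, hfu⟩ := hdecomp u hu hD hne
    simp only [hbOf'_eq]
    constructor
    · refine ⟨m, nn, hm, hnn, hxval, ?_⟩
      rw [hbDval, hfu, Units.val_pow_eq_pow_val]
    · obtain ⟨u1, hu1m, u2, hu2m, hA, hAm, hB, hBval, hBeq⟩ :=
        part1 u hu hD (a * m + b * nn) m nn hxval rfl hm hnn
      have hBB : hB = hbD (fα u) := by
        apply Units.ext
        rw [hBval, hbDval, hfu, Units.val_pow_eq_pow_val]
      exact ⟨u1, hu1m, u2, hu2m, hA, hAm, by rw [← hBB]; exact hBeq⟩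
  · -- bullet 2: equivalence
    exact ⟨fun _ => rfl, fun h => h.symm, fun h1 h2 => h1.trans h2⟩
  · -- bullet 3: counting
    intro u hD hne
    simp only [hbOf'_eq]
    obtain ⟨m, nn, hm, hnn, hxval, hfu⟩ := hdecomp u hD.1 hD.2 hne
    have hset : {u' : GLn F n |
        (u' ∈ Uset F n ∧ ∃ v ∈ Uset F n, s * u' * s = w0 * v * w0) ∧ u' ≠ 1 ∧
          hbD (fα u') = hbD (fα u)}
        = (fun nn' : ℕ => SL2Aux.uEu i j hij' ((ζ : F) ^ (a * m + b * nn')))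
            '' ↑(Finset.range a) := by
      ext u'
      constructor
      · rintro ⟨hD', hne', hb'⟩
        obtain ⟨m', nn', hm', hnn', hxval', hfu'⟩ := hdecomp u' hD'.1 hD'.2 hne'
        have hff : fα u' = fα u := hbinj _ _ hb'
        have hmm : m' = m := by
          have h1 : (ζ : Fˣ) ^ (a * m') = ζ ^ (a * m) := by
            rw [← hfu', ← hfu, hff]
          have h2 := hζinj _ _ h1
          have h3 : m' ≡ m [MOD b] := Nat.ModEq.mul_left_cancel' ha.ne' h2
          have h4 : m' % b = m % b := h3
          rw [Nat.mod_eq_of_lt hm', Nat.mod_eq_of_lt hm] at h4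
          exact h4
        refine ⟨nn', Finset.mem_coe.mpr (Finset.mem_range.mpr hnn'), ?_⟩
        apply Units.ext
        show SL2Aux.uE i j ((ζ : F) ^ (a * m + b * nn'))
            = (u' : Matrix (Fin n) (Fin n) F)
        rw [hnormal u' hD'.1 hD'.2, hxval', hmm]
      · rintro ⟨nn', hnn', hEqq⟩
        have hnn'a : nn' < a := Finset.mem_range.mp (Finset.mem_coe.mp hnn')
        have hval' : ((SL2Aux.uEu i j hij' ((ζ : F) ^ (a * m + b * nn')) : GLn F n) :
            Matrix (Fin n) (Fin n) F) i j = (ζ : F) ^ (a * m + b * nn') := by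
          rw [SL2Aux.uEu_val, SL2Aux.uE_apply, if_neg hij', if_pos ⟨rfl, rfl⟩, zero_add]
        have hz0 : ((ζ : F) ^ (a * m + b * nn')) ≠ 0 :=
          pow_ne_zero _ (Units.ne_zero ζ)
        have hmem3 : SL2Aux.uEu i j hij' ((ζ : F) ^ (a * m + b * nn')) ∈
            {u' : GLn F n | (u' ∈ Uset F n ∧ ∃ v ∈ Uset F n, s * u' * s = w0 * v * w0) ∧
              u' ≠ 1 ∧ hbD (fα u') = hbD (fα u)} := by
          refine ⟨⟨hmemU _, hmemD _⟩, ?_, ?_⟩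
          · intro h1
            apply hz0
            rw [← hval', h1, Units.val_one, Matrix.one_apply_ne hij']
          · have hff' : fα (SL2Aux.uEu i j hij' ((ζ : F) ^ (a * m + b * nn')))
                = ζ ^ (a * m) := hfval _ m nn' hval'
            rw [hff', ← hfu]
        rw [← hEqq]
        exact hmem3
    rw [hset]
    rw [Set.ncard_image_of_injOn, Set.ncard_coe_finset, Finset.card_range]
    intro n1 _ n2 _ hEq
    have h1 := congrArg
      (fun g : GLn F n => (g : Matrix (Fin n) (Fin n) F) i j) hEq
    simp only [SL2Aux.uEu_val, SL2Aux.uE_apply, if_neg hij', if_pos (⟨rfl, rfl⟩ :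
      i = i ∧ j = j), zero_add] at h1
    have h2 : (ζ : Fˣ) ^ (a * m + b * n1) = ζ ^ (a * m + b * n2) := by
      apply Units.ext
      rw [Units.val_pow_eq_pow_val, Units.val_pow_eq_pow_val]
      exact h1
    have h3 := hζinj _ _ h2
    have h4 : b * n1 ≡ b * n2 [MOD a * b] := Nat.ModEq.add_left_cancel' _ h3
    rw [show a * b = b * a by ring] at h4
    have h5 : n1 ≡ n2 [MOD a] := Nat.ModEq.mul_left_cancel' hb.ne' h4
    have h6 : n1 % a = n2 % a := h5
    rw [Nat.mod_eq_of_lt (Finset.mem_range.mp ‹n1 ∈ ↑(Finset.range a)›),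
      Nat.mod_eq_of_lt (Finset.mem_range.mp ‹n2 ∈ ↑(Finset.range a)›)] at h6
    exact h6
end
end

section
/- For every reflection t ∈ T of W, the subset X_t of H_b is closed under taking inverses. Moreover, if t_1, ..., t_r, t_{r+1} are reflections in T, then the product of subsets satisfies X_{t_1} ⋯ X_{t_r} X_{t_{r+1}} = X_{t_1} ⋯ X_{t_r} X_{t_1 ⋯ t_r t_{r+1} t_r ⋯ t_1}. -/
noncomputable section

open scoped Pointwise

variable {F : Type} [Field F] {n : ℕ}

lemma eps_sq (b : ℕ) : ((-1 : F) ^ (b-1)) * ((-1 : F) ^ (b-1)) = 1 := by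
  rw [← pow_add]
  exact Even.neg_one_pow ⟨b-1, rfl⟩

lemma eps_pow (b : ℕ) : ((-1 : F) ^ (b-1)) ^ b = 1 := by
  rw [← pow_mul]
  refine Even.neg_one_pow ?_
  rcases Nat.even_or_odd b with h | h
  · exact h.mul_left _
  · rcases h with ⟨c, rfl⟩
    exact Even.mul_right ⟨c, by omega⟩ _

lemma eps_ne (b : ℕ) : ((-1 : F) ^ (b-1)) ≠ 0 := by
  intro h
  have := eps_sq (F := F) b
  rw [h, mul_zero] at this
  exact zero_ne_one this

lemma hmat_inv_mul (b : ℕ) (k l : Fin n) (α : F) (hα : α ≠ 0) :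
    hmat F b k l α * hmat F b k l α⁻¹ = 1 := by
  unfold hmat
  rw [Matrix.diagonal_mul_diagonal, ← Matrix.diagonal_one]
  refine congrArg Matrix.diagonal (funext fun p => ?_)
  have he := eps_sq (F := F) b
  by_cases hk : p = k
  · simp [hk, mul_inv_cancel₀ hα]
  · by_cases hl : p = l
    · simp only [Pi.mul_apply, if_neg hk, if_pos hl, inv_inv, Pi.one_apply]
      field_simp
      rw [sq]; exact he
    · simp [hk, hl]

def hUnit (b : ℕ) (k l : Fin n) (α : F) (hα : α ≠ 0) : GLn F n :=
  ⟨hmat F b k l α, hmat F b k l α⁻¹, hmat_inv_mul b k l α hα, by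
    have := hmat_inv_mul b k l α⁻¹ (inv_ne_zero hα)
    rwa [inv_inv] at this⟩

@[simp] lemma hUnit_val (b : ℕ) (k l : Fin n) (α : F) (hα : α ≠ 0) :
    ((hUnit b k l α hα : GLn F n) : Matrix (Fin n) (Fin n) F) = hmat F b k l α := rfl

@[simp] lemma hUnit_inv_val (b : ℕ) (k l : Fin n) (α : F) (hα : α ≠ 0) :
    (((hUnit b k l α hα)⁻¹ : GLn F n) : Matrix (Fin n) (Fin n) F) = hmat F b k l α⁻¹ := rfl

-- symmetry of hmat
lemma hmat_symm (b : ℕ) {k l : Fin n} (hkl : k ≠ l) (α : F) (hα : α ≠ 0) :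
    hmat F b l k ((-1 : F) ^ (b-1) * α⁻¹) = hmat F b k l α := by
  unfold hmat
  refine congrArg Matrix.diagonal (funext fun p => ?_)
  have he := eps_sq (F := F) b
  by_cases hk : p = k
  · rw [if_pos hk, if_neg (by rw [hk]; exact hkl), if_pos hk]
    rw [mul_inv, inv_inv]
    rw [inv_eq_of_mul_eq_one_left he]
    calc (-1:F)^(b-1) * ((-1:F)^(b-1) * α) = ((-1:F)^(b-1) * (-1:F)^(b-1)) * α := by ring
    _ = α := by rw [he, one_mul]
  · by_cases hl : p = l
    · rw [if_pos hl, if_neg hk, if_pos hl]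
    · rw [if_neg hl, if_neg hk, if_neg hk, if_neg hl]

-- multiplication of "function matrices"
lemma funmat_mul (f g : Fin n → Fin n) (A B : Matrix (Fin n) (Fin n) F)
    (hA : ∀ i j, A i j = if f j = i then 1 else 0)
    (hB : ∀ i j, B i j = if g j = i then 1 else 0) :
    ∀ i j, (A * B) i j = if f (g j) = i then 1 else 0 := by
  intro i j
  rw [Matrix.mul_apply]
  rw [Finset.sum_eq_single (g j)]
  · rw [hA, hB, if_pos rfl, mul_one]
  · intro k _ hk
    rw [hB, if_neg (Ne.symm hk), mul_zero]
  · simp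


-- conjugate of a swap-form by a swap-form
lemma swapF_conj {t s : GLn F n} {k l k' l' : Fin n}
    (ht : ∀ p q, (t : Matrix (Fin n) (Fin n) F) p q = if Equiv.swap k l q = p then 1 else 0)
    (hs : ∀ p q, (s : Matrix (Fin n) (Fin n) F) p q = if Equiv.swap k' l' q = p then 1 else 0) :
    ∀ p q, ((t * s * t : GLn F n) : Matrix (Fin n) (Fin n) F) p q =
      if Equiv.swap (Equiv.swap k l k') (Equiv.swap k l l') q = p then 1 else 0 := by
  intro p q
  have h1 : ∀ i j, ((t * s : GLn F n) : Matrix (Fin n) (Fin n) F) i j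
      = if Equiv.swap k l (Equiv.swap k' l' j) = i then 1 else 0 :=
    funmat_mul _ _ _ _ ht hs
  have h2 : ∀ i j, ((t * s * t : GLn F n) : Matrix (Fin n) (Fin n) F) i j
      = if Equiv.swap k l (Equiv.swap k' l' (Equiv.swap k l j)) = i then 1 else 0 :=
    funmat_mul (fun j => Equiv.swap k l (Equiv.swap k' l' j)) (Equiv.swap k l) _ _ h1 ht
  rw [h2 p q]
  congr 2
  rw [Equiv.swap_apply_apply]
  simp [Equiv.Perm.mul_apply, Equiv.swap_inv]








-- inverse of a permutation matrix
lemma perm_inv_val {w : GLn F n} {σ : Equiv.Perm (Fin n)}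
    (hw : ∀ i j, (w : Matrix (Fin n) (Fin n) F) i j = if σ j = i then 1 else 0) :
    ∀ i j, ((w⁻¹ : GLn F n) : Matrix (Fin n) (Fin n) F) i j = if σ⁻¹ j = i then 1 else 0 := by
  let M : Matrix (Fin n) (Fin n) F := Matrix.of fun i j => if σ⁻¹ j = i then 1 else 0
  have hM : ∀ i j, M i j = if σ⁻¹ j = i then 1 else 0 := fun i j => rfl
  have hwM : (w : Matrix (Fin n) (Fin n) F) * M = 1 := by
    ext i j
    rw [funmat_mul ⇑σ ⇑σ⁻¹ _ _ hw hM i j]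
    simp [Matrix.one_apply, eq_comm]
  have hMw : M * (w : Matrix (Fin n) (Fin n) F) = 1 := by
    ext i j
    rw [funmat_mul ⇑σ⁻¹ ⇑σ _ _ hM hw i j]
    simp [Matrix.one_apply, eq_comm]
  have : w⁻¹ = (⟨M, w, hMw, hwM⟩ : GLn F n) := by
    apply inv_eq_of_mul_eq_one_right
    exact Units.ext hwM
  rw [this]
  exact hM

-- every reflection has swap form
lemma Tset_swapF {t : GLn F n} (ht : t ∈ Tset F n) :
    ∃ k l : Fin n, k ≠ l ∧
      ∀ p q, (t : Matrix (Fin n) (Fin n) F) p q = if Equiv.swap k l q = p then 1 else 0 := by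
  obtain ⟨w, ⟨σ, hw⟩, s, ⟨i, j, hij, hs⟩, rfl⟩ := ht
  refine ⟨σ i, σ j, fun h => by have := σ.injective h; omega, ?_⟩
  have hwi := perm_inv_val hw
  have h1 : ∀ p q, ((w * s : GLn F n) : Matrix (Fin n) (Fin n) F) p q
      = if σ (Equiv.swap i j q) = p then 1 else 0 := funmat_mul _ _ _ _ hw hs
  have h2 : ∀ p q, ((w * s * w⁻¹ : GLn F n) : Matrix (Fin n) (Fin n) F) p q
      = if σ (Equiv.swap i j (σ⁻¹ q)) = p then 1 else 0 :=
    funmat_mul (fun q => σ (Equiv.swap i j q)) ⇑σ⁻¹ _ _ h1 hwi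
  intro p q
  rw [h2 p q]
  congr 2
  rw [Equiv.swap_apply_apply]
  simp [Equiv.Perm.mul_apply]

lemma pow_ne_zero_of_eq_one {b : ℕ} (hb : 0 < b) {α : F} (hα : α ^ b = 1) : α ≠ 0 := by
  intro h
  rw [h, zero_pow hb.ne'] at hα
  exact zero_ne_one hα

lemma XsPair_symm {b : ℕ} (hb : 0 < b) {k l : Fin n} (hkl : k ≠ l) :
    XsPair F b k l = XsPair F b l k := by
  have key : ∀ (k l : Fin n), k ≠ l → XsPair F b k l ⊆ XsPair F b l k := by
    intro k l hkl d ⟨α, hα, hd⟩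
    have hα0 : α ≠ 0 := pow_ne_zero_of_eq_one hb hα
    refine ⟨(-1 : F) ^ (b-1) * α⁻¹, ?_, ?_⟩
    · rw [mul_pow, eps_pow, one_mul, inv_pow, hα, inv_one]
    · rw [hd, ← hmat_symm b hkl α hα0]
  exact le_antisymm (key k l hkl) (key l k hkl.symm)

lemma Xset_eq_XsPair {b : ℕ} (hb : 0 < b) {t : GLn F n} {k l : Fin n} (hkl : k ≠ l)
    (ht : ∀ p q, (t : Matrix (Fin n) (Fin n) F) p q = if Equiv.swap k l q = p then 1 else 0) :
    Xset F n b t = XsPair F b k l := by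
  ext d
  constructor
  · rintro ⟨k₂, l₂, α, hα, hkl₂, ht₂, hd⟩
    -- the two swap forms force equal swaps
    have hsw : ∀ q : Fin n, Equiv.swap k l q = Equiv.swap k₂ l₂ q := by
      intro q
      have h1 := ht (Equiv.swap k₂ l₂ q) q
      rw [ht₂, if_pos rfl] at h1
      by_contra hne
      rw [if_neg hne] at h1
      norm_num at h1
    have hk₂ : Equiv.swap k l k₂ = l₂ := by rw [hsw k₂, Equiv.swap_apply_left]
    by_cases h1 : k₂ = k
    · have h2 : l₂ = l := by rw [← hk₂, h1, Equiv.swap_apply_left]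
      subst h1; subst h2
      exact ⟨α, hα, hd⟩
    · by_cases h2 : k₂ = l
      · have h3 : l₂ = k := by rw [← hk₂, h2, Equiv.swap_apply_right]
        subst h2; subst h3
        rw [XsPair_symm hb hkl]
        exact ⟨α, hα, hd⟩
      · exfalso
        rw [Equiv.swap_apply_of_ne_of_ne h1 h2] at hk₂
        exact hkl₂ hk₂
  · rintro ⟨α, hα, hd⟩
    exact ⟨k, l, α, hα, hkl, ht, hd⟩

lemma hmat_prod (b : ℕ) {a c e : Fin n} (hac : a ≠ c) (hae : a ≠ e) (hce : c ≠ e)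
    (α β : F) (hβ : β ≠ 0) :
    hmat F b a c α * hmat F b a e β = hmat F b a c (α * β) * hmat F b c e β := by
  unfold hmat
  rw [Matrix.diagonal_mul_diagonal, Matrix.diagonal_mul_diagonal]
  refine congrArg Matrix.diagonal (funext fun p => ?_)
  by_cases h1 : p = a
  · subst h1
    simp [if_neg hac, if_neg hae]
  · by_cases h2 : p = c
    · subst h2
      simp only [if_neg h1, if_pos rfl, if_neg hce]
      rw [mul_inv]
      by_cases hα : α = 0
      · simp [hα]
      · field_simp
        simp only [if_true]
        field_simp
    · by_cases h3 : p = e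
      · subst h3
        simp [if_neg h1, if_neg h2]
      · simp [if_neg h1, if_neg h2, if_neg h3]

lemma YY {b : ℕ} (hb : 0 < b) {a c e : Fin n} (hac : a ≠ c) (hae : a ≠ e) (hce : c ≠ e) :
    XsPair F b a c * XsPair F b a e = XsPair F b a c * XsPair F b c e := by
  ext x
  simp only [Set.mem_mul]
  constructor
  · rintro ⟨d₁, ⟨α, hα, h1⟩, d₂, ⟨β, hβ, h2⟩, rfl⟩
    have hα0 := pow_ne_zero_of_eq_one hb hα
    have hβ0 := pow_ne_zero_of_eq_one hb hβ
    refine ⟨hUnit b a c (α*β) (mul_ne_zero hα0 hβ0),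
      ⟨α*β, by rw [mul_pow, hα, hβ, one_mul], rfl⟩,
      hUnit b c e β hβ0, ⟨β, hβ, rfl⟩, ?_⟩
    apply Units.ext
    rw [Units.val_mul, Units.val_mul, hUnit_val, hUnit_val, h1, h2,
      hmat_prod b hac hae hce α β hβ0]
  · rintro ⟨d₁, ⟨α, hα, h1⟩, d₂, ⟨β, hβ, h2⟩, rfl⟩
    have hα0 := pow_ne_zero_of_eq_one hb hα
    have hβ0 := pow_ne_zero_of_eq_one hb hβ
    refine ⟨hUnit b a c (α*β⁻¹) (mul_ne_zero hα0 (inv_ne_zero hβ0)),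
      ⟨α*β⁻¹, by rw [mul_pow, hα, inv_pow, hβ, inv_one, one_mul], rfl⟩,
      hUnit b a e β hβ0, ⟨β, hβ, rfl⟩, ?_⟩
    apply Units.ext
    rw [Units.val_mul, Units.val_mul, hUnit_val, hUnit_val, h1, h2,
      hmat_prod b hac hae hce (α*β⁻¹) β hβ0, inv_mul_cancel_right₀ hβ0]

lemma XsPair_conj {b : ℕ} (hb : 0 < b) {k l k' l' : Fin n} (hkl : k ≠ l) (hkl' : k' ≠ l') :
    XsPair F b k l * XsPair F b k' l' =
    XsPair F b k l * XsPair F b (Equiv.swap k l k') (Equiv.swap k l l') := by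
  by_cases h1 : k' = k
  · subst h1
    rw [Equiv.swap_apply_left]
    by_cases h2 : l' = l
    · subst h2
      rw [Equiv.swap_apply_right, ← XsPair_symm hb hkl]
    · rw [Equiv.swap_apply_of_ne_of_ne (Ne.symm hkl') h2]
      exact YY hb hkl hkl' (fun h => h2 h.symm)
  · by_cases h2 : k' = l
    · subst h2
      rw [Equiv.swap_apply_right]
      by_cases h3 : l' = k
      · subst h3
        rw [Equiv.swap_apply_left, XsPair_symm hb hkl']
      · rw [Equiv.swap_apply_of_ne_of_ne h3 (Ne.symm hkl')]
        rw [XsPair_symm hb hkl]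
        exact YY hb (Ne.symm hkl) hkl' (fun h => h3 h.symm)
    · rw [Equiv.swap_apply_of_ne_of_ne h1 h2]
      by_cases h3 : l' = k
      · rw [h3, Equiv.swap_apply_left, XsPair_symm hb h1, XsPair_symm hb h2]
        exact YY hb hkl (Ne.symm h1) (Ne.symm h2)
      · by_cases h4 : l' = l
        · rw [h4, Equiv.swap_apply_right, XsPair_symm hb h2, XsPair_symm hb h1,
            XsPair_symm hb hkl]
          exact YY hb (Ne.symm hkl) (Ne.symm h2) (Ne.symm h1)
        · rw [Equiv.swap_apply_of_ne_of_ne h3 h4]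

-- diagonal units commute
lemma diag_units_comm {d e : GLn F n}
    (hd : ∃ f : Fin n → F, (d : Matrix (Fin n) (Fin n) F) = Matrix.diagonal f)
    (he : ∃ g : Fin n → F, (e : Matrix (Fin n) (Fin n) F) = Matrix.diagonal g) :
    d * e = e * d := by
  obtain ⟨f, hf⟩ := hd
  obtain ⟨g, hg⟩ := he
  apply Units.ext
  rw [Units.val_mul, Units.val_mul, hf, hg, Matrix.diagonal_mul_diagonal,
    Matrix.diagonal_mul_diagonal]
  exact congrArg Matrix.diagonal (funext fun i => mul_comm (f i) (g i))

lemma Xset_diag {b : ℕ} {t d : GLn F n} (hd : d ∈ Xset F n b t) :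
    ∃ f : Fin n → F, (d : Matrix (Fin n) (Fin n) F) = Matrix.diagonal f := by
  obtain ⟨k, l, α, _, _, _, hdv⟩ := hd
  exact ⟨_, hdv⟩

lemma SetProd_diag {b : ℕ} (L : List (GLn F n)) {d : GLn F n}
    (hd : d ∈ SetProd (L.map (Xset F n b))) :
    ∃ f : Fin n → F, (d : Matrix (Fin n) (Fin n) F) = Matrix.diagonal f := by
  induction L generalizing d with
  | nil =>
    simp only [List.map_nil, SetProd, Set.mem_singleton_iff] at hd
    exact ⟨1, by rw [hd, Units.val_one]; exact Matrix.diagonal_one.symm⟩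
  | cons t L ih =>
    simp only [List.map_cons, SetProd] at hd
    obtain ⟨x, hx, y, hy, rfl⟩ := hd
    obtain ⟨f, hf⟩ := Xset_diag hx
    obtain ⟨g, hg⟩ := ih hy
    exact ⟨fun i => f i * g i, by rw [Units.val_mul, hf, hg, Matrix.diagonal_mul_diagonal]⟩

lemma set_mul_comm {G : Type} [Monoid G] {A B : Set G}
    (h : ∀ a ∈ A, ∀ b ∈ B, a * b = b * a) : A * B = B * A := by
  ext x
  simp only [Set.mem_mul]
  constructor
  · rintro ⟨u, hu, v, hv, rfl⟩
    exact ⟨v, hv, u, hu, (h u hu v hv).symm⟩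
  · rintro ⟨v, hv, u, hu, rfl⟩
    exact ⟨u, hu, v, hv, h u hu v hv⟩

def HSF (t : GLn F n) : Prop :=
  ∃ k l : Fin n, k ≠ l ∧
    ∀ p q, (t : Matrix (Fin n) (Fin n) F) p q = if Equiv.swap k l q = p then 1 else 0

lemma HSF_conj {t s : GLn F n} (ht : HSF t) (hs : HSF s) : HSF (t * s * t) := by
  obtain ⟨k, l, hkl, hswt⟩ := ht
  obtain ⟨k', l', hkl', hsws⟩ := hs
  exact ⟨Equiv.swap k l k', Equiv.swap k l l', (Equiv.swap k l).injective.ne hkl',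
    swapF_conj hswt hsws⟩

lemma HSF_listconj (L : List (GLn F n)) (hL : ∀ t ∈ L, HSF t) {t' : GLn F n} (ht' : HSF t') :
    HSF (L.prod * t' * L.reverse.prod) := by
  induction L with
  | nil => simpa using ht'
  | cons t L ih =>
    have he : (t :: L).prod * t' * (t :: L).reverse.prod
        = t * (L.prod * t' * L.reverse.prod) * t := by
      simp [List.prod_cons, List.reverse_cons, List.prod_append, mul_assoc]
    rw [he]
    exact HSF_conj (hL t List.mem_cons_self) (ih (fun x hx => hL x (List.mem_cons_of_mem _ hx)))

lemma Xstep {b : ℕ} (hb : 0 < b) {t t'' : GLn F n} (ht : HSF t) (ht'' : HSF t'') :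
    Xset F n b t * Xset F n b t'' = Xset F n b t * Xset F n b (t * t'' * t) := by
  obtain ⟨k, l, hkl, hswt⟩ := ht
  obtain ⟨k', l', hkl', hswt''⟩ := ht''
  rw [Xset_eq_XsPair hb hkl hswt, Xset_eq_XsPair hb hkl' hswt'',
    Xset_eq_XsPair hb ((Equiv.swap k l).injective.ne hkl') (swapF_conj hswt hswt'')]
  exact XsPair_conj hb hkl hkl'

lemma prod_rule {b : ℕ} (hb : 0 < b) (L : List (GLn F n)) (hL : ∀ t ∈ L, HSF t)
    {t' : GLn F n} (ht' : HSF t') :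
    SetProd (L.map (Xset F n b)) * Xset F n b t' =
      SetProd (L.map (Xset F n b)) * Xset F n b (L.prod * t' * L.reverse.prod) := by
  induction L with
  | nil => simp
  | cons t L ih =>
    have hLtail : ∀ x ∈ L, HSF x := fun x hx => hL x (List.mem_cons_of_mem _ hx)
    have hT : HSF t := hL t List.mem_cons_self
    have ht'' : HSF (L.prod * t' * L.reverse.prod) := HSF_listconj L hLtail ht'
    have e1 : (t :: L).prod * t' * (t :: L).reverse.prod
        = t * (L.prod * t' * L.reverse.prod) * t := by
      simp [List.prod_cons, List.reverse_cons, List.prod_append, mul_assoc]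
    simp only [List.map_cons, SetProd, e1]
    set P := SetProd (L.map (Xset F n b)) with hP
    have hcomm : ∀ s : GLn F n, Xset F n b s * P = P * Xset F n b s := fun s =>
      set_mul_comm (fun x hx y hy => diag_units_comm (Xset_diag hx) (SetProd_diag L hy))
    set t'' := L.prod * t' * L.reverse.prod with ht''def
    calc Xset F n b t * P * Xset F n b t'
        = Xset F n b t * (P * Xset F n b t') := mul_assoc _ _ _
      _ = Xset F n b t * (P * Xset F n b t'') := by rw [ih hLtail]
      _ = Xset F n b t * P * Xset F n b t'' := (mul_assoc _ _ _).symm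
      _ = P * Xset F n b t * Xset F n b t'' := by rw [hcomm t]
      _ = P * (Xset F n b t * Xset F n b t'') := mul_assoc _ _ _
      _ = P * (Xset F n b t * Xset F n b (t * t'' * t)) := by rw [Xstep hb hT ht'']
      _ = P * Xset F n b t * Xset F n b (t * t'' * t) := (mul_assoc _ _ _).symm
      _ = Xset F n b t * P * Xset F n b (t * t'' * t) := by rw [hcomm t]


/-- For every reflection `t ∈ 𝒯`, the subset `X_t ⊆ H_b` is closed under
taking inverses; and for reflections `t_1, …, t_r, t_{r+1}`,
`X_{t_1} ⋯ X_{t_r} X_{t_{r+1}} = X_{t_1} ⋯ X_{t_r} X_{t_1 ⋯ t_r t_{r+1} t_r ⋯ t_1}`. -/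
theorem Xt_inverse_closed_and_product_rule
    (F : Type) [Field F] [Fintype F] [DecidableEq F] (n a b : ℕ)
    (hn : 0 < n) (ha : 0 < a) (hb : 0 < b)
    (hab : a * b = Fintype.card F - 1) (hcop : Nat.Coprime a b) :
    (∀ t ∈ Tset F n, ∀ d ∈ Xset F n b t, d⁻¹ ∈ Xset F n b t) ∧
    (∀ L : List (GLn F n), ∀ t' : GLn F n,
      (∀ t ∈ L, t ∈ Tset F n) → t' ∈ Tset F n →
      SetProd (L.map (Xset F n b)) * Xset F n b t' =
        SetProd (L.map (Xset F n b)) * Xset F n b (L.prod * t' * L.reverse.prod)) := by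
  
  constructor
  · intro t ht d hd
    obtain ⟨k, l, hkl, hsw⟩ := Tset_swapF ht
    rw [Xset_eq_XsPair hb hkl hsw] at hd ⊢
    obtain ⟨α, hα, hdv⟩ := hd
    have hα0 := pow_ne_zero_of_eq_one hb hα
    have hde : d = hUnit b k l α hα0 := Units.ext hdv
    refine ⟨α⁻¹, by rw [inv_pow, hα, inv_one], ?_⟩
    rw [hde]
    exact hUnit_inv_val b k l α hα0
  · intro L t' hLT ht'T
    have hL : ∀ t ∈ L, HSF t := fun t ht => Tset_swapF (hLT t ht)
    exact prod_rule hb L hL (Tset_swapF ht'T)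
end
end

section
/- With X_0 = { h_1(ζ^{ai}) : 0 ≤ i ≤ b-1 }, the multiplication mapping X_0 × X_{s_1} × ⋯ × X_{s_{n-1}} → H_b, (d_0, d_1, ..., d_{n-1}) ↦ d_0 d_1 ⋯ d_{n-1}, is a bijection. -/
noncomputable section

open scoped Pointwise

/-- `X_0 = { h_1(ζ^{a i}) : 0 ≤ i ≤ b - 1 }`. -/
def X0set (F : Type) [Field F] (n a b : ℕ) (hn : 0 < n) (ζ : Fˣ) : Set (GLn F n) :=
  {d | ∃ i : ℕ, i < b ∧ (d : Matrix (Fin n) (Fin n) F) =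
    Matrix.diagonal fun p => if p = (⟨0, hn⟩ : Fin n) then (ζ : F) ^ (a * i) else 1}

/-- The domain `X_0 × X_{s_1} × ⋯ × X_{s_{n-1}}` of the multiplication map. -/
def MultDom (F : Type) [Field F] (n a b : ℕ) (hn : 0 < n) (ζ : Fˣ) : Type :=
  ↥(X0set F n a b hn ζ) ×
    ∀ i : Fin (n - 1), ↥(XsPair F b (⟨(i : ℕ), by have := i.isLt; omega⟩ : Fin n)
      (⟨(i : ℕ) + 1, by have := i.isLt; omega⟩ : Fin n))

/-- The multiplication mapping `(d₀, d₁, …, d_{n-1}) ↦ d₀ d₁ ⋯ d_{n-1}`. -/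
def multMap (F : Type) [Field F] (n a b : ℕ) (hn : 0 < n) (ζ : Fˣ)
    (p : MultDom F n a b hn ζ) : GLn F n :=
  (p.1 : GLn F n) * (List.ofFn fun i => (p.2 i : GLn F n)).prod

/-! ### Auxiliary lemmas -/

lemma negOnePowPred_pow {F : Type} [Field F] (b : ℕ) : ((-1 : F) ^ (b - 1)) ^ b = 1 := by
  rw [← pow_mul]
  match b with
  | 0 => simp
  | Nat.succ b => exact (Nat.succ_sub_one b ▸ Nat.even_mul_succ_self b).neg_one_pow

lemma negOnePowPred_ne_zero {F : Type} [Field F] (b : ℕ) : ((-1 : F) ^ (b - 1)) ≠ 0 :=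
  pow_ne_zero _ (neg_ne_zero.mpr one_ne_zero)

lemma listProdDiag {F : Type} [Field F] {n : ℕ} :
    ∀ (m : ℕ) (fs : Fin m → (Fin n → F)),
      (List.ofFn fun i => Matrix.diagonal (fs i)).prod
        = Matrix.diagonal (fun p => ∏ i, fs i p)
  | 0, fs => by simp
  | (m + 1), fs => by
    rw [List.ofFn_succ, List.prod_cons, listProdDiag m (fun i => fs i.succ),
      Matrix.diagonal_mul_diagonal]
    exact congrArg Matrix.diagonal
      (funext fun p => (Fin.prod_univ_succ (fun i => fs i p)).symm)

lemma unitsListProd {F : Type} [Field F] {n : ℕ} (l : List (GL (Fin n) F)) :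
    (l.prod : Matrix (Fin n) (Fin n) F) = (l.map Units.val).prod := by
  exact map_list_prod (Units.coeHom (Matrix (Fin n) (Fin n) F)) l

/-- diagonal entry function of the product -/
def gfun (F : Type) [Field F] (n a b : ℕ) (ζ : Fˣ) (i0 : ℕ)
    (α : Fin (n - 1) → F) : Fin n → F :=
  fun q =>
    (if (q : ℕ) = 0 then (ζ : F) ^ (a * i0) else 1) *
      ((if h : (q : ℕ) < n - 1 then α ⟨(q : ℕ), h⟩ else 1) *
       (if h : 0 < (q : ℕ) then
          (-1 : F) ^ (b - 1) * (α ⟨(q : ℕ) - 1, by have := q.isLt; omega⟩)⁻¹ else 1))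

lemma prodEval {F : Type} [Field F] {n b : ℕ} (α : Fin (n - 1) → F) (q : Fin n) :
    (∏ i : Fin (n - 1),
      (if q = (⟨(i : ℕ), by have := i.isLt; omega⟩ : Fin n) then α i
       else if q = (⟨(i : ℕ) + 1, by have := i.isLt; omega⟩ : Fin n) then
         (-1 : F) ^ (b - 1) * (α i)⁻¹ else 1))
    = (if h : (q : ℕ) < n - 1 then α ⟨(q : ℕ), h⟩ else 1) *
      (if h : 0 < (q : ℕ) then
        (-1 : F) ^ (b - 1) * (α ⟨(q : ℕ) - 1, by have := q.isLt; omega⟩)⁻¹ else 1) := by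
  have hfac : ∀ i : Fin (n - 1),
      (if q = (⟨(i : ℕ), by have := i.isLt; omega⟩ : Fin n) then α i
       else if q = (⟨(i : ℕ) + 1, by have := i.isLt; omega⟩ : Fin n) then
         (-1 : F) ^ (b - 1) * (α i)⁻¹ else 1)
      = (if (q : ℕ) = (i : ℕ) then α i else 1) *
        (if (q : ℕ) = (i : ℕ) + 1 then (-1 : F) ^ (b - 1) * (α i)⁻¹ else 1) := by
    intro i
    simp only [Fin.ext_iff]
    split_ifs with h1 h2 h2 <;> first | omega | ring
  rw [Finset.prod_congr rfl (fun i _ => hfac i), Finset.prod_mul_distrib]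
  congr 1
  · by_cases hq : (q : ℕ) < n - 1
    · rw [dif_pos hq, Finset.prod_eq_single (⟨(q : ℕ), hq⟩ : Fin (n - 1))]
      · simp
      · intro j _ hj
        rw [if_neg]
        intro hc
        exact hj (Fin.ext hc.symm)
      · intro h; exact absurd (Finset.mem_univ _) h
    · rw [dif_neg hq, Finset.prod_eq_one]
      intro j _
      rw [if_neg]
      have := j.isLt; omega
  · by_cases hq : 0 < (q : ℕ)
    · have hlt : (q : ℕ) - 1 < n - 1 := by have := q.isLt; omega
      rw [dif_pos hq, Finset.prod_eq_single (⟨(q : ℕ) - 1, hlt⟩ : Fin (n - 1))]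
      · rw [if_pos (by simp; omega)]
      · intro j _ hj
        rw [if_neg]
        intro hc
        exact hj (Fin.ext (by simp; omega))
      · intro h; exact absurd (Finset.mem_univ _) h
    · rw [dif_neg hq, Finset.prod_eq_one]
      intro j _
      rw [if_neg]
      omega

/-- Master formula: the matrix of `multMap` is the diagonal matrix of `gfun`. -/
lemma multMap_val (F : Type) [Field F] (n a b : ℕ) (hn : 0 < n) (ζ : Fˣ)
    (p : MultDom F n a b hn ζ) (i0 : ℕ) (α : Fin (n - 1) → F)
    (h0 : ((p.1 : GLn F n) : Matrix (Fin n) (Fin n) F) =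
      Matrix.diagonal fun q => if q = (⟨0, hn⟩ : Fin n) then (ζ : F) ^ (a * i0) else 1)
    (hα : ∀ i : Fin (n - 1), ((p.2 i : GLn F n) : Matrix (Fin n) (Fin n) F) =
      hmat F b (⟨(i : ℕ), by have := i.isLt; omega⟩ : Fin n)
        (⟨(i : ℕ) + 1, by have := i.isLt; omega⟩ : Fin n) (α i)) :
    ((multMap F n a b hn ζ p) : Matrix (Fin n) (Fin n) F)
      = Matrix.diagonal (gfun F n a b ζ i0 α) := by
  have hlist : ((List.ofFn fun i => (p.2 i : GLn F n)).prod : Matrix (Fin n) (Fin n) F)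
      = Matrix.diagonal (fun q => ∏ i : Fin (n - 1),
          (if q = (⟨(i : ℕ), by have := i.isLt; omega⟩ : Fin n) then α i
           else if q = (⟨(i : ℕ) + 1, by have := i.isLt; omega⟩ : Fin n) then
             (-1 : F) ^ (b - 1) * (α i)⁻¹ else 1)) := by
    rw [unitsListProd, List.map_ofFn]
    have : (Units.val ∘ fun i => (p.2 i : GLn F n))
        = fun i : Fin (n - 1) => Matrix.diagonal (fun q : Fin n =>
            (if q = (⟨(i : ℕ), by have := i.isLt; omega⟩ : Fin n) then α i
             else if q = (⟨(i : ℕ) + 1, by have := i.isLt; omega⟩ : Fin n) then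
               (-1 : F) ^ (b - 1) * (α i)⁻¹ else 1)) := by
      funext i
      exact hα i
    rw [this, listProdDiag]
  show ((p.1 : GLn F n).val * ((List.ofFn fun i => (p.2 i : GLn F n)).prod).val)
      = Matrix.diagonal (gfun F n a b ζ i0 α)
  rw [hlist, h0, Matrix.diagonal_mul_diagonal]
  refine congrArg Matrix.diagonal (funext fun q => ?_)
  rw [prodEval]
  unfold gfun
  congr 1
  simp [Fin.ext_iff]

section gfunEval

variable {F : Type} [Field F] {n a b : ℕ} {ζ : Fˣ} {i0 : ℕ} {α : Fin (n - 1) → F}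

lemma gfun_zero_one (q : Fin n) (hq : (q : ℕ) = 0) (h1 : n = 1) :
    gfun F n a b ζ i0 α q = (ζ : F) ^ (a * i0) := by
  unfold gfun
  rw [if_pos hq, dif_neg (by omega), dif_neg (by omega), one_mul, mul_one]

lemma gfun_zero (q : Fin n) (hq : (q : ℕ) = 0) (h2 : 2 ≤ n) :
    gfun F n a b ζ i0 α q = (ζ : F) ^ (a * i0) * α ⟨0, by omega⟩ := by
  unfold gfun
  rw [if_pos hq, dif_pos (by omega : (q : ℕ) < n - 1), dif_neg (by omega), mul_one]
  congr 2
  exact Fin.ext (by simpa using hq)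

lemma gfun_mid (q : Fin n) (h0 : 0 < (q : ℕ)) (hlt : (q : ℕ) < n - 1) :
    gfun F n a b ζ i0 α q = α ⟨(q : ℕ), hlt⟩ *
      ((-1 : F) ^ (b - 1) * (α ⟨(q : ℕ) - 1, by omega⟩)⁻¹) := by
  unfold gfun
  rw [if_neg (by omega), dif_pos hlt, dif_pos h0, one_mul]

lemma gfun_last (q : Fin n) (hq : (q : ℕ) = n - 1) (h2 : 2 ≤ n) :
    gfun F n a b ζ i0 α q
      = (-1 : F) ^ (b - 1) * (α ⟨n - 2, by omega⟩)⁻¹ := by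
  unfold gfun
  rw [if_neg (by omega), dif_neg (by omega), dif_pos (by omega), one_mul, one_mul]
  have he : (⟨(q : ℕ) - 1, by omega⟩ : Fin (n - 1)) = ⟨n - 2, by omega⟩ := by
    simp only [Fin.mk.injEq]; omega
  rw [he]

end gfunEval

section zeta

variable {F : Type} [Field F] [Fintype F] [DecidableEq F] {a b : ℕ} {ζ : Fˣ}

lemma zeta_order (hab : a * b = Fintype.card F - 1)
    (hζ : ∀ x : Fˣ, x ∈ Subgroup.zpowers ζ) : orderOf ζ = a * b := by
  rw [orderOf_eq_card_of_forall_mem_zpowers hζ, Nat.card_eq_fintype_card, Fintype.card_units, hab]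

lemma zeta_ab (hab : a * b = Fintype.card F - 1)
    (hζ : ∀ x : Fˣ, x ∈ Subgroup.zpowers ζ) : ζ ^ (a * b) = 1 := by
  rw [← zeta_order hab hζ]
  exact pow_orderOf_eq_one ζ

lemma exists_i0 (ha : 0 < a) (hb : 0 < b) (hab : a * b = Fintype.card F - 1)
    (hζ : ∀ x : Fˣ, x ∈ Subgroup.zpowers ζ) (u : F) (hub : u ^ b = 1) :
    ∃ i0 : ℕ, i0 < b ∧ u = (ζ : F) ^ (a * i0) := by
  have hu0 : u ≠ 0 := by
    intro h
    rw [h, zero_pow hb.ne'] at hub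
    exact zero_ne_one hub
  set v : Fˣ := Units.mk0 u hu0 with hv
  obtain ⟨m, hm0⟩ := hζ v
  replace hm : ζ ^ m = v := hm0
  have hvb : v ^ b = 1 := by
    ext
    push_cast
    simpa [hv] using hub
  have hzmb : ζ ^ (m * (b : ℤ)) = 1 := by
    rw [zpow_mul, hm, zpow_natCast, hvb]
  have hdvd : ((a * b : ℕ) : ℤ) ∣ m * (b : ℤ) := by
    rw [← zeta_order hab hζ]
    exact orderOf_dvd_iff_zpow_eq_one.mpr hzmb
  obtain ⟨k, hk⟩ := hdvd
  have hm' : m = (a : ℤ) * k := by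
    have hb0 : (b : ℤ) ≠ 0 := by exact_mod_cast hb.ne'
    apply mul_right_cancel₀ hb0
    push_cast at hk ⊢
    linarith [hk]
  set r : ℤ := k % (b : ℤ) with hr
  have hr0 : 0 ≤ r := Int.emod_nonneg k (by exact_mod_cast hb.ne')
  have hrb : r < (b : ℤ) := Int.emod_lt_of_pos k (by exact_mod_cast hb)
  refine ⟨r.toNat, by omega, ?_⟩
  have hzab : ζ ^ ((a : ℤ) * (b : ℤ)) = 1 := by
    have := zeta_ab hab hζ
    rw [show ((a : ℤ) * (b : ℤ)) = ((a * b : ℕ) : ℤ) by push_cast; ring, zpow_natCast, this]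
  have h1 : k = (b : ℤ) * (k / (b : ℤ)) + r := by rw [hr]; exact (Int.mul_ediv_add_emod k (b : ℤ)).symm
  have hk_decomp : (a : ℤ) * k = (a : ℤ) * (b : ℤ) * (k / (b : ℤ)) + (a : ℤ) * r := by
    linear_combination (a : ℤ) * h1
  have hzm : ζ ^ m = ζ ^ ((a : ℤ) * r) := by
    rw [hm', hk_decomp, zpow_add, zpow_mul, hzab, one_zpow, one_mul]
  have hveq : v = ζ ^ ((a : ℤ) * r) := by rw [← hm, hzm]
  have hval : u = ((ζ ^ ((a : ℤ) * r) : Fˣ) : F) := by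
    rw [← hveq]; rfl
  rw [hval]
  rw [show (a : ℤ) * r = ((a * r.toNat : ℕ) : ℤ) by
    push_cast
    rw [Int.toNat_of_nonneg hr0], zpow_natCast]
  rw [Units.val_pow_eq_pow_val]

end zeta

/-- an invertible diagonal matrix as an element of `GL`. -/
def diagGL {F : Type} [Field F] {n : ℕ} (f : Fin n → F) (hf : ∀ p, f p ≠ 0) : GLn F n :=
  ⟨Matrix.diagonal f, Matrix.diagonal (fun p => (f p)⁻¹),
    by
      rw [Matrix.diagonal_mul_diagonal, ← Matrix.diagonal_one]
      exact congrArg Matrix.diagonal (funext fun p => mul_inv_cancel₀ (hf p)),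
    by
      rw [Matrix.diagonal_mul_diagonal, ← Matrix.diagonal_one]
      exact congrArg Matrix.diagonal (funext fun p => inv_mul_cancel₀ (hf p))⟩

@[simp] lemma diagGL_val {F : Type} [Field F] {n : ℕ} (f : Fin n → F) (hf : ∀ p, f p ≠ 0) :
    ((diagGL f hf : GLn F n) : Matrix (Fin n) (Fin n) F) = Matrix.diagonal f := rfl

/-- the recursively-defined sequence of `α`'s for surjectivity, from the top down. -/
def deltaSeq {F : Type} [Field F] (c : F) (n : ℕ) (β : Fin n → F) (hn : 0 < n) : ℕ → F
  | 0 => c * (β ⟨n - 1, by omega⟩)⁻¹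
  | (m + 1) => c * (β ⟨n - 2 - m, by omega⟩)⁻¹ * deltaSeq c n β hn m

lemma deltaSeq_pow {F : Type} [Field F] {c : F} {n b : ℕ} {β : Fin n → F} {hn : 0 < n}
    (hc : c ^ b = 1) (hβ : ∀ p, β p ^ b = 1) (m : ℕ) :
    (deltaSeq c n β hn m) ^ b = 1 := by
  induction m with
  | zero => rw [deltaSeq, mul_pow, hc, one_mul, inv_pow, hβ, inv_one]
  | succ m ih => rw [deltaSeq, mul_pow, mul_pow, hc, one_mul, inv_pow, hβ, inv_one, one_mul, ih]

lemma deltaSeq_ne_zero {F : Type} [Field F] {c : F} {n b : ℕ} {β : Fin n → F} {hn : 0 < n}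
    (hb : 0 < b) (hc : c ^ b = 1) (hβ : ∀ p, β p ^ b = 1) (m : ℕ) :
    deltaSeq c n β hn m ≠ 0 := by
  intro h
  have := deltaSeq_pow (hn := hn) (b := b) hc hβ m
  rw [h, zero_pow hb.ne'] at this
  exact zero_ne_one this

section gfunEval2

variable {F : Type} [Field F] {n a b : ℕ} {ζ : Fˣ} {i0 : ℕ} {α : Fin (n - 1) → F}

lemma gfun_eval_zero (q : Fin n) (j : Fin (n - 1)) (hq : (q : ℕ) = 0)
    (hj : (j : ℕ) = 0) (h2 : 2 ≤ n) :
    gfun F n a b ζ i0 α q = (ζ : F) ^ (a * i0) * α j := by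
  rw [gfun_zero q hq h2]
  have e1 : (⟨0, by omega⟩ : Fin (n - 1)) = j := Fin.ext (show 0 = (j : ℕ) by omega)
  rw [e1]

lemma gfun_eval_mid (q : Fin n) (j jm : Fin (n - 1)) (hj : (j : ℕ) = (q : ℕ))
    (hjm : (jm : ℕ) + 1 = (q : ℕ)) :
    gfun F n a b ζ i0 α q = α j * ((-1 : F) ^ (b - 1) * (α jm)⁻¹) := by
  have h0 : 0 < (q : ℕ) := by omega
  have hlt : (q : ℕ) < n - 1 := by have := j.isLt; omega
  rw [gfun_mid q h0 hlt]
  have e1 : (⟨(q : ℕ), hlt⟩ : Fin (n - 1)) = j := Fin.ext (show (q : ℕ) = (j : ℕ) by omega)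
  have e2 : (⟨(q : ℕ) - 1, by omega⟩ : Fin (n - 1)) = jm :=
    Fin.ext (show (q : ℕ) - 1 = (jm : ℕ) by omega)
  rw [e1, e2]

lemma gfun_eval_last (q : Fin n) (j : Fin (n - 1)) (hq : (q : ℕ) = n - 1)
    (hj : (j : ℕ) + 1 = n - 1) (h2 : 2 ≤ n) :
    gfun F n a b ζ i0 α q = (-1 : F) ^ (b - 1) * (α j)⁻¹ := by
  rw [gfun_last q hq h2]
  have e1 : (⟨n - 2, by omega⟩ : Fin (n - 1)) = j := Fin.ext (show n - 2 = (j : ℕ) by omega)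
  rw [e1]

end gfunEval2

/-- The multiplication mapping
`X_0 × X_{s_1} × ⋯ × X_{s_{n-1}} → H_b` is a bijection. -/
theorem multiplication_map_bijective
    (F : Type) [Field F] [Fintype F] [DecidableEq F] (n a b : ℕ)
    (hn : 0 < n) (ha : 0 < a) (hb : 0 < b)
    (hab : a * b = Fintype.card F - 1) (hcop : Nat.Coprime a b)
    (ζ : Fˣ) (hζ : ∀ x : Fˣ, x ∈ Subgroup.zpowers ζ) :
    Function.Injective (multMap F n a b hn ζ) ∧
    Set.range (multMap F n a b hn ζ) = Hbset F n b := by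
  have hc1 : ((-1 : F) ^ (b - 1)) ^ b = 1 := negOnePowPred_pow b
  have hcne : ((-1 : F) ^ (b - 1)) ≠ 0 := negOnePowPred_ne_zero b
  constructor
  · -- injectivity
    intro p p' hpp
    obtain ⟨i0, hi0b, h0⟩ := p.1.2
    obtain ⟨i0', hi0b', h0'⟩ := p'.1.2
    choose α hαb hαm using fun i => (p.2 i).2
    choose α' hαb' hαm' using fun i => (p'.2 i).2
    have hαne : ∀ i, α i ≠ 0 := by
      intro i h
      have := hαb i
      rw [h, zero_pow hb.ne'] at this
      exact zero_ne_one this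
    have hαne' : ∀ i, α' i ≠ 0 := by
      intro i h
      have := hαb' i
      rw [h, zero_pow hb.ne'] at this
      exact zero_ne_one this
    have hmx : Matrix.diagonal (gfun F n a b ζ i0 α)
        = Matrix.diagonal (gfun F n a b ζ i0' α') := by
      rw [← multMap_val F n a b hn ζ p i0 α h0 hαm,
        ← multMap_val F n a b hn ζ p' i0' α' h0' hαm', hpp]
    have hg : ∀ q : Fin n, gfun F n a b ζ i0 α q = gfun F n a b ζ i0' α' q := by
      intro q
      rw [← Matrix.diagonal_apply_eq (gfun F n a b ζ i0 α) q,
        ← Matrix.diagonal_apply_eq (gfun F n a b ζ i0' α') q, hmx]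
    have key : ∀ k : ℕ, ∀ i : Fin (n - 1), (i : ℕ) + k = n - 2 → α i = α' i := by
      intro k
      induction k with
      | zero =>
        intro i hi
        have h2 : 2 ≤ n := by have := i.isLt; omega
        have hq := hg ⟨n - 1, by omega⟩
        rw [gfun_eval_last ⟨n - 1, by omega⟩ i rfl (by omega) h2,
          gfun_eval_last ⟨n - 1, by omega⟩ i rfl (by omega) h2] at hq
        exact inv_injective (mul_left_cancel₀ hcne hq)
      | succ k ih =>
        intro i hi
        have h3 : 3 ≤ n := by have := i.isLt; omega
        have hlt1 : (i : ℕ) + 1 < n - 1 := by omega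
        have hIH : α ⟨(i : ℕ) + 1, hlt1⟩ = α' ⟨(i : ℕ) + 1, hlt1⟩ :=
          ih ⟨(i : ℕ) + 1, hlt1⟩ (show (i : ℕ) + 1 + k = n - 2 by omega)
        have hq := hg ⟨(i : ℕ) + 1, by omega⟩
        rw [gfun_eval_mid ⟨(i : ℕ) + 1, by omega⟩ ⟨(i : ℕ) + 1, hlt1⟩ i rfl rfl,
          gfun_eval_mid ⟨(i : ℕ) + 1, by omega⟩ ⟨(i : ℕ) + 1, hlt1⟩ i rfl rfl] at hq
        rw [hIH] at hq
        exact inv_injective (mul_left_cancel₀ hcne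
          (mul_left_cancel₀ (hαne' ⟨(i : ℕ) + 1, hlt1⟩) hq))
    have hall : ∀ i : Fin (n - 1), α i = α' i := by
      intro i
      exact key (n - 2 - (i : ℕ)) i (by have := i.isLt; omega)
    -- equality of the zeroth entries
    have hζeq : (ζ : F) ^ (a * i0) = (ζ : F) ^ (a * i0') := by
      have hq0 := hg ⟨0, hn⟩
      by_cases h1 : n = 1
      · rwa [gfun_zero_one ⟨0, hn⟩ rfl h1, gfun_zero_one ⟨0, hn⟩ rfl h1] at hq0
      · have h2 : 2 ≤ n := by omega
        rw [gfun_eval_zero ⟨0, hn⟩ ⟨0, by omega⟩ rfl rfl h2,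
          gfun_eval_zero ⟨0, hn⟩ ⟨0, by omega⟩ rfl rfl h2, hall ⟨0, by omega⟩] at hq0
        exact mul_right_cancel₀ (hαne' ⟨0, by omega⟩) hq0
    have h1eq : p.1 = p'.1 := by
      apply Subtype.ext
      apply Units.ext
      rw [h0, h0']
      exact congrArg Matrix.diagonal (funext fun q => by
        split_ifs with h
        · exact hζeq
        · rfl)
    have h2eq : p.2 = p'.2 := by
      funext i
      apply Subtype.ext
      apply Units.ext
      rw [hαm i, hαm' i, hall i]
    exact Prod.ext h1eq h2eq
  · -- range = Hbset
    apply Set.eq_of_subset_of_subset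
    · rintro y ⟨p, rfl⟩
      obtain ⟨i0, hi0b, h0⟩ := p.1.2
      choose α hαb hαm using fun i => (p.2 i).2
      have hm := multMap_val F n a b hn ζ p i0 α h0 hαm
      have hz : ((ζ : F) ^ (a * i0)) ^ b = 1 := by
        rw [← pow_mul, show a * i0 * b = (a * b) * i0 from by ring, pow_mul,
          ← Units.val_pow_eq_pow_val, zeta_ab hab hζ, Units.val_one, one_pow]
      constructor
      · intro i j hij
        rw [hm]
        exact Matrix.diagonal_apply_ne _ hij
      · intro q
        rw [hm, Matrix.diagonal_apply_eq]
        unfold gfun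
        rw [mul_pow, mul_pow]
        split_ifs <;> simp [mul_pow, inv_pow, hz, hαb, hc1]
    · intro x hx
      obtain ⟨hoff, hdiag⟩ := hx
      set β : Fin n → F := fun q => (x : Matrix (Fin n) (Fin n) F) q q with hβdef
      have hβb : ∀ q, β q ^ b = 1 := fun q => hdiag q
      have hβne : ∀ q, β q ≠ 0 := by
        intro q h
        have := hβb q
        rw [h, zero_pow hb.ne'] at this
        exact zero_ne_one this
      have hxval : (x : Matrix (Fin n) (Fin n) F) = Matrix.diagonal β := by
        ext i j
        by_cases h : i = j
        · subst h
          rw [Matrix.diagonal_apply_eq]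
        · rw [Matrix.diagonal_apply_ne _ h]
          exact hoff i j h
      set α : Fin (n - 1) → F :=
        fun j => deltaSeq ((-1 : F) ^ (b - 1)) n β hn (n - 2 - (j : ℕ)) with hαdef0
      have hαdef : ∀ j : Fin (n - 1),
          α j = deltaSeq ((-1 : F) ^ (b - 1)) n β hn (n - 2 - (j : ℕ)) :=
        fun j => by rw [hαdef0]
      have hαb : ∀ j, α j ^ b = 1 := fun j => by
        rw [hαdef]; exact deltaSeq_pow (hn := hn) hc1 hβb _
      have hαne : ∀ j, α j ≠ 0 := fun j => by
        rw [hαdef]; exact deltaSeq_ne_zero (hn := hn) hb hc1 hβb _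
      have hub : (β ⟨0, hn⟩ * (if h : 0 < n - 1 then (α ⟨0, h⟩)⁻¹ else 1)) ^ b = 1 := by
        rw [mul_pow]
        split_ifs with h
        · rw [hβb, one_mul, inv_pow, hαb, inv_one]
        · rw [hβb, one_mul, one_pow]
      obtain ⟨i0, hi0b, hu⟩ := exists_i0 ha hb hab hζ
        (β ⟨0, hn⟩ * (if h : 0 < n - 1 then (α ⟨0, h⟩)⁻¹ else 1)) hub
      -- build the preimage tuple
      refine ⟨⟨⟨diagGL (fun q => if q = (⟨0, hn⟩ : Fin n) then (ζ : F) ^ (a * i0) else 1)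
          (by
            intro q
            split_ifs
            · exact pow_ne_zero _ (Units.ne_zero ζ)
            · exact one_ne_zero), ⟨i0, hi0b, rfl⟩⟩,
        fun i => ⟨diagGL (fun q =>
            if q = (⟨(i : ℕ), by have := i.isLt; omega⟩ : Fin n) then α i
            else if q = (⟨(i : ℕ) + 1, by have := i.isLt; omega⟩ : Fin n) then
              (-1 : F) ^ (b - 1) * (α i)⁻¹ else 1)
          (by
            intro q
            split_ifs
            · exact hαne i
            · exact mul_ne_zero hcne (inv_ne_zero (hαne i))
            · exact one_ne_zero), ⟨α i, hαb i, rfl⟩⟩⟩, ?_⟩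
      apply Units.ext
      refine Eq.trans (multMap_val F n a b hn ζ _ i0 α rfl (fun i => rfl)) ?_
      rw [hxval]
      refine congrArg Matrix.diagonal (funext fun q => ?_)
      by_cases hq0 : (q : ℕ) = 0
      · by_cases h1 : n = 1
        · rw [dif_neg (by omega), mul_one] at hu
          rw [gfun_zero_one q hq0 h1, ← hu]
          have hqe : q = ⟨0, hn⟩ := Fin.ext hq0
          rw [hqe]
        · have h2 : 2 ≤ n := by omega
          have hpos : 0 < n - 1 := by omega
          rw [dif_pos hpos] at hu
          rw [gfun_eval_zero q ⟨0, hpos⟩ hq0 rfl h2, ← hu, mul_assoc,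
            inv_mul_cancel₀ (hαne ⟨0, hpos⟩), mul_one]
          have hqe : q = ⟨0, hn⟩ := Fin.ext hq0
          rw [hqe]
      · by_cases hqlast : (q : ℕ) = n - 1
        · have h2 : 2 ≤ n := by have := q.isLt; omega
          rw [gfun_eval_last q ⟨n - 2, by omega⟩ hqlast (show n - 2 + 1 = n - 1 by omega) h2,
            hαdef]
          show (-1 : F) ^ (b - 1) *
            (deltaSeq ((-1 : F) ^ (b - 1)) n β hn (n - 2 - (n - 2)))⁻¹ = β q
          rw [Nat.sub_self]
          show (-1 : F) ^ (b - 1) *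
            ((-1 : F) ^ (b - 1) * (β ⟨n - 1, by omega⟩)⁻¹)⁻¹ = β q
          have hqe : (⟨n - 1, by omega⟩ : Fin n) = q := Fin.ext (show n - 1 = (q : ℕ) by omega)
          rw [hqe]
          field_simp
        · have hmid : (q : ℕ) < n - 1 := by have := q.isLt; omega
          have hpos : 0 < (q : ℕ) := by omega
          rw [gfun_eval_mid q ⟨(q : ℕ), hmid⟩ ⟨(q : ℕ) - 1, by omega⟩ rfl
            (show (q : ℕ) - 1 + 1 = (q : ℕ) by omega)]
          have hA : α ⟨(q : ℕ) - 1, by omega⟩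
              = (-1 : F) ^ (b - 1) * (β q)⁻¹ * α ⟨(q : ℕ), hmid⟩ := by
            rw [hαdef, hαdef]
            show deltaSeq ((-1 : F) ^ (b - 1)) n β hn (n - 2 - ((q : ℕ) - 1))
              = (-1 : F) ^ (b - 1) * (β q)⁻¹
                * deltaSeq ((-1 : F) ^ (b - 1)) n β hn (n - 2 - (q : ℕ))
            rw [show n - 2 - ((q : ℕ) - 1) = (n - 2 - (q : ℕ)) + 1 from by omega]
            show (-1 : F) ^ (b - 1) * (β ⟨n - 2 - (n - 2 - (q : ℕ)), by omega⟩)⁻¹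
                * deltaSeq ((-1 : F) ^ (b - 1)) n β hn (n - 2 - (q : ℕ))
              = (-1 : F) ^ (b - 1) * (β q)⁻¹
                * deltaSeq ((-1 : F) ^ (b - 1)) n β hn (n - 2 - (q : ℕ))
            have hqe : (⟨n - 2 - (n - 2 - (q : ℕ)), by omega⟩ : Fin n) = q :=
              Fin.ext (show n - 2 - (n - 2 - (q : ℕ)) = (q : ℕ) by omega)
            rw [hqe]
          rw [hA]
          field_simp
          rw [div_eq_iff (hαne ⟨(q : ℕ), hmid⟩)]
          ring
end
end

section
/- Let τ : H_v → A_v be the A_v-linear map with τ(T_x) = δ_{x,1}. Then τ(T_x T_y) = δ_{x, y^{-1}} for all x, y ∈ WH_b. Consequently τ is a symmetrizing trace form on H_v (τ(hh') = τ(h'h) and the bilinear form (h,h') ↦ τ(hh') is non-degenerate), and { T_{y^{-1}} : y ∈ WH_b } is the basis dual to { T_x : x ∈ WH_b }. -/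
noncomputable section

open scoped Pointwise

/-- `A_v = ℤ[a, v, v⁻¹]`, realized as polynomials in the indeterminate `a` with
coefficients Laurent polynomials in the indeterminate `v`. -/
abbrev Av : Type := Polynomial (LaurentPolynomial ℤ)

/-- The indeterminate `a` of `A_v`. -/
def aA : Av := Polynomial.X

/-- The indeterminate `v` of `A_v`. -/
def vA : Av := Polynomial.C (LaurentPolynomial.T 1)

/-- `v⁻¹ ∈ A_v`. -/
def vI : Av := Polynomial.C (LaurentPolynomial.T (-1))

namespace TauProof

open Matrix Equiv

variable {n : ℕ}

/-- Monomial matrix with permutation `σ` and column scalars `f`. -/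
def MonoM (n : ℕ) (σ : Equiv.Perm (Fin n)) (f : Fin n → ℂ) : Matrix (Fin n) (Fin n) ℂ :=
  Matrix.of fun i j => if i = σ j then f j else 0

lemma MonoM_apply (σ : Equiv.Perm (Fin n)) (f : Fin n → ℂ) (i j : Fin n) :
    MonoM n σ f i j = if i = σ j then f j else 0 := rfl

lemma MonoM_mul (σ π : Equiv.Perm (Fin n)) (f g : Fin n → ℂ) :
    MonoM n σ f * MonoM n π g = MonoM n (σ * π) fun j => f (π j) * g j := by
  ext i j
  rw [Matrix.mul_apply]
  simp only [MonoM, Matrix.of_apply, ite_mul, zero_mul, mul_ite, mul_zero]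
  rw [Finset.sum_eq_single (π j)]
  · simp [Equiv.Perm.mul_apply]; congr
  · intro m _ hm; simp [hm]
  · simp

lemma MonoM_one : MonoM n 1 (fun _ => (1:ℂ)) = 1 := by
  ext i j
  by_cases h : i = j <;> simp [MonoM, Matrix.one_apply, h, eq_comm]

lemma MonoM_congr (σ : Equiv.Perm (Fin n)) {f g : Fin n → ℂ} (h : ∀ j, f j = g j) :
    MonoM n σ f = MonoM n σ g := by
  ext i j; simp [MonoM, h j]

end TauProof
namespace TauProof

open Matrix Equiv

variable {n b : ℕ}

/-- Monomial matrix as a unit of `GL n ℂ`. -/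
def monoGL (σ : Equiv.Perm (Fin n)) (f : Fin n → ℂ) (hf : ∀ j, f j ≠ 0) : GLn ℂ n where
  val := MonoM n σ f
  inv := MonoM n σ⁻¹ fun j => (f (σ⁻¹ j))⁻¹
  val_inv := by
    rw [MonoM_mul, mul_inv_cancel]
    rw [← MonoM_one]
    exact MonoM_congr _ fun j => mul_inv_cancel₀ (hf _)
  inv_val := by
    rw [MonoM_mul, inv_mul_cancel]
    rw [← MonoM_one]
    exact MonoM_congr _ fun j => by
      simp only [← Equiv.Perm.mul_apply, inv_mul_cancel, Equiv.Perm.one_apply]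
      exact inv_mul_cancel₀ (hf _)

lemma monoGL_val (σ : Equiv.Perm (Fin n)) (f : Fin n → ℂ) (hf : ∀ j, f j ≠ 0) :
    ((monoGL σ f hf : GLn ℂ n) : Matrix (Fin n) (Fin n) ℂ) = MonoM n σ f := rfl

lemma ne_zero_of_pow_eq_one {α : ℂ} (hb : 0 < b) (h : α ^ b = 1) : α ≠ 0 := by
  intro h0; rw [h0, zero_pow hb.ne'] at h; exact zero_ne_one h

/-- Structure of the elements of `WH_b`. -/
lemma mem_WHb_iff (hb : 0 < b) {x : GLn ℂ n} :
    x ∈ WHbset ℂ n b ↔ ∃ σ : Equiv.Perm (Fin n), ∃ f : Fin n → ℂ,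
      (∀ j, f j ^ b = 1) ∧ (x : Matrix (Fin n) (Fin n) ℂ) = MonoM n σ f := by
  constructor
  · rintro ⟨w, ⟨σ, hw⟩, d, ⟨hd0, hdb⟩, rfl⟩
    refine ⟨σ, fun j => (d : Matrix (Fin n) (Fin n) ℂ) j j, hdb, ?_⟩
    have hwv : (w : Matrix (Fin n) (Fin n) ℂ) = MonoM n σ (fun _ => 1) := by
      ext i j; rw [hw i j, MonoM_apply]; simp [eq_comm]
    have hdv : (d : Matrix (Fin n) (Fin n) ℂ)
        = MonoM n 1 (fun j => (d : Matrix (Fin n) (Fin n) ℂ) j j) := by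
      ext i j
      by_cases h : i = j
      · subst h; simp [MonoM_apply]
      · rw [hd0 i j h, MonoM_apply]; simp [h]
    rw [Units.val_mul, hwv, hdv, MonoM_mul]
    exact MonoM_congr _ fun j => by simp [MonoM_apply]
  · rintro ⟨σ, f, hfb, hx⟩
    have hf : ∀ j, f j ≠ 0 := fun j => ne_zero_of_pow_eq_one hb (hfb j)
    refine ⟨monoGL σ (fun _ => 1) (fun _ => one_ne_zero), ⟨σ, ?_⟩,
      monoGL 1 f hf, ⟨?_, ?_⟩, ?_⟩
    · intro i j; rw [monoGL_val, MonoM_apply]; simp [eq_comm]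
    · intro i j hij; rw [monoGL_val, MonoM_apply]; simp [hij]
    · intro i; rw [monoGL_val, MonoM_apply]; simp [hfb i]
    · apply Units.ext
      rw [Units.val_mul, monoGL_val, monoGL_val, MonoM_mul, hx]
      exact (MonoM_congr _ fun j => by simp).symm

lemma matrix_eq_monoGL {x : GLn ℂ n} {σ : Equiv.Perm (Fin n)} {f : Fin n → ℂ}
    (hf : ∀ j, f j ≠ 0) (hx : (x : Matrix (Fin n) (Fin n) ℂ) = MonoM n σ f) :
    x = monoGL σ f hf := Units.ext hx

lemma inv_matrix {x : GLn ℂ n} {σ : Equiv.Perm (Fin n)} {f : Fin n → ℂ}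
    (hf : ∀ j, f j ≠ 0) (hx : (x : Matrix (Fin n) (Fin n) ℂ) = MonoM n σ f) :
    ((x⁻¹ : GLn ℂ n) : Matrix (Fin n) (Fin n) ℂ)
      = MonoM n σ⁻¹ fun j => (f (σ⁻¹ j))⁻¹ := by
  rw [matrix_eq_monoGL hf hx]
  rfl

lemma WHb_mul_mem (hb : 0 < b) {x y : GLn ℂ n} (hx : x ∈ WHbset ℂ n b)
    (hy : y ∈ WHbset ℂ n b) : x * y ∈ WHbset ℂ n b := by
  rw [mem_WHb_iff hb] at hx hy ⊢
  obtain ⟨σ, f, hfb, hxv⟩ := hx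
  obtain ⟨π, g, hgb, hyv⟩ := hy
  exact ⟨σ * π, fun j => f (π j) * g j,
    fun j => by rw [mul_pow, hfb, hgb, one_mul],
    by rw [Units.val_mul, hxv, hyv, MonoM_mul]⟩

lemma WHb_inv_mem (hb : 0 < b) {x : GLn ℂ n} (hx : x ∈ WHbset ℂ n b) :
    x⁻¹ ∈ WHbset ℂ n b := by
  rw [mem_WHb_iff hb] at hx ⊢
  obtain ⟨σ, f, hfb, hxv⟩ := hx
  have hf : ∀ j, f j ≠ 0 := fun j => ne_zero_of_pow_eq_one hb (hfb j)
  exact ⟨σ⁻¹, fun j => (f (σ⁻¹ j))⁻¹,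
    fun j => by rw [inv_pow, hfb, inv_one], inv_matrix hf hxv⟩

lemma WHb_one_mem (hb : 0 < b) : (1 : GLn ℂ n) ∈ WHbset ℂ n b := by
  rw [mem_WHb_iff hb]
  exact ⟨1, fun _ => 1, fun j => one_pow b, by rw [MonoM_one]; rfl⟩

lemma Hb_subset_WHb (hb : 0 < b) {d : GLn ℂ n} (hd : d ∈ Hbset ℂ n b) :
    d ∈ WHbset ℂ n b :=
  ⟨1, ⟨1, fun i j => by simp [Matrix.one_apply, eq_comm]⟩, d, hd, (one_mul d).symm⟩

lemma mem_Hb_iff (hb : 0 < b) {d : GLn ℂ n} :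
    d ∈ Hbset ℂ n b ↔ ∃ f : Fin n → ℂ,
      (∀ j, f j ^ b = 1) ∧ (d : Matrix (Fin n) (Fin n) ℂ) = MonoM n 1 f := by
  constructor
  · rintro ⟨hd0, hdb⟩
    refine ⟨fun j => (d : Matrix (Fin n) (Fin n) ℂ) j j, hdb, ?_⟩
    ext i j
    by_cases h : i = j
    · subst h; simp [MonoM_apply]
    · rw [hd0 i j h, MonoM_apply]; simp [h]
  · rintro ⟨f, hfb, hdv⟩
    constructor
    · intro i j hij; rw [hdv, MonoM_apply]; simp [hij]
    · intro i; rw [hdv, MonoM_apply]; simp [hfb i]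

end TauProof
namespace TauProof

open Matrix Equiv

variable {n b : ℕ}

open scoped Classical in
/-- Inversion number of a permutation. -/
def Dcard (σ : Equiv.Perm (Fin n)) : ℕ :=
  (Finset.univ.filter fun p : Fin n × Fin n => p.1 < p.2 ∧ σ p.2 < σ p.1).card

open scoped Classical in
lemma len_eq_Dcard {x : GLn ℂ n} {σ : Equiv.Perm (Fin n)} {f : Fin n → ℂ}
    (hf : ∀ j, f j ≠ 0) (hx : (x : Matrix (Fin n) (Fin n) ℂ) = MonoM n σ f) :
    len x = Dcard σ := by
  have hset : {p : Fin n × Fin n | p.1 < p.2 ∧ ∃ i i' : Fin n, i' < i ∧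
      (x : Matrix (Fin n) (Fin n) ℂ) i p.1 ≠ 0 ∧ (x : Matrix (Fin n) (Fin n) ℂ) i' p.2 ≠ 0}
      = ↑(Finset.univ.filter fun p : Fin n × Fin n => p.1 < p.2 ∧ σ p.2 < σ p.1) := by
    ext p
    have hne : ∀ i j : Fin n, (x : Matrix (Fin n) (Fin n) ℂ) i j ≠ 0 ↔ i = σ j := by
      intro i j
      rw [hx, MonoM_apply]
      by_cases h : i = σ j <;> simp [h, hf j]
    simp only [Set.mem_setOf_eq, Finset.coe_filter, Finset.mem_univ, true_and, hne]
    constructor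
    · rintro ⟨h1, i, i', hlt, rfl, rfl⟩
      exact ⟨h1, hlt⟩
    · rintro ⟨h1, h2⟩
      exact ⟨h1, σ p.1, σ p.2, h2, rfl, rfl⟩
  rw [len, hset, Set.ncard_coe_finset, Dcard]

lemma strictMono_perm_eq_one {σ : Equiv.Perm (Fin n)} (h : StrictMono ⇑σ) : σ = 1 := by
  have hinv : StrictMono ⇑σ⁻¹ := by
    intro p q hpq
    rw [← h.lt_iff_lt]
    simpa using hpq
  haveI : WellFoundedLT (Fin n) := inferInstance
  ext i
  have h1 := StrictMono.le_apply (f := ⇑σ) h (x := i)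
  have h2' := StrictMono.le_apply (f := ⇑σ⁻¹) hinv (x := σ i)
  have h2 : σ i ≤ i := by simpa using h2'
  have : σ i = i := le_antisymm h2 h1
  simp [this]

lemma Dcard_eq_zero_iff {σ : Equiv.Perm (Fin n)} : Dcard σ = 0 ↔ σ = 1 := by
  classical
  constructor
  · intro h
    rw [Dcard, Finset.card_eq_zero, Finset.filter_eq_empty_iff] at h
    apply strictMono_perm_eq_one
    intro p q hpq
    rcases lt_trichotomy (σ p) (σ q) with h1 | h1 | h1
    · exact h1
    · exact absurd (σ.injective h1) hpq.ne
    · exact absurd ⟨hpq, h1⟩ (h (Finset.mem_univ (p, q)))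
  · rintro rfl
    rw [Dcard, Finset.card_eq_zero, Finset.filter_eq_empty_iff]
    rintro p _ ⟨h1, h2⟩
    exact absurd h1 (not_lt.mpr h2.le)

lemma Dcard_inv (σ : Equiv.Perm (Fin n)) : Dcard σ⁻¹ = Dcard σ := by
  classical
  rw [Dcard, Dcard]
  apply Finset.card_bij' (fun p _ => (σ⁻¹ p.2, σ⁻¹ p.1)) (fun q _ => (σ q.2, σ q.1))
  · rintro p hp
    simp only [Finset.mem_filter, Finset.mem_univ, true_and] at hp ⊢
    exact ⟨hp.2, by simpa using hp.1⟩
  · rintro q hq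
    simp only [Finset.mem_filter, Finset.mem_univ, true_and] at hq ⊢
    exact ⟨hq.2, by simpa using hq.1⟩
  · rintro p _; simp
  · rintro q _; simp

end TauProof
namespace TauProof

open Matrix Equiv

variable {n : ℕ}

lemma swap_lt_swap {a c p q : Fin n} (hac : (a:ℕ) + 1 = (c:ℕ)) (hpq : p < q)
    (hne : ¬(p = a ∧ q = c)) : Equiv.swap a c p < Equiv.swap a c q := by
  simp only [Equiv.swap_apply_def]
  rw [not_and] at hne
  split_ifs <;>
    simp only [Fin.lt_def, Fin.ext_iff, not_and] at * <;>
    omega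

open scoped Classical in
lemma Dcard_mul_swap {a c : Fin n} (σ : Equiv.Perm (Fin n)) (hac : (a:ℕ) + 1 = (c:ℕ)) :
    (σ c < σ a → Dcard (σ * Equiv.swap a c) + 1 = Dcard σ) ∧
    (σ a < σ c → Dcard (σ * Equiv.swap a c) = Dcard σ + 1) := by
  classical
  set s := Equiv.swap a c with hs
  have hlt : a < c := by rw [Fin.lt_def]; omega
  have hsa : s a = c := Equiv.swap_apply_left a c
  have hsc : s c = a := Equiv.swap_apply_right a c
  have hss : ∀ x : Fin n, s (s x) = x := fun x => Equiv.swap_apply_self a c x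
  set D : Equiv.Perm (Fin n) → Finset (Fin n × Fin n) :=
    fun τ => Finset.univ.filter fun p : Fin n × Fin n => p.1 < p.2 ∧ τ p.2 < τ p.1 with hD
  have hmem : ∀ τ p, p ∈ D τ ↔ p.1 < p.2 ∧ τ p.2 < τ p.1 := by
    intro τ p; simp [hD]
  have hcard : ((D (σ * s)).erase (a, c)).card = ((D σ).erase (a, c)).card := by
    apply Finset.card_bij' (fun p _ => (s p.1, s p.2)) (fun q _ => (s q.1, s q.2))
    · rintro p hp
      rw [Finset.mem_erase, hmem] at hp
      obtain ⟨hpne, h1, h2⟩ := hp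
      have hne : ¬(p.1 = a ∧ p.2 = c) := by
        rintro ⟨ha, hc⟩; exact hpne (by rw [Prod.ext_iff]; exact ⟨ha, hc⟩)
      have hlt2 : s p.1 < s p.2 := swap_lt_swap hac h1 hne
      rw [Finset.mem_erase, hmem]
      refine ⟨?_, hlt2, ?_⟩
      · rintro hq
        rw [Prod.mk.injEq] at hq
        have hA : p.1 = s a := by rw [← hq.1, hss]
        have hB : p.2 = s c := by rw [← hq.2, hss]
        rw [hsa] at hA; rw [hsc] at hB
        rw [hA, hB] at h1
        exact absurd h1 (not_lt.mpr hlt.le)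
      · simpa [Equiv.Perm.mul_apply] using h2
    · rintro q hq
      rw [Finset.mem_erase, hmem] at hq
      obtain ⟨hqne, h1, h2⟩ := hq
      have hne : ¬(q.1 = a ∧ q.2 = c) := by
        rintro ⟨ha, hc⟩; exact hqne (by rw [Prod.ext_iff]; exact ⟨ha, hc⟩)
      have hlt2 : s q.1 < s q.2 := swap_lt_swap hac h1 hne
      rw [Finset.mem_erase, hmem]
      refine ⟨?_, hlt2, ?_⟩
      · rintro hp
        rw [Prod.mk.injEq] at hp
        have hA : q.1 = s a := by rw [← hp.1, hss]
        have hB : q.2 = s c := by rw [← hp.2, hss]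
        rw [hsa] at hA; rw [hsc] at hB
        rw [hA, hB] at h1
        exact absurd h1 (not_lt.mpr hlt.le)
      · simpa [Equiv.Perm.mul_apply, hss] using h2
    · rintro p _; simp [hss]
    · rintro q _; simp [hss]
  have hac_mem : ((a, c) ∈ D (σ * s)) ↔ σ a < σ c := by
    rw [hmem]
    simp only [Equiv.Perm.mul_apply, hsa, hsc]
    constructor
    · rintro ⟨_, h⟩; exact h
    · intro h; exact ⟨hlt, h⟩
  have hac_mem' : ((a, c) ∈ D σ) ↔ σ c < σ a := by
    rw [hmem]
    constructor
    · rintro ⟨_, h⟩; exact h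
    · intro h; exact ⟨hlt, h⟩
  have hDcard : ∀ τ, Dcard τ = (D τ).card := fun τ => rfl
  constructor
  · intro hdesc
    have h1 : (a, c) ∉ D (σ * s) := fun hmem1 =>
      absurd (hac_mem.mp hmem1) (not_lt.mpr hdesc.le)
    have h2 : (a, c) ∈ D σ := hac_mem'.mpr hdesc
    rw [hDcard, hDcard, ← Finset.erase_eq_of_notMem h1, hcard,
      Finset.card_erase_add_one h2]
  · intro hasc
    have h1 : (a, c) ∈ D (σ * s) := hac_mem.mpr hasc
    have h2 : (a, c) ∉ D σ := fun hmem1 =>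
      absurd (hac_mem'.mp hmem1) (not_lt.mpr hasc.le)
    rw [hDcard, hDcard, ← Finset.card_erase_add_one h1, hcard,
      Finset.erase_eq_of_notMem h2]

lemma exists_descent {σ : Equiv.Perm (Fin n)} (hσ : σ ≠ 1) :
    ∃ a c : Fin n, (a:ℕ) + 1 = (c:ℕ) ∧ σ c < σ a := by
  by_contra hno
  push_neg at hno
  apply hσ
  apply strictMono_perm_eq_one
  cases n with
  | zero => exact fun p => p.elim0
  | succ m =>
    rw [Fin.strictMono_iff_lt_succ]
    intro i
    have h1 : ((i.castSucc : Fin (m+1)):ℕ) + 1 = ((i.succ : Fin (m+1)):ℕ) := by simp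
    have := hno i.castSucc i.succ h1
    rcases lt_trichotomy (σ i.castSucc) (σ i.succ) with h | h | h
    · exact h
    · exfalso
      have : (i.castSucc : Fin (m+1)) = i.succ := σ.injective h
      rw [Fin.ext_iff] at this
      omega
    · exact absurd h (not_lt.mpr this)

end TauProof
namespace TauProof

open Matrix Equiv

variable {n b : ℕ}

lemma diagonal_eq_MonoM (f : Fin n → ℂ) : Matrix.diagonal f = MonoM n 1 f := by
  ext i j
  rw [MonoM_apply]
  by_cases h : i = j
  · subst h; simp
  · rw [Matrix.diagonal_apply_ne _ h]; simp [h]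

lemma mem_S_iff {s : GLn ℂ n} : s ∈ Sset ℂ n ↔ ∃ a c : Fin n, (a:ℕ) + 1 = (c:ℕ) ∧
    (s : Matrix (Fin n) (Fin n) ℂ) = MonoM n (Equiv.swap a c) (fun _ => 1) := by
  constructor
  · rintro ⟨a, c, hac, hs⟩
    refine ⟨a, c, hac, ?_⟩
    ext i j; rw [hs i j, MonoM_apply]; simp [eq_comm]
  · rintro ⟨a, c, hac, hs⟩
    refine ⟨a, c, hac, fun i j => ?_⟩
    rw [hs, MonoM_apply]; simp [eq_comm]

lemma S_subset_WHb (hb : 0 < b) {s : GLn ℂ n} (hs : s ∈ Sset ℂ n) :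
    s ∈ WHbset ℂ n b := by
  rw [mem_S_iff] at hs
  obtain ⟨a, c, _, hsv⟩ := hs
  exact (mem_WHb_iff hb).mpr ⟨_, _, fun _ => one_pow b, hsv⟩

lemma S_mul_self {s : GLn ℂ n} (hs : s ∈ Sset ℂ n) : s * s = 1 := by
  rw [mem_S_iff] at hs
  obtain ⟨a, c, _, hsv⟩ := hs
  apply Units.ext
  rw [Units.val_mul, hsv, MonoM_mul, Equiv.swap_mul_self,
    MonoM_congr _ (fun j => one_mul (1:ℂ)), MonoM_one, Units.val_one]

lemma len_WHb {x : GLn ℂ n} {σ : Equiv.Perm (Fin n)} {f : Fin n → ℂ}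
    (hb : 0 < b) (hfb : ∀ j, f j ^ b = 1)
    (hx : (x : Matrix (Fin n) (Fin n) ℂ) = MonoM n σ f) : len x = Dcard σ :=
  len_eq_Dcard (fun j => ne_zero_of_pow_eq_one hb (hfb j)) hx

lemma len_mul_S (hb : 0 < b) {x s : GLn ℂ n} (hx : x ∈ WHbset ℂ n b)
    (hs : s ∈ Sset ℂ n) : len (x * s) < len x ∨ len x < len (x * s) := by
  rw [mem_WHb_iff hb] at hx
  obtain ⟨σ, f, hfb, hxv⟩ := hx
  rw [mem_S_iff] at hs
  obtain ⟨a, c, hac, hsv⟩ := hs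
  have hxs : ((x * s : GLn ℂ n) : Matrix (Fin n) (Fin n) ℂ)
      = MonoM n (σ * Equiv.swap a c) fun j => f (Equiv.swap a c j) * 1 := by
    rw [Units.val_mul, hxv, hsv, MonoM_mul]
  have hlen1 : len (x * s) = Dcard (σ * Equiv.swap a c) :=
    len_WHb hb (fun j => by rw [mul_one, hfb]) hxs
  have hlen2 : len x = Dcard σ := len_WHb hb hfb hxv
  have hne : a ≠ c := fun h => by rw [h] at hac; omega
  rcases lt_trichotomy (σ a) (σ c) with h | h | h
  · right
    rw [hlen1, hlen2, (Dcard_mul_swap σ hac).2 h]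
    omega
  · exact absurd (σ.injective h) hne
  · left
    have := (Dcard_mul_swap σ hac).1 h
    rw [hlen1, hlen2]
    omega

lemma descent_exists (hb : 0 < b) {y : GLn ℂ n} (hy : y ∈ WHbset ℂ n b)
    (h0 : len y ≠ 0) : ∃ s ∈ Sset ℂ n, len (s * y) < len y := by
  rw [mem_WHb_iff hb] at hy
  obtain ⟨σ, f, hfb, hyv⟩ := hy
  have hlen : len y = Dcard σ := len_WHb hb hfb hyv
  have hσ : σ ≠ 1 := by
    intro h; rw [h, Dcard_eq_zero_iff.mpr rfl] at hlen; exact h0 hlen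
  have hσi : σ⁻¹ ≠ 1 := fun h => hσ (by rw [← inv_inv σ, h, inv_one])
  obtain ⟨a, c, hac, hdesc⟩ := exists_descent hσi
  refine ⟨monoGL (Equiv.swap a c) (fun _ => 1) (fun _ => one_ne_zero),
    mem_S_iff.mpr ⟨a, c, hac, rfl⟩, ?_⟩
  have hsy : ((monoGL (Equiv.swap a c) (fun _ => (1:ℂ)) (fun _ => one_ne_zero) * y :
      GLn ℂ n) : Matrix (Fin n) (Fin n) ℂ)
      = MonoM n (Equiv.swap a c * σ) fun j => 1 * f j := by
    rw [Units.val_mul, monoGL_val, hyv, MonoM_mul]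
  have hlen1 : len _ = Dcard (Equiv.swap a c * σ) :=
    len_WHb hb (fun j => by rw [one_mul, hfb]) hsy
  have hDD : Dcard (Equiv.swap a c * σ) = Dcard (σ⁻¹ * Equiv.swap a c) := by
    rw [← Dcard_inv (Equiv.swap a c * σ), _root_.mul_inv_rev, Equiv.swap_inv]
  have htog := (Dcard_mul_swap σ⁻¹ hac).1 hdesc
  rw [hlen1, hlen, hDD, ← Dcard_inv σ]
  omega

lemma len_mul_diag (hb : 0 < b) {x d : GLn ℂ n} (hx : x ∈ WHbset ℂ n b)
    (hd : d ∈ Hbset ℂ n b) : len (x * d) = len x := by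
  rw [mem_WHb_iff hb] at hx
  obtain ⟨σ, f, hfb, hxv⟩ := hx
  rw [mem_Hb_iff hb] at hd
  obtain ⟨g, hgb, hdv⟩ := hd
  have hxd : ((x * d : GLn ℂ n) : Matrix (Fin n) (Fin n) ℂ)
      = MonoM n (σ * 1) fun j => f ((1 : Equiv.Perm (Fin n)) j) * g j := by
    rw [Units.val_mul, hxv, hdv, MonoM_mul]
  have h1 : len (x * d) = Dcard (σ * 1) :=
    len_WHb hb (fun j => by rw [mul_pow, hfb, hgb, one_mul]) hxd
  rw [h1, mul_one, len_WHb hb hfb hxv]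

lemma len_inv_eq (hb : 0 < b) {x : GLn ℂ n} (hx : x ∈ WHbset ℂ n b) :
    len x⁻¹ = len x := by
  rw [mem_WHb_iff hb] at hx
  obtain ⟨σ, f, hfb, hxv⟩ := hx
  have hf : ∀ j, f j ≠ 0 := fun j => ne_zero_of_pow_eq_one hb (hfb j)
  have h1 : len x⁻¹ = Dcard σ⁻¹ :=
    len_eq_Dcard (fun j => inv_ne_zero (hf _)) (inv_matrix hf hxv)
  rw [h1, Dcard_inv, len_WHb hb hfb hxv]

lemma len_zero_mem_Hb (hb : 0 < b) {x : GLn ℂ n} (hx : x ∈ WHbset ℂ n b)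
    (h0 : len x = 0) : x ∈ Hbset ℂ n b := by
  rw [mem_WHb_iff hb] at hx
  obtain ⟨σ, f, hfb, hxv⟩ := hx
  have hlen : len x = Dcard σ := len_WHb hb hfb hxv
  have hσ : σ = 1 := Dcard_eq_zero_iff.mp (by omega)
  rw [hσ] at hxv
  exact (mem_Hb_iff hb).mpr ⟨f, hfb, hxv⟩

lemma Xset_facts (hb : 0 < b) {s d : GLn ℂ n} (hd : d ∈ Xset ℂ n b s) :
    d ∈ Hbset ℂ n b ∧ ∃ d' ∈ Hbset ℂ n b, d * s = s * d' := by
  obtain ⟨k, l, α, hα, hkl, hsmat, hdmat⟩ := hd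
  set fd : Fin n → ℂ :=
    fun p => if p = k then α else if p = l then (-1 : ℂ) ^ (b - 1) * α⁻¹ else 1 with hfd
  have hfdb : ∀ p, fd p ^ b = 1 := by
    intro p
    by_cases h1 : p = k
    · simp [hfd, h1, hα]
    · by_cases h2 : p = l
      · subst h2
        simp only [hfd]
        rw [if_neg h1]
        simp only [if_true]
        rw [mul_pow, ← pow_mul, inv_pow, hα, inv_one, mul_one]
        apply Even.neg_one_pow
        have : b - 1 + 1 = b := Nat.succ_pred_eq_of_pos hb
        have h3 : Even ((b - 1) * (b - 1 + 1)) := Nat.even_mul_succ_self (b - 1)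
        rwa [this] at h3
      · simp [hfd, h1, h2]
  have hdv : (d : Matrix (Fin n) (Fin n) ℂ) = MonoM n 1 fd := by
    rw [hdmat, hmat, diagonal_eq_MonoM]
  have hdHb : d ∈ Hbset ℂ n b := (mem_Hb_iff hb).mpr ⟨fd, hfdb, hdv⟩
  refine ⟨hdHb, ?_⟩
  have hsv : (s : Matrix (Fin n) (Fin n) ℂ) = MonoM n (Equiv.swap k l) (fun _ => 1) := by
    ext i j; rw [hsmat i j, MonoM_apply]; simp [eq_comm]
  set g : Fin n → ℂ := fun j => fd (Equiv.swap k l j) with hg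
  have hgne : ∀ j, g j ≠ 0 := fun j => ne_zero_of_pow_eq_one hb (hfdb _)
  refine ⟨monoGL 1 g hgne, (mem_Hb_iff hb).mpr ⟨g, fun j => hfdb _, rfl⟩, ?_⟩
  apply Units.ext
  rw [Units.val_mul, Units.val_mul, hdv, hsv, monoGL_val, MonoM_mul, MonoM_mul]
  rw [one_mul, mul_one]
  exact MonoM_congr _ fun j => by simp [hg]

lemma Xset_finite (hb : 0 < b) (s : GLn ℂ n) : (Xset ℂ n b s).Finite := by
  have hroots : ({α : ℂ | α ^ b = 1}).Finite := by
    apply Set.Finite.subset (Polynomial.nthRoots b (1 : ℂ)).finite_toSet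
    intro α hα
    exact Multiset.mem_toFinset.mp (by
      rw [Multiset.mem_toFinset, Polynomial.mem_nthRoots hb]; exact hα)
  have himg : ((fun t : (Fin n × Fin n) × ℂ => hmat ℂ b t.1.1 t.1.2 t.2) ''
      (Set.univ ×ˢ {α : ℂ | α ^ b = 1})).Finite :=
    (Set.finite_univ.prod hroots).image _
  have hpre : (Units.val ⁻¹' ((fun t : (Fin n × Fin n) × ℂ =>
      hmat ℂ b t.1.1 t.1.2 t.2) '' (Set.univ ×ˢ {α : ℂ | α ^ b = 1})) :
      Set (GLn ℂ n)).Finite :=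
    himg.preimage (Set.injOn_of_injective (fun _ _ h => Units.ext h))
  apply hpre.subset
  rintro d ⟨k, l, α, hα, hkl, hsmat, hdmat⟩
  exact ⟨((k, l), α), ⟨Set.mem_univ _, hα⟩, hdmat.symm⟩

end TauProof
open TauProof in
open scoped Classical in
/-- Let `τ : 𝓗_v → A_v` be the `A_v`-linear map with `τ(T_x) = δ_{x,1}`.
Then `τ(T_x T_y) = δ_{x,y⁻¹}`; consequently `τ` is a symmetrizing trace form on `𝓗_v`
and `{ T_{y⁻¹} }` is the dual basis of `{ T_x }`. -/
theorem tau_symmetrizing_trace (n b : ℕ) (hn : 0 < n) (hb : 0 < b)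
    (Hv : Type) [Ring Hv] [Algebra Av Hv]
    (T : GLn ℂ n → Hv)
    (bv : Module.Basis ↥(WHbset ℂ n b) Av Hv)
    (hbv : ∀ x : ↥(WHbset ℂ n b), bv x = T ↑x)
    (hT1 : T 1 = 1)
    (hTd : ∀ d ∈ Hbset ℂ n b, ∀ x ∈ WHbset ℂ n b,
      T d * T x = T (d * x) ∧ T x * T d = T (x * d))
    (hTsL : ∀ s ∈ Sset ℂ n, ∀ x ∈ WHbset ℂ n b,
      (len x < len (s * x) → T s * T x = T (s * x)) ∧
      (len (s * x) < len x →
        T s * T x = T (s * x) + (aA * vI) • ∑ᶠ d ∈ Xset ℂ n b s, T (d * x)))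
    (hTsR : ∀ s ∈ Sset ℂ n, ∀ x ∈ WHbset ℂ n b,
      (len x < len (x * s) → T x * T s = T (x * s)) ∧
      (len (x * s) < len x →
        T x * T s = T (x * s) + (aA * vI) • ∑ᶠ d ∈ Xset ℂ n b s, T (x * d)))
    (τ : Hv →ₗ[Av] Av)
    (hτ : ∀ x ∈ WHbset ℂ n b, τ (T x) = if x = 1 then 1 else 0) :
    (∀ x ∈ WHbset ℂ n b, ∀ y ∈ WHbset ℂ n b,
      τ (T x * T y) = if x = y⁻¹ then 1 else 0) ∧
    (∀ h h' : Hv, τ (h * h') = τ (h' * h)) ∧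
    (∀ h : Hv, (∀ h' : Hv, τ (h * h') = 0) → h = 0) ∧
    (∀ h : Hv, (∀ h' : Hv, τ (h' * h) = 0) → h = 0) := by
  classical
  -- base case of the induction: `y` diagonal
  have base : ∀ y ∈ WHbset ℂ n b, len y = 0 → ∀ x ∈ WHbset ℂ n b,
      τ (T x * T y) = if x = y⁻¹ then 1 else 0 := by
    intro y hy h0 x hx
    have hyHb := len_zero_mem_Hb hb hy h0
    rw [(hTd y hyHb x hx).2, hτ _ (WHb_mul_mem hb hx hy)]
    exact if_congr mul_eq_one_iff_eq_inv rfl rfl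
  -- main induction on the length of `y`
  have key : ∀ N : ℕ, ∀ y ∈ WHbset ℂ n b, len y ≤ N → ∀ x ∈ WHbset ℂ n b,
      τ (T x * T y) = if x = y⁻¹ then 1 else 0 := by
    intro N
    induction N with
    | zero =>
      intro y hy hlen x hx
      exact base y hy (Nat.le_zero.mp hlen) x hx
    | succ N ih =>
      intro y hy hlen x hx
      by_cases h0 : len y = 0
      · exact base y hy h0 x hx
      obtain ⟨s, hs, hdesc⟩ := descent_exists hb hy h0
      have hss : s * s = 1 := S_mul_self hs
      have hsinv : s⁻¹ = s := inv_eq_of_mul_eq_one_right hss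
      have hsW : s ∈ WHbset ℂ n b := S_subset_WHb hb hs
      set y' := s * y with hy'def
      have hy'mem : y' ∈ WHbset ℂ n b := WHb_mul_mem hb hsW hy
      have hyy : y = s * y' := by rw [hy'def, ← mul_assoc, hss, one_mul]
      have hlen' : len y' < len y := hdesc
      have hTy : T s * T y' = T y := by
        have h1 := (hTsL s hs y' hy'mem).1
        rw [← hyy] at h1
        exact h1 hlen'
      have hleny' : len y' ≤ N := by omega
      have hxsW : x * s ∈ WHbset ℂ n b := WHb_mul_mem hb hx hsW
      have hcond : (x * s = y'⁻¹) ↔ (x = y⁻¹) := by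
        constructor
        · intro h
          rw [hyy, _root_.mul_inv_rev, hsinv, ← h, mul_assoc, hss, mul_one]
        · intro h
          rw [h, hyy, _root_.mul_inv_rev, hsinv, mul_assoc, hss, mul_one]
      rcases len_mul_S hb hx hs with hlt | hgt
      · -- length-decreasing case: quadratic relation
        have heq := (hTsR s hs x hx).2 hlt
        have hXfin : (Xset ℂ n b s).Finite := Xset_finite hb s
        rw [← hTy, ← mul_assoc, heq, add_mul, smul_mul_assoc]
        have hfs : (∑ᶠ d ∈ Xset ℂ n b s, T (x * d)) = ∑ d ∈ hXfin.toFinset, T (x * d) := by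
          have h9 := finsum_mem_coe_finset (s := hXfin.toFinset) (f := fun d => T (x * d))
          rw [hXfin.coe_toFinset] at h9
          exact h9
        rw [hfs, Finset.sum_mul, map_add, map_smul, map_sum]
        have hzero : ∀ d ∈ hXfin.toFinset, τ (T (x * d) * T y') = 0 := by
          intro d hdmem
          rw [Set.Finite.mem_toFinset] at hdmem
          obtain ⟨hdHb, d', hd'Hb, hds⟩ := Xset_facts hb hdmem
          have hxd : x * d ∈ WHbset ℂ n b := WHb_mul_mem hb hx (Hb_subset_WHb hb hdHb)
          rw [ih y' hy'mem hleny' (x * d) hxd, if_neg]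
          intro habs
          have h1 : len (x * d) = len x := len_mul_diag hb hx hdHb
          have h2 : len y'⁻¹ = len y' := len_inv_eq hb hy'mem
          have h3 : y⁻¹ = (x * s) * d' := by
            rw [hyy, _root_.mul_inv_rev, hsinv, ← habs, mul_assoc, hds, ← mul_assoc]
          have h4 : len (y⁻¹) = len (x * s) := by
            rw [h3]; exact len_mul_diag hb hxsW hd'Hb
          have h5 : len y⁻¹ = len y := len_inv_eq hb hy
          have h6 : len y'⁻¹ = len (x * d) := by rw [habs]
          omega
        rw [Finset.sum_eq_zero hzero, smul_zero, add_zero,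
          ih y' hy'mem hleny' (x * s) hxsW]
        exact if_congr hcond rfl rfl
      · -- length-increasing case
        have heq := (hTsR s hs x hx).1 hgt
        rw [← hTy, ← mul_assoc, heq, ih y' hy'mem hleny' (x * s) hxsW]
        exact if_congr hcond rfl rfl
  have part1 : ∀ x ∈ WHbset ℂ n b, ∀ y ∈ WHbset ℂ n b,
      τ (T x * T y) = if x = y⁻¹ then 1 else 0 :=
    fun x hx y hy => key (len y) y hy le_rfl x hx
  -- the bilinear form
  set B : Hv →ₗ[Av] Hv →ₗ[Av] Av := (LinearMap.mul Av Hv).compr₂ τ with hB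
  have hBapp : ∀ h h' : Hv, B h h' = τ (h * h') := fun h h' => rfl
  have hBsymm : B = B.flip := by
    apply bv.ext; intro x
    apply bv.ext; intro y
    rw [LinearMap.flip_apply, hBapp, hBapp, hbv, hbv]
    rw [part1 _ x.2 _ y.2, part1 _ y.2 _ x.2]
    refine if_congr ⟨fun h => by rw [h, inv_inv], fun h => by rw [h, inv_inv]⟩ rfl rfl
  have trace : ∀ h h' : Hv, τ (h * h') = τ (h' * h) := by
    intro h h'
    have := LinearMap.congr_fun (LinearMap.congr_fun hBsymm h) h'
    rw [LinearMap.flip_apply] at this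
    rw [← hBapp, ← hBapp, this]
  have nondegL : ∀ h : Hv, (∀ h' : Hv, τ (h * h') = 0) → h = 0 := by
    intro h hh
    have hrepr : ∀ y : ↥(WHbset ℂ n b), bv.repr h y = 0 := by
      intro y
      set yi : ↥(WHbset ℂ n b) := ⟨(↑y)⁻¹, WHb_inv_mem hb y.2⟩ with hyi
      have hcoord : B.flip (bv yi) = bv.coord y := by
        apply bv.ext; intro x
        rw [LinearMap.flip_apply, hBapp, Module.Basis.coord_apply, Module.Basis.repr_self,
          Finsupp.single_apply, hbv x, hbv yi, part1 _ x.2 _ yi.2]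
        refine if_congr ?_ rfl rfl
        have h1 : ((yi : GLn ℂ n))⁻¹ = (y : GLn ℂ n) := by rw [hyi, inv_inv]
        rw [h1]
        exact ⟨fun h2 => Subtype.ext h2, fun h2 => congrArg Subtype.val h2⟩
      have h2 := LinearMap.congr_fun hcoord h
      rw [LinearMap.flip_apply, hBapp, hh (bv yi), Module.Basis.coord_apply] at h2
      exact h2.symm
    have h3 : bv.repr h = 0 := Finsupp.ext hrepr
    exact (LinearEquiv.map_eq_zero_iff bv.repr).mp h3
  refine ⟨part1, trace, nondegL, ?_⟩
  intro h hh
  exact nondegL h fun h' => (trace h h').trans (hh h')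
end
end
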